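/- arXiv:2004.10145 — 5 statements merged into one kernel-verified Lean document; each statement's English description precedes it below -/
import Mathlib

section
/- Let T > 0, let m : ℝ → ℝ be continuous with m ≥ 0, let f : [0, T] × ℝ → ℝ be continuous with f(s, ·) ∈ L²(ℝ) for every s and s ↦ ‖f(s, ·)‖_{L²} continuous, and let u be a classical solution on [0, T] of the wave equation with potential m and source f. Then for every t ∈ [0, T]: √(E(t)) ≤ √(E(0)) + ∫₀ᵗ ‖f(s, ·)‖_{L²(ℝ)} ds, where E(t) := ∫_ℝ ((∂_t u(t,x))² + (∂_x u(t,x))² + m(x) u(t,x)²) dx. -/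
open MeasureTheory

/-- A classical solution on `[0,T]` of the wave equation with potential `m`
and source `f`: a `C²` function `u : ℝ × ℝ → ℝ` vanishing for `|x| ≥ R`
(for some `R > 0`) when `t ∈ [0,T]`, satisfying
`∂_t² u = ∂_x² u − m(x) u + f(t,x)` on `[0,T] × ℝ`. -/
def IsClassicalSolution (T : ℝ) (m : ℝ → ℝ) (f : ℝ → ℝ → ℝ) (u : ℝ → ℝ → ℝ) : Prop :=
  ContDiff ℝ 2 (fun p : ℝ × ℝ => u p.1 p.2) ∧
  (∃ R > (0 : ℝ), ∀ t ∈ Set.Icc (0 : ℝ) T, ∀ x : ℝ, R ≤ |x| → u t x = 0) ∧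
  ∀ t ∈ Set.Icc (0 : ℝ) T, ∀ x : ℝ,
    iteratedDeriv 2 (fun τ => u τ x) t =
      iteratedDeriv 2 (fun y => u t y) x - m x * u t x + f t x

lemma cs_integral {μ : Measure ℝ} {a b : ℝ → ℝ}
    (ha : Integrable (fun x => a x ^ 2) μ) (hb : Integrable (fun x => b x ^ 2) μ)
    (hab : Integrable (fun x => a x * b x) μ) :
    ∫ x, a x * b x ∂μ ≤ Real.sqrt (∫ x, a x ^ 2 ∂μ) * Real.sqrt (∫ x, b x ^ 2 ∂μ) := by
  set A := ∫ x, a x ^ 2 ∂μ with hA'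
  set B := ∫ x, b x ^ 2 ∂μ with hB'
  set C := ∫ x, a x * b x ∂μ with hC'
  have hA : 0 ≤ A := integral_nonneg fun x => sq_nonneg _
  have hB : 0 ≤ B := integral_nonneg fun x => sq_nonneg _
  have key : ∀ l : ℝ, 2 * l * C ≤ l ^ 2 * A + B := by
    intro l
    have h0 : 0 ≤ ∫ x, (l * a x - b x) ^ 2 ∂μ := integral_nonneg fun x => sq_nonneg _
    have hexp : ∫ x, (l * a x - b x) ^ 2 ∂μ = l ^ 2 * A - 2 * l * C + B := by
      have heq : (fun x => (l * a x - b x) ^ 2)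
          = fun x => (l ^ 2 * (a x ^ 2) - 2 * l * (a x * b x)) + b x ^ 2 := by
        funext x; ring
      have i1 : Integrable (fun x => l ^ 2 * (a x ^ 2) - 2 * l * (a x * b x)) μ :=
        (ha.const_mul _).sub (hab.const_mul _)
      rw [hA', hB', hC', heq, integral_add i1 hb,
        integral_sub (ha.const_mul _) (hab.const_mul _), integral_const_mul, integral_const_mul]
    rw [hexp] at h0
    linarith
  rcases eq_or_lt_of_le hA with hA0 | hApos
  · have hC : C ≤ 0 := by
      by_contra h
      push_neg at h
      have hk := key ((B + 1) / (2 * C))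
      rw [← hA0] at hk
      have : 2 * ((B + 1) / (2 * C)) * C = B + 1 := by field_simp
      rw [this] at hk
      nlinarith [sq_nonneg ((B + 1) / (2 * C))]
    calc C ≤ 0 := hC
      _ ≤ _ := mul_nonneg (Real.sqrt_nonneg _) (Real.sqrt_nonneg _)
  · have hkey := key (C / A)
    have hCsq : C ^ 2 ≤ A * B := by
      have h1 : 2 * (C / A) * C = 2 * C ^ 2 / A := by ring
      have h2 : (C / A) ^ 2 * A = C ^ 2 / A := by
        field_simp
      rw [h1, h2] at hkey
      have h3 : 2 * C ^ 2 / A = 2 * (C ^ 2 / A) := by ring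
      rw [h3] at hkey
      have := (div_le_iff₀ hApos).mp (by linarith : C ^ 2 / A ≤ B)
      linarith
    calc C ≤ |C| := le_abs_self _
      _ = Real.sqrt (C ^ 2) := (Real.sqrt_sq_eq_abs _).symm
      _ ≤ Real.sqrt (A * B) := Real.sqrt_le_sqrt hCsq
      _ = _ := Real.sqrt_mul hA _


/-- Inhomogeneous energy inequality: for a classical solution with
non-negative potential `m` and source `f`,
`√(E(t)) ≤ √(E(0)) + ∫₀ᵗ ‖f(s,·)‖_{L²} ds` on `[0,T]`, where
`E(t) = ∫ ((∂_t u)² + (∂_x u)² + m u²) dx`. -/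
theorem wave_inhomogeneous_energy_inequality
    (T : ℝ) (hT : 0 < T) (m : ℝ → ℝ) (hmc : Continuous m) (hm : ∀ x, 0 ≤ m x)
    (f : ℝ → ℝ → ℝ) (hfc : Continuous (fun p : ℝ × ℝ => f p.1 p.2))
    (hfL2 : ∀ s : ℝ, Integrable (fun x => (f s x) ^ 2))
    (hfnorm : Continuous (fun s : ℝ => Real.sqrt (∫ x : ℝ, (f s x) ^ 2)))
    (u : ℝ → ℝ → ℝ) (hu : IsClassicalSolution T m f u) :
    ∀ t ∈ Set.Icc (0 : ℝ) T,
      Real.sqrt (∫ x : ℝ, ((deriv (fun τ => u τ x) t) ^ 2 +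
          (deriv (fun y => u t y) x) ^ 2 + m x * (u t x) ^ 2)) ≤
        Real.sqrt (∫ x : ℝ, ((deriv (fun τ => u τ x) 0) ^ 2 +
          (deriv (fun y => u 0 y) x) ^ 2 + m x * (u 0 x) ^ 2)) +
        ∫ s in (0:ℝ)..t, Real.sqrt (∫ x : ℝ, (f s x) ^ 2) := by
  obtain ⟨hC2, ⟨R, hRpos, hsupp⟩, hpde⟩ := hu
  set U : ℝ × ℝ → ℝ := fun p => u p.1 p.2 with hU
  set F1 : ℝ × ℝ → ℝ := fun p => fderiv ℝ U p (1, 0) with hF1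
  set F2 : ℝ × ℝ → ℝ := fun p => fderiv ℝ U p (0, 1) with hF2
  have hUdiff : Differentiable ℝ U := hC2.differentiable (by norm_num)
  have hfd1 : ContDiff ℝ 1 (fderiv ℝ U) := hC2.fderiv_right (by norm_num)
  have hF1cd : ContDiff ℝ 1 F1 := hfd1.clm_apply contDiff_const
  have hF2cd : ContDiff ℝ 1 F2 := hfd1.clm_apply contDiff_const
  have hcurve_t : ∀ (t x : ℝ), HasDerivAt (fun τ : ℝ => ((τ, x) : ℝ × ℝ)) (1, 0) t :=
    fun t x => (hasDerivAt_id t).prodMk (hasDerivAt_const t x)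
  have hcurve_x : ∀ (t x : ℝ), HasDerivAt (fun y : ℝ => ((t, y) : ℝ × ℝ)) (0, 1) x :=
    fun t x => (hasDerivAt_const x t).prodMk (hasDerivAt_id x)
  have hut : ∀ t x : ℝ, HasDerivAt (fun τ => u τ x) (F1 (t, x)) t := fun t x =>
    by have := (hUdiff (t, x)).hasFDerivAt.comp_hasDerivAt t (hcurve_t t x); exact this
  have hux : ∀ t x : ℝ, HasDerivAt (fun y => u t y) (F2 (t, x)) x := fun t x =>
    (hUdiff (t, x)).hasFDerivAt.comp_hasDerivAt x (hcurve_x t x)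
  have hF1diff : Differentiable ℝ F1 := hF1cd.differentiable (by norm_num)
  have hF2diff : Differentiable ℝ F2 := hF2cd.differentiable (by norm_num)
  set G1 : ℝ × ℝ → ℝ := fun p => fderiv ℝ F1 p (1, 0) with hG1
  set G2 : ℝ × ℝ → ℝ := fun p => fderiv ℝ F1 p (0, 1) with hG2
  set G3 : ℝ × ℝ → ℝ := fun p => fderiv ℝ F2 p (1, 0) with hG3
  set G4 : ℝ × ℝ → ℝ := fun p => fderiv ℝ F2 p (0, 1) with hG4
  have hF1t : ∀ t x : ℝ, HasDerivAt (fun τ => F1 (τ, x)) (G1 (t, x)) t := fun t x =>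
    by have := (hF1diff (t, x)).hasFDerivAt.comp_hasDerivAt t (hcurve_t t x); exact this
  have hF1x : ∀ t x : ℝ, HasDerivAt (fun y => F1 (t, y)) (G2 (t, x)) x := fun t x =>
    (hF1diff (t, x)).hasFDerivAt.comp_hasDerivAt x (hcurve_x t x)
  have hF2t : ∀ t x : ℝ, HasDerivAt (fun τ => F2 (τ, x)) (G3 (t, x)) t := fun t x =>
    by have := (hF2diff (t, x)).hasFDerivAt.comp_hasDerivAt t (hcurve_t t x); exact this
  have hF2x : ∀ t x : ℝ, HasDerivAt (fun y => F2 (t, y)) (G4 (t, x)) x := fun t x =>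
    (hF2diff (t, x)).hasFDerivAt.comp_hasDerivAt x (hcurve_x t x)
  -- second fderiv expressions
  have hfd1d : Differentiable ℝ (fderiv ℝ U) := hfd1.differentiable (by norm_num)
  have hfderivF : ∀ (v : ℝ × ℝ) (p w : ℝ × ℝ),
      fderiv ℝ (fun q => fderiv ℝ U q v) p w = fderiv ℝ (fderiv ℝ U) p w v := by
    intro v p w
    have h := ((ContinuousLinearMap.apply ℝ ℝ v).hasFDerivAt).comp p (hfd1d p).hasFDerivAt
    have h' : HasFDerivAt (fun q => fderiv ℝ U q v)
        (((ContinuousLinearMap.apply ℝ ℝ) v).comp (fderiv ℝ (fderiv ℝ U) p)) p := h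
    rw [h'.fderiv]
    rfl
  have hsymm : ∀ p : ℝ × ℝ, G2 p = G3 p := by
    intro p
    have h := (hC2.contDiffAt (x := p)).isSymmSndFDerivAt (n := 2) (by simp)
    show fderiv ℝ F1 p (0, 1) = fderiv ℝ F2 p (1, 0)
    rw [hF1, hF2, hfderivF, hfderivF]
    exact h _ _
  -- iterated derivative link and PDE restated
  have hderiv_t : ∀ x : ℝ, deriv (fun τ => u τ x) = fun τ => F1 (τ, x) :=
    fun x => funext fun τ => (hut τ x).deriv
  have hderiv_x : ∀ t : ℝ, deriv (fun y => u t y) = fun y => F2 (t, y) :=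
    fun t => funext fun y => (hux t y).deriv
  have hpde' : ∀ t ∈ Set.Icc (0 : ℝ) T, ∀ x : ℝ,
      G1 (t, x) = G4 (t, x) - m x * u t x + f t x := by
    intro t ht x
    have h := hpde t ht x
    rw [show (2 : ℕ) = 1 + 1 from rfl, iteratedDeriv_succ, iteratedDeriv_one,
      iteratedDeriv_succ, iteratedDeriv_one, hderiv_t x, hderiv_x t,
      (hF1t t x).deriv, (hF2x t x).deriv] at h
    exact h
  -- support lemmas
  have habsR : R ≤ |R| := le_abs_self R
  have habsnegR : R ≤ |(-R)| := by rw [abs_neg]; exact le_abs_self R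
  have hzero_F1 : ∀ t ∈ Set.Icc (0 : ℝ) T, ∀ x : ℝ, R ≤ |x| → F1 (t, x) = 0 := by
    intro t ht x hx
    have h1 : derivWithin (fun τ => u τ x) (Set.Icc 0 T) t = F1 (t, x) :=
      (hut t x).hasDerivWithinAt.derivWithin (uniqueDiffOn_Icc hT t ht)
    rw [← h1, derivWithin_congr (fun τ hτ => hsupp τ hτ x hx) (hsupp t ht x hx)]
    exact congrFun (derivWithin_fun_const _ _) _
  have hzero_F2 : ∀ t ∈ Set.Icc (0 : ℝ) T, ∀ x : ℝ, R ≤ |x| → F2 (t, x) = 0 := by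
    intro t ht x hx
    rcases le_abs.mp hx with h | h
    · have h1 : derivWithin (fun y => u t y) (Set.Ici x) x = F2 (t, x) :=
        (hux t x).hasDerivWithinAt.derivWithin (uniqueDiffOn_Ici x x Set.self_mem_Ici)
      have hEq : Set.EqOn (fun y => u t y) (fun _ => (0 : ℝ)) (Set.Ici x) := fun y hy =>
        hsupp t ht y (le_abs.mpr (Or.inl (le_trans h hy)))
      rw [← h1, derivWithin_congr hEq (hsupp t ht x hx)]
      exact congrFun (derivWithin_fun_const _ _) _
    · have hxle : x ≤ -R := by linarith
      have h1 : derivWithin (fun y => u t y) (Set.Iic x) x = F2 (t, x) :=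
        (hux t x).hasDerivWithinAt.derivWithin (uniqueDiffOn_Iic x x Set.self_mem_Iic)
      have hEq : Set.EqOn (fun y => u t y) (fun _ => (0 : ℝ)) (Set.Iic x) := fun y hy => by
        have : R ≤ -y := by
          simp only [Set.mem_Iic] at hy; linarith
        exact hsupp t ht y (le_abs.mpr (Or.inr this))
      rw [← h1, derivWithin_congr hEq (hsupp t ht x hx)]
      exact congrFun (derivWithin_fun_const _ _) _
  -- continuity facts
  have hUc : Continuous U := hC2.continuous
  have hF1c : Continuous F1 := hF1cd.continuous
  have hF2c : Continuous F2 := hF2cd.continuous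
  have hG1c : Continuous G1 :=
    ((ContinuousLinearMap.apply ℝ ℝ ((1 : ℝ), (0 : ℝ))).continuous).comp
      (hF1cd.continuous_fderiv (by norm_num))
  have hG3c : Continuous G3 :=
    ((ContinuousLinearMap.apply ℝ ℝ ((1 : ℝ), (0 : ℝ))).continuous).comp
      (hF2cd.continuous_fderiv (by norm_num))
  have hG2c : Continuous G2 :=
    ((ContinuousLinearMap.apply ℝ ℝ ((0 : ℝ), (1 : ℝ))).continuous).comp
      (hF1cd.continuous_fderiv (by norm_num))
  have hG4c : Continuous G4 :=
    ((ContinuousLinearMap.apply ℝ ℝ ((0 : ℝ), (1 : ℝ))).continuous).comp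
      (hF2cd.continuous_fderiv (by norm_num))
  -- integrand and its t-derivative
  set I : ℝ × ℝ → ℝ := fun p => F1 p ^ 2 + F2 p ^ 2 + m p.2 * U p ^ 2 with hIdef
  set DtI : ℝ × ℝ → ℝ :=
    fun p => 2 * F1 p * G1 p + 2 * F2 p * G3 p + 2 * m p.2 * U p * F1 p with hDtIdef
  have hIc : Continuous I := by
    exact ((hF1c.pow 2).add (hF2c.pow 2)).add ((hmc.comp continuous_snd).mul (hUc.pow 2))
  have hDtIc : Continuous DtI := by
    exact (((continuous_const.mul hF1c).mul hG1c).add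
      ((continuous_const.mul hF2c).mul hG3c)).add
      (((continuous_const.mul (hmc.comp continuous_snd)).mul hUc).mul hF1c)
  have hIt : ∀ t x : ℝ, HasDerivAt (fun τ => I (τ, x)) (DtI (t, x)) t := by
    intro t x
    have h1 := ((hF1t t x).pow 2).add ((hF2t t x).pow 2)
    have h3 := ((hut t x).pow 2).const_mul (m x)
    have h := h1.add h3
    refine h.congr_deriv ?_
    simp only [hDtIdef]
    push_cast
    ring
  set S : Set ℝ := Set.Icc (-R) R with hSdef
  have hmS : MeasurableSet S := measurableSet_Icc
  set Ebar : ℝ → ℝ := fun t => ∫ x in S, I (t, x) with hEbar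
  set D : ℝ → ℝ := fun t => ∫ x in S, DtI (t, x) with hD
  have hIcx : ∀ t : ℝ, Continuous fun x => I (t, x) :=
    fun t => hIc.comp (Continuous.prodMk_right t)
  have hDtIcx : ∀ t : ℝ, Continuous fun x => DtI (t, x) :=
    fun t => hDtIc.comp (Continuous.prodMk_right t)
  have hEbar_nonneg : ∀ t : ℝ, 0 ≤ Ebar t := by
    intro t
    apply integral_nonneg
    intro x
    have := hm x
    simp only [hIdef]
    positivity
  -- derivative of Ebar
  have hEderiv : ∀ t0 : ℝ, HasDerivAt Ebar (D t0) t0 := by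
    intro t0
    have hKcomp : IsCompact (Set.Icc (t0 - 1) (t0 + 1) ×ˢ S) := isCompact_Icc.prod isCompact_Icc
    obtain ⟨C, hC⟩ := hKcomp.exists_bound_of_continuousOn hDtIc.continuousOn
    have hball : Metric.ball t0 1 ⊆ Set.Icc (t0 - 1) (t0 + 1) := by
      intro s hs
      rw [Real.ball_eq_Ioo] at hs
      exact ⟨hs.1.le, hs.2.le⟩
    have key := hasDerivAt_integral_of_dominated_loc_of_deriv_le
      (F := fun t x => I (t, x)) (F' := fun t x => DtI (t, x))
      (μ := volume.restrict S) (bound := fun _ => C) (x₀ := t0) (Metric.ball_mem_nhds t0 one_pos)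
      (Filter.Eventually.of_forall fun t => (hIcx t).aestronglyMeasurable)
      (((hIcx t0).continuousOn).integrableOn_compact isCompact_Icc)
      ((hDtIcx t0).aestronglyMeasurable)
      ?_ ?_ ?_
    · exact key.2
    · refine (ae_restrict_iff' hmS).2 (Filter.Eventually.of_forall fun x hx => ?_)
      intro s hs
      exact hC (s, x) ⟨hball hs, hx⟩
    · exact integrableOn_const measure_Icc_lt_top.ne
    · exact Filter.Eventually.of_forall fun x s _ => hIt s x
  -- identification of D on [0,T]
  set Q : ℝ × ℝ → ℝ := fun p => 2 * (G2 p * F2 p + F1 p * G4 p) with hQdef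
  have hQc : Continuous Q := by
    exact continuous_const.mul ((hG2c.mul hF2c).add (hF1c.mul hG4c))
  have hfcx : ∀ t : ℝ, Continuous fun x => f t x :=
    fun t => hfc.comp (Continuous.prodMk_right t)
  have hD_eq : ∀ t ∈ Set.Icc (0 : ℝ) T,
      D t = ∫ x in S, 2 * F1 (t, x) * f t x := by
    intro t ht
    have hpoint : ∀ x : ℝ, DtI (t, x) = Q (t, x) + 2 * F1 (t, x) * f t x := by
      intro x
      simp only [hDtIdef, hQdef]
      rw [hpde' t ht x, hsymm (t, x)]
      show 2 * F1 (t, x) * (G4 (t, x) - m x * u t x + f t x) + _ + 2 * m x * u t x * F1 (t, x) = _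
      ring
    have hQint : IntegrableOn (fun x => Q (t, x)) S volume :=
      ((hQc.comp (Continuous.prodMk_right t)).continuousOn).integrableOn_compact isCompact_Icc
    have hfint : IntegrableOn (fun x => 2 * F1 (t, x) * f t x) S volume :=
      ((((continuous_const.mul (hF1c.comp (Continuous.prodMk_right t))).mul
        (hfcx t))).continuousOn).integrableOn_compact isCompact_Icc
    have hsplit : D t = (∫ x in S, Q (t, x)) + ∫ x in S, 2 * F1 (t, x) * f t x := by
      rw [hD]
      simp only [hpoint]
      exact integral_add hQint hfint
    have hQzero : (∫ x in S, Q (t, x)) = 0 := by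
      have h1 : (∫ x in S, Q (t, x)) = ∫ x in (-R)..R, Q (t, x) := by
        rw [intervalIntegral.integral_of_le (by linarith), hSdef,
          integral_Icc_eq_integral_Ioc]
      have h2 : ∫ x in (-R)..R, Q (t, x)
          = 2 * (F1 (t, R) * F2 (t, R)) - 2 * (F1 (t, -R) * F2 (t, -R)) := by
        apply intervalIntegral.integral_eq_sub_of_hasDerivAt
        · intro y _
          exact ((hF1x t y).mul (hF2x t y)).const_mul 2
        · exact (hQc.comp (Continuous.prodMk_right t)).intervalIntegrable _ _
      rw [h1, h2, hzero_F1 t ht R habsR, hzero_F1 t ht (-R) habsnegR]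
      ring
    rw [hsplit, hQzero, zero_add]
  -- whole-line integral equals Ebar on [0,T]
  have hE_eq : ∀ t ∈ Set.Icc (0 : ℝ) T, (∫ x : ℝ, I (t, x)) = Ebar t := by
    intro t ht
    show (∫ x : ℝ, I (t, x)) = ∫ x in S, I (t, x)
    rw [← integral_indicator hmS]
    congr 1
    funext x
    by_cases hx : x ∈ S
    · rw [Set.indicator_of_mem hx]
    · rw [Set.indicator_of_notMem hx]
      have hxR : R ≤ |x| := by
        simp only [hSdef, Set.mem_Icc, not_and_or, not_le] at hx
        rcases hx with h | h
        · rw [abs_of_neg (by linarith)]; linarith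
        · rw [abs_of_pos (by linarith)]; linarith
      simp only [hIdef]
      show F1 (t, x) ^ 2 + F2 (t, x) ^ 2 + m x * u t x ^ 2 = 0
      rw [hzero_F1 t ht x hxR, hzero_F2 t ht x hxR, hsupp t ht x hxR]
      ring
  -- Gronwall-type estimate
  set g : ℝ → ℝ := fun s => Real.sqrt (∫ x : ℝ, f s x ^ 2) with hgdef
  have hgc : Continuous g := hfnorm
  have main : ∀ ε > (0:ℝ), ∀ t ∈ Set.Icc (0:ℝ) T,
      Real.sqrt (Ebar t + ε) ≤ Real.sqrt (Ebar 0 + ε) + ∫ s in (0:ℝ)..t, g s := by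
    intro ε hε t ht
    have hpos : ∀ s : ℝ, 0 < Ebar s + ε := fun s => by linarith [hEbar_nonneg s]
    have hφd : ∀ s : ℝ, HasDerivAt (fun r => Real.sqrt (Ebar r + ε))
        (D s / (2 * Real.sqrt (Ebar s + ε))) s := fun s =>
      ((hEderiv s).add_const ε).sqrt (ne_of_gt (hpos s))
    have hψd : ∀ s : ℝ, HasDerivAt (fun r => ∫ σ in (0:ℝ)..r, g σ) (g s) s := fun s =>
      (hgc.integral_hasStrictDerivAt 0 s).hasDerivAt
    set h : ℝ → ℝ := fun r => (∫ σ in (0:ℝ)..r, g σ) + Real.sqrt (Ebar 0 + ε)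
        - Real.sqrt (Ebar r + ε) with hhdef
    have hhd : ∀ s : ℝ, HasDerivAt h (g s - D s / (2 * Real.sqrt (Ebar s + ε))) s :=
      fun s => ((hψd s).add_const _).sub (hφd s)
    have hmono : MonotoneOn h (Set.Icc 0 T) := by
      apply monotoneOn_of_deriv_nonneg (convex_Icc 0 T)
      · exact fun s _ => ((hhd s).differentiableAt).continuousAt.continuousWithinAt
      · intro s _
        exact ((hhd s).differentiableAt).differentiableWithinAt
      · intro s hs
        rw [interior_Icc] at hs
        rw [(hhd s).deriv]
        have hsIcc : s ∈ Set.Icc (0:ℝ) T := Set.mem_Icc_of_Ioo hs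
        have hDle : D s ≤ 2 * Real.sqrt (Ebar s + ε) * g s := by
          rw [hD_eq s hsIcc]
          have hmul : ∀ x : ℝ, 2 * F1 (s, x) * f s x = 2 * (F1 (s, x) * f s x) :=
            fun x => by ring
          calc (∫ x in S, 2 * F1 (s, x) * f s x)
              = 2 * ∫ x in S, F1 (s, x) * f s x := by
                simp only [hmul]; exact integral_const_mul 2 _
            _ ≤ 2 * (Real.sqrt (∫ x in S, F1 (s, x) ^ 2) *
                  Real.sqrt (∫ x in S, f s x ^ 2)) := by
                apply mul_le_mul_of_nonneg_left _ (by norm_num)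
                apply cs_integral
                · exact (((hF1c.comp (Continuous.prodMk_right s)).pow 2).continuousOn).integrableOn_compact isCompact_Icc
                · exact (((hfcx s).pow 2).continuousOn).integrableOn_compact isCompact_Icc
                · exact (((hF1c.comp (Continuous.prodMk_right s)).mul (hfcx s)).continuousOn).integrableOn_compact isCompact_Icc
            _ ≤ 2 * (Real.sqrt (Ebar s + ε) * g s) := by
                apply mul_le_mul_of_nonneg_left _ (by norm_num)
                apply mul_le_mul
                · apply Real.sqrt_le_sqrt
                  have h1 : (∫ x in S, F1 (s, x) ^ 2) ≤ Ebar s := by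
                    apply integral_mono
                    · exact (((hF1c.comp (Continuous.prodMk_right s)).pow 2).continuousOn).integrableOn_compact isCompact_Icc
                    · exact (((hIcx s)).continuousOn).integrableOn_compact isCompact_Icc
                    · intro x
                      have := hm x
                      show F1 (s, x) ^ 2 ≤ F1 (s, x) ^ 2 + F2 (s, x) ^ 2 + m x * u s x ^ 2
                      nlinarith [sq_nonneg (F2 (s, x)), sq_nonneg (u s x)]
                  linarith
                · exact Real.sqrt_le_sqrt (setIntegral_le_integral (hfL2 s)
                    (Filter.Eventually.of_forall fun x => sq_nonneg _))
                · exact Real.sqrt_nonneg _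
                · exact Real.sqrt_nonneg _
            _ = 2 * Real.sqrt (Ebar s + ε) * g s := by ring
        have hsq : 0 < Real.sqrt (Ebar s + ε) := Real.sqrt_pos.2 (hpos s)
        rw [sub_nonneg, div_le_iff₀ (by linarith)]
        calc D s ≤ 2 * Real.sqrt (Ebar s + ε) * g s := hDle
          _ = g s * (2 * Real.sqrt (Ebar s + ε)) := by ring
    have h0t := hmono (Set.left_mem_Icc.2 hT.le) ht ht.1
    have h0 : h 0 = 0 := by simp [hhdef]
    rw [h0] at h0t
    simp only [hhdef] at h0t
    linarith
  -- final assembly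
  intro t ht
  have ht0 : (0:ℝ) ∈ Set.Icc (0:ℝ) T := ⟨le_rfl, hT.le⟩
  have hgoal1 : ∀ r ∈ Set.Icc (0:ℝ) T,
      (∫ x : ℝ, ((deriv (fun τ => u τ x) r) ^ 2 +
        (deriv (fun y => u r y) x) ^ 2 + m x * (u r x) ^ 2)) = Ebar r := by
    intro r hr
    have heq : (fun x : ℝ => (deriv (fun τ => u τ x) r) ^ 2 +
        (deriv (fun y => u r y) x) ^ 2 + m x * (u r x) ^ 2) = fun x => I (r, x) := by
      funext x
      rw [(hut r x).deriv, (hux r x).deriv]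
    rw [heq]
    exact hE_eq r hr
  rw [hgoal1 t ht, hgoal1 0 ht0]
  have hle : ∀ ε > (0:ℝ), Real.sqrt (Ebar t) ≤ Real.sqrt (Ebar 0 + ε) + ∫ s in (0:ℝ)..t, g s :=
    fun ε hε => le_trans (Real.sqrt_le_sqrt (by linarith)) (main ε hε t ht)
  have htend : Filter.Tendsto (fun ε : ℝ => Real.sqrt (Ebar 0 + ε) + ∫ s in (0:ℝ)..t, g s)
      (nhdsWithin 0 (Set.Ioi 0)) (nhds (Real.sqrt (Ebar 0) + ∫ s in (0:ℝ)..t, g s)) := by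
    have hcont : Continuous (fun ε : ℝ => Real.sqrt (Ebar 0 + ε) + ∫ s in (0:ℝ)..t, g s) :=
      (Real.continuous_sqrt.comp (continuous_const.add continuous_id)).add continuous_const
    have h2 := hcont.tendsto 0
    simp only [add_zero] at h2
    exact h2.mono_left nhdsWithin_le_nhds
  exact ge_of_tendsto htend (Filter.eventually_of_mem self_mem_nhdsWithin fun ε hε => hle ε hε)
end

section
/- Let T > 0 and let m, m̃ : ℝ → ℝ be continuous and bounded with m ≥ 0 and m̃ ≥ 0. Let u be a classical solution on [0, T] of the wave equation with potential m and source f = 0, let ũ be a classical solution on [0, T] of the wave equation with potential m̃ and source f = 0, and suppose u(0, x) = ũ(0, x) and ∂_t u(0, x) = ∂_t ũ(0, x) for all x ∈ ℝ. Then for every t ∈ [0, T]: ‖u(t, ·) − ũ(t, ·)‖_{L²(ℝ)} ≤ T² · sup_{x ∈ ℝ} |m(x) − m̃(x)| · sup_{s ∈ [0, T]} ‖ũ(s, ·)‖_{L²(ℝ)}. -/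
open MeasureTheory

namespace WaveAux

open MeasureTheory Set Filter Real


noncomputable def p1 (F : ℝ × ℝ → ℝ) : ℝ × ℝ → ℝ := fun p => fderiv ℝ F p (1, 0)
noncomputable def p2 (F : ℝ × ℝ → ℝ) : ℝ × ℝ → ℝ := fun p => fderiv ℝ F p (0, 1)

lemma hasDerivAt_slice1 {F : ℝ × ℝ → ℝ} (hF : Differentiable ℝ F) (t x : ℝ) :
    HasDerivAt (fun τ => F (τ, x)) (p1 F (t, x)) t := by
  have h2 : HasDerivAt (fun τ : ℝ => (τ, x)) ((1 : ℝ), (0 : ℝ)) t :=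
    (hasDerivAt_id t).prodMk (hasDerivAt_const t x)
  exact (hF (t, x)).hasFDerivAt.comp_hasDerivAt t h2

lemma hasDerivAt_slice2 {F : ℝ × ℝ → ℝ} (hF : Differentiable ℝ F) (t x : ℝ) :
    HasDerivAt (fun y => F (t, y)) (p2 F (t, x)) x := by
  have h2 : HasDerivAt (fun y : ℝ => (t, y)) ((0 : ℝ), (1 : ℝ)) x :=
    (hasDerivAt_const x t).prodMk (hasDerivAt_id x)
  exact (hF (t, x)).hasFDerivAt.comp_hasDerivAt x h2

lemma contDiff_one_p1 {F : ℝ × ℝ → ℝ} (hF : ContDiff ℝ 2 F) : ContDiff ℝ 1 (p1 F) :=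
  (hF.fderiv_right (m := 1) (by norm_num)).clm_apply contDiff_const

lemma contDiff_one_p2 {F : ℝ × ℝ → ℝ} (hF : ContDiff ℝ 2 F) : ContDiff ℝ 1 (p2 F) :=
  (hF.fderiv_right (m := 1) (by norm_num)).clm_apply contDiff_const

lemma continuous_p1 {F : ℝ × ℝ → ℝ} (hF : ContDiff ℝ 1 F) : Continuous (p1 F) :=
  ((hF.fderiv_right (m := 0) (by norm_num)).clm_apply contDiff_const).continuous

lemma continuous_p2 {F : ℝ × ℝ → ℝ} (hF : ContDiff ℝ 1 F) : Continuous (p2 F) :=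
  ((hF.fderiv_right (m := 0) (by norm_num)).clm_apply contDiff_const).continuous

lemma hasFDerivAt_pd {F : ℝ × ℝ → ℝ} (hF : ContDiff ℝ 2 F) (v : ℝ × ℝ) (p : ℝ × ℝ) :
    HasFDerivAt (fun q => fderiv ℝ F q v)
      ((ContinuousLinearMap.apply ℝ ℝ v).comp (fderiv ℝ (fderiv ℝ F) p)) p := by
  have h1 : ContDiff ℝ 1 (fderiv ℝ F) := hF.fderiv_right (by norm_num)
  have h2 : HasFDerivAt (fderiv ℝ F) (fderiv ℝ (fderiv ℝ F) p) p :=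
    (h1.differentiable one_ne_zero p).hasFDerivAt
  exact (ContinuousLinearMap.apply ℝ ℝ v).hasFDerivAt.comp p h2

lemma symm2 {F : ℝ × ℝ → ℝ} (hF : ContDiff ℝ 2 F) (p : ℝ × ℝ) :
    p2 (p1 F) p = p1 (p2 F) p := by
  have hs : IsSymmSndFDerivAt ℝ F p := hF.contDiffAt.isSymmSndFDerivAt (by simp)
  have e1 : p2 (p1 F) p = fderiv ℝ (fderiv ℝ F) p (0, 1) (1, 0) := by
    have h := (hasFDerivAt_pd hF (1, 0) p).fderiv
    show (fderiv ℝ (fun q => fderiv ℝ F q (1, 0)) p) (0, 1) = _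
    rw [h]; rfl
  have e2 : p1 (p2 F) p = fderiv ℝ (fderiv ℝ F) p (1, 0) (0, 1) := by
    have h := (hasFDerivAt_pd hF (0, 1) p).fderiv
    show (fderiv ℝ (fun q => fderiv ℝ F q (0, 1)) p) (1, 0) = _
    rw [h]; rfl
  rw [e1, e2, hs.eq]

lemma iteratedDeriv2_slice1 {F : ℝ × ℝ → ℝ} (hF : ContDiff ℝ 2 F) (t x : ℝ) :
    iteratedDeriv 2 (fun τ => F (τ, x)) t = p1 (p1 F) (t, x) := by
  have hd : Differentiable ℝ F := hF.differentiable (by norm_num)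
  have h1 : deriv (fun τ => F (τ, x)) = fun τ => p1 F (τ, x) :=
    funext fun τ => (hasDerivAt_slice1 hd τ x).deriv
  have hd1 : Differentiable ℝ (p1 F) := (contDiff_one_p1 hF).differentiable one_ne_zero
  rw [show (2 : ℕ) = 1 + 1 from rfl, iteratedDeriv_succ, iteratedDeriv_one, h1]
  exact (hasDerivAt_slice1 hd1 t x).deriv

lemma iteratedDeriv2_slice2 {F : ℝ × ℝ → ℝ} (hF : ContDiff ℝ 2 F) (t x : ℝ) :
    iteratedDeriv 2 (fun y => F (t, y)) x = p2 (p2 F) (t, x) := by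
  have hd : Differentiable ℝ F := hF.differentiable (by norm_num)
  have h1 : deriv (fun y => F (t, y)) = fun y => p2 F (t, y) :=
    funext fun y => (hasDerivAt_slice2 hd t y).deriv
  have hd1 : Differentiable ℝ (p2 F) := (contDiff_one_p2 hF).differentiable one_ne_zero
  rw [show (2 : ℕ) = 1 + 1 from rfl, iteratedDeriv_succ, iteratedDeriv_one, h1]
  exact (hasDerivAt_slice2 hd1 t x).deriv

lemma deriv_eq_zero_on {f : ℝ → ℝ} {a b t : ℝ} (hd : DifferentiableAt ℝ f t)
    (h : ∀ s ∈ Icc a b, f s = 0) (ht : t ∈ Icc a b) (hab : a < b) : deriv f t = 0 := by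
  have h1 : HasDerivWithinAt f (deriv f t) (Icc a b) t := hd.hasDerivAt.hasDerivWithinAt
  have h2 : HasDerivWithinAt f 0 (Icc a b) t :=
    (hasDerivWithinAt_const t (Icc a b) (0 : ℝ)).congr (fun s hs => h s hs) (h t ht)
  have hu := uniqueDiffOn_Icc hab t ht
  rw [← h1.derivWithin hu, h2.derivWithin hu]

lemma integral_deriv_zero {f : ℝ → ℝ} (hf : ContDiff ℝ 1 f) (hsupp : HasCompactSupport f) :
    ∫ x : ℝ, deriv f x = 0 := by
  have hint : Integrable (deriv f) := (hf.continuous_deriv le_rfl).integrable_of_hasCompactSupport hsupp.deriv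
  rw [← intervalIntegral.integral_Iic_add_Ioi hint.integrableOn hint.integrableOn,
    hsupp.integral_Iic_deriv_eq hf 0, hsupp.integral_Ioi_deriv_eq hf 0]
  ring

lemma support_of_vanish {f : ℝ → ℝ} {R : ℝ} (h : ∀ x, R ≤ |x| → f x = 0) :
    HasCompactSupport f := by
  apply HasCompactSupport.intro (isCompact_Icc (a := -R) (b := R))
  intro x hx
  apply h
  simp only [Set.mem_Icc, not_and_or, not_le] at hx
  rcases hx with h' | h'
  · calc R ≤ -x := by linarith
    _ ≤ |x| := neg_le_abs x
  · exact h'.le.trans (le_abs_self x)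

lemma integrable_of_vanish {f : ℝ → ℝ} (hc : Continuous f) {R : ℝ}
    (h : ∀ x, R ≤ |x| → f x = 0) : Integrable f :=
  hc.integrable_of_hasCompactSupport (support_of_vanish h)

lemma cauchy_schwarz {f g : ℝ → ℝ} (hfc : Continuous f) (hgc : Continuous g)
    (hfs : HasCompactSupport f) (hgs : HasCompactSupport g) :
    ∫ x : ℝ, f x * g x ≤ Real.sqrt (∫ x : ℝ, f x ^ 2) * Real.sqrt (∫ x : ℝ, g x ^ 2) := by
  have h2 : (2 : ℝ).HolderConjugate 2 := by rw [Real.holderConjugate_iff]; norm_num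
  have hf2 : MemLp (fun x => |f x|) (ENNReal.ofReal 2) (volume : Measure ℝ) := by
    simpa using (hfc.abs.memLp_of_hasCompactSupport (p := 2) hfs.abs)
  have hg2 : MemLp (fun x => |g x|) (ENNReal.ofReal 2) (volume : Measure ℝ) := by
    simpa using (hgc.abs.memLp_of_hasCompactSupport (p := 2) hgs.abs)
  have key := integral_mul_le_Lp_mul_Lq_of_nonneg h2
    (Eventually.of_forall fun x => abs_nonneg (f x))
    (Eventually.of_forall fun x => abs_nonneg (g x)) hf2 hg2
  have e1 : ∀ h : ℝ → ℝ, (∫ x : ℝ, |h x| ^ (2:ℝ)) = ∫ x : ℝ, h x ^ 2 := by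
    intro h
    refine integral_congr_ae (Eventually.of_forall fun x => ?_)
    show |h x| ^ (2:ℝ) = h x ^ 2
    rw [show ((2:ℝ) = ((2:ℕ):ℝ)) by norm_num, Real.rpow_natCast, sq_abs]
  rw [e1, e1] at key
  have hfg : ∫ x : ℝ, f x * g x ≤ ∫ x : ℝ, |f x| * |g x| := by
    refine integral_mono ?_ ?_ fun x => ?_
    · exact (hfc.mul hgc).integrable_of_hasCompactSupport (hfs.mul_right)
    · exact (hfc.abs.mul hgc.abs).integrable_of_hasCompactSupport (hfs.abs.mul_right)
    · rw [← abs_mul]; exact le_abs_self _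
  refine hfg.trans (key.trans_eq ?_)
  rw [Real.sqrt_eq_rpow, Real.sqrt_eq_rpow]


lemma ball_subset_Ioo {T t₀ : ℝ} (ht₀ : t₀ ∈ Ioo 0 T) :
    Metric.ball t₀ (min t₀ (T - t₀)) ⊆ Ioo 0 T := by
  intro t ht
  rw [Metric.mem_ball, Real.dist_eq] at ht
  have h1 := abs_lt.1 ht
  have ha : -(min t₀ (T - t₀)) < t - t₀ := h1.1
  have hb : t - t₀ < min t₀ (T - t₀) := h1.2
  have hm1 : min t₀ (T - t₀) ≤ t₀ := min_le_left _ _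
  have hm2 : min t₀ (T - t₀) ≤ T - t₀ := min_le_right _ _
  constructor <;> nlinarith

/-- Differentiation under the integral sign for families supported in `[-R,R]`. -/
lemma hasDerivAt_integral_support
    {F F' : ℝ → ℝ → ℝ} {T R : ℝ} (hT : 0 < T) (hR : 0 < R) {t₀ : ℝ} (ht₀ : t₀ ∈ Ioo 0 T)
    (hFc : Continuous (fun p : ℝ × ℝ => F p.1 p.2))
    (hF'c : Continuous (fun p : ℝ × ℝ => F' p.1 p.2))
    (hsupp : ∀ t ∈ Icc (0:ℝ) T, ∀ x : ℝ, R ≤ |x| → F t x = 0)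
    (hsupp' : ∀ t ∈ Icc (0:ℝ) T, ∀ x : ℝ, R ≤ |x| → F' t x = 0)
    (hdiff : ∀ x : ℝ, ∀ t ∈ Ioo (0:ℝ) T, HasDerivAt (fun τ => F τ x) (F' t x) t) :
    HasDerivAt (fun t => ∫ x : ℝ, F t x) (∫ x : ℝ, F' t₀ x) t₀ := by
  set ε := min t₀ (T - t₀) with hε
  have hεpos : 0 < ε := lt_min ht₀.1 (by linarith [ht₀.2])
  have hball : Metric.ball t₀ ε ⊆ Ioo 0 T := ball_subset_Ioo ht₀
  have hballIcc : Metric.ball t₀ ε ⊆ Icc 0 T := hball.trans Ioo_subset_Icc_self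
  -- bound for F' on the compact set
  obtain ⟨C, hC⟩ := (isCompact_Icc.prod isCompact_Icc :
      IsCompact (Icc (0:ℝ) T ×ˢ Icc (-R) R)).exists_bound_of_continuousOn hF'c.continuousOn
  have hC0 : 0 ≤ C := le_trans (norm_nonneg _) (hC (0, 0) (by constructor <;> constructor <;> simp [hT.le, hR.le]))
  set bound : ℝ → ℝ := (Icc (-R) R).indicator (fun _ => C) with hbound
  have hmemIcc : ∀ {x : ℝ}, x ∉ Icc (-R) R → R ≤ |x| := by
    intro x hx
    simp only [Set.mem_Icc, not_and_or, not_le] at hx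
    rcases hx with h' | h'
    · calc R ≤ -x := by linarith
      _ ≤ |x| := neg_le_abs x
    · exact h'.le.trans (le_abs_self x)
  have key := hasDerivAt_integral_of_dominated_loc_of_deriv_le (μ := volume)
    (F := F) (F' := F') (x₀ := t₀) (bound := bound) (Metric.ball_mem_nhds t₀ hεpos)
    (Eventually.of_forall fun t => ((hFc.comp (Continuous.prodMk_right t)).aestronglyMeasurable))
    ?_ ((hF'c.comp (Continuous.prodMk_right t₀)).aestronglyMeasurable) ?_ ?_ ?_
  · exact key.2
  · -- integrability of F t₀
    apply (hFc.comp (Continuous.prodMk_right t₀)).integrable_of_hasCompactSupport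
    apply HasCompactSupport.intro (isCompact_Icc (a := -R) (b := R))
    exact fun x hx => hsupp t₀ (Ioo_subset_Icc_self ht₀) x (hmemIcc hx)
  · -- bound
    refine Eventually.of_forall fun x => fun t ht => ?_
    by_cases hx : x ∈ Icc (-R) R
    · rw [hbound, Set.indicator_of_mem hx]
      exact hC (t, x) ⟨hballIcc ht, hx⟩
    · rw [hbound, Set.indicator_of_notMem hx]
      rw [hsupp' t (hballIcc ht) x (hmemIcc hx)]
      simp
  · -- bound integrable
    rw [hbound, integrable_indicator_iff measurableSet_Icc]
    exact integrableOn_const (by rw [Real.volume_Icc]; exact ENNReal.ofReal_ne_top)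
  · exact Eventually.of_forall fun x => fun t ht => hdiff x t (hball ht)

/-- Continuity on `[0,T]` of the integral of a supported family. -/
lemma continuousOn_integral_support
    {F : ℝ → ℝ → ℝ} {T R : ℝ} (hT : 0 < T) (hR : 0 < R)
    (hFc : Continuous (fun p : ℝ × ℝ => F p.1 p.2))
    (hsupp : ∀ t ∈ Icc (0:ℝ) T, ∀ x : ℝ, R ≤ |x| → F t x = 0) :
    ContinuousOn (fun t => ∫ x : ℝ, F t x) (Icc 0 T) := by
  intro t₀ ht₀
  obtain ⟨C, hC⟩ := (isCompact_Icc.prod isCompact_Icc :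
      IsCompact (Icc (0:ℝ) T ×ˢ Icc (-R) R)).exists_bound_of_continuousOn hFc.continuousOn
  have hmemIcc : ∀ {x : ℝ}, x ∉ Icc (-R) R → R ≤ |x| := by
    intro x hx
    simp only [Set.mem_Icc, not_and_or, not_le] at hx
    rcases hx with h' | h'
    · calc R ≤ -x := by linarith
      _ ≤ |x| := neg_le_abs x
    · exact h'.le.trans (le_abs_self x)
  apply continuousWithinAt_of_dominated
    (bound := (Icc (-R) R).indicator (fun _ => C))
  · exact Eventually.of_forall fun t => (hFc.comp (Continuous.prodMk_right t)).aestronglyMeasurable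
  · refine eventually_nhdsWithin_of_forall fun t ht => Eventually.of_forall fun x => ?_
    by_cases hx : x ∈ Icc (-R) R
    · rw [Set.indicator_of_mem hx]
      exact hC (t, x) ⟨ht, hx⟩
    · rw [Set.indicator_of_notMem hx, hsupp t ht x (hmemIcc hx)]
      simp
  · rw [integrable_indicator_iff measurableSet_Icc]
    exact integrableOn_const (by rw [Real.volume_Icc]; exact ENNReal.ofReal_ne_top)
  · exact Eventually.of_forall fun x =>
      ((hFc.comp (continuous_id.prodMk continuous_const)).continuousAt).continuousWithinAt

lemma integral_sq_le {f : ℝ → ℝ} (hc : Continuous f) {R C : ℝ} (hR : 0 < R) (hC : 0 ≤ C)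
    (hb : ∀ x, |x| ≤ R → |f x| ≤ C) (h0 : ∀ x, R ≤ |x| → f x = 0) :
    ∫ x : ℝ, f x ^ 2 ≤ C ^ 2 * (2 * R) := by
  have hint : Integrable (fun x => f x ^ 2) := by
    apply (hc.pow 2).integrable_of_hasCompactSupport
    apply HasCompactSupport.intro (isCompact_Icc (a := -R) (b := R))
    intro x hx
    simp only [Set.mem_Icc, not_and_or, not_le] at hx
    have : R ≤ |x| := by
      rcases hx with h' | h'
      · calc R ≤ -x := by linarith
        _ ≤ |x| := neg_le_abs x
      · exact h'.le.trans (le_abs_self x)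
    simp [h0 x this]
  have hind : Integrable ((Icc (-R) R).indicator (fun _ => C ^ 2)) := by
    rw [integrable_indicator_iff measurableSet_Icc]
    exact integrableOn_const (by rw [Real.volume_Icc]; exact ENNReal.ofReal_ne_top)
  have hmono : ∀ x, f x ^ 2 ≤ (Icc (-R) R).indicator (fun _ => C ^ 2) x := by
    intro x
    by_cases hx : x ∈ Icc (-R) R
    · rw [Set.indicator_of_mem hx]
      have := hb x (abs_le.2 ⟨hx.1, hx.2⟩)
      nlinarith [abs_nonneg (f x), neg_abs_le (f x), le_abs_self (f x)]
    · rw [Set.indicator_of_notMem hx]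
      simp only [Set.mem_Icc, not_and_or, not_le] at hx
      have : R ≤ |x| := by
        rcases hx with h' | h'
        · calc R ≤ -x := by linarith
          _ ≤ |x| := neg_le_abs x
        · exact h'.le.trans (le_abs_self x)
      simp [h0 x this]
  calc ∫ x : ℝ, f x ^ 2 ≤ ∫ x : ℝ, (Icc (-R) R).indicator (fun _ => C ^ 2) x :=
        integral_mono hint hind hmono
  _ = C ^ 2 * (2 * R) := by
        rw [integral_indicator measurableSet_Icc, setIntegral_const, measureReal_def, Real.volume_Icc]
        rw [smul_eq_mul, ENNReal.toReal_ofReal (by linarith)]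
        ring

lemma le_of_forall_sqrt_eps {A B : ℝ} (h : ∀ ε > (0:ℝ), A ≤ B + Real.sqrt ε) : A ≤ B := by
  have htend : Tendsto (fun ε : ℝ => B + Real.sqrt ε) (nhdsWithin 0 (Ioi 0)) (nhds (B + 0)) := by
    apply Tendsto.add tendsto_const_nhds
    have := (Real.continuous_sqrt.tendsto 0).mono_left (nhdsWithin_le_nhds (s := Ioi (0:ℝ)))
    simpa using this
  have hev : ∀ᶠ ε in nhdsWithin (0:ℝ) (Ioi 0), A ≤ B + Real.sqrt ε :=
    eventually_nhdsWithin_of_forall fun ε hε => h ε hε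
  simpa using ge_of_tendsto htend hev


lemma p1_eq_zero_on {F : ℝ × ℝ → ℝ} (hF : Differentiable ℝ F) {T : ℝ} (hT : 0 < T)
    {t x : ℝ} (ht : t ∈ Icc (0:ℝ) T) (hvanish : ∀ s ∈ Icc (0:ℝ) T, F (s, x) = 0) :
    p1 F (t, x) = 0 := by
  have hD := hasDerivAt_slice1 hF t x
  rw [← hD.deriv]
  exact deriv_eq_zero_on hD.differentiableAt hvanish ht hT

lemma p2_eq_zero {F : ℝ × ℝ → ℝ} (hF : Differentiable ℝ F) {Rc t x : ℝ} (hR : 0 < Rc)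
    (hx : Rc ≤ |x|) (hvanish : ∀ y : ℝ, Rc ≤ |y| → F (t, y) = 0) : p2 F (t, x) = 0 := by
  have hD := hasDerivAt_slice2 hF t x
  rw [← hD.deriv]
  rcases le_abs.1 hx with hc | hc
  · refine deriv_eq_zero_on hD.differentiableAt (a := x) (b := x + 1) ?_ ?_ (by linarith)
    · intro s hs
      exact hvanish s (le_abs.2 (Or.inl (by linarith [hs.1])))
    · exact ⟨le_refl x, by linarith⟩
  · refine deriv_eq_zero_on hD.differentiableAt (a := x - 1) (b := x) ?_ ?_ (by linarith)
    · intro s hs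
      exact hvanish s (le_abs.2 (Or.inr (by linarith [hs.2])))
    · exact ⟨by linarith, le_refl x⟩


end WaveAux

open WaveAux Set Filter Real

set_option maxHeartbeats 1000000 in
/-- Stability of classical solutions with respect to the potential: if `u`,
`ũ` are classical solutions with bounded non-negative potentials `m`, `m̃`,
zero source and the same Cauchy data, then on `[0,T]`:
`‖u(t,·) − ũ(t,·)‖_{L²} ≤ T² · sup_x |m(x) − m̃(x)| · sup_{s∈[0,T]} ‖ũ(s,·)‖_{L²}`. -/
theorem wave_stability_in_potential
    (T : ℝ) (hT : 0 < T) (m m' : ℝ → ℝ)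
    (hmc : Continuous m) (hm'c : Continuous m')
    (hmb : ∃ M, ∀ x, |m x| ≤ M) (hm'b : ∃ M, ∀ x, |m' x| ≤ M)
    (hm : ∀ x, 0 ≤ m x) (hm' : ∀ x, 0 ≤ m' x)
    (u v : ℝ → ℝ → ℝ)
    (hu : IsClassicalSolution T m (fun _ _ => 0) u)
    (hv : IsClassicalSolution T m' (fun _ _ => 0) v)
    (h0 : ∀ x : ℝ, u 0 x = v 0 x)
    (h1 : ∀ x : ℝ, deriv (fun τ => u τ x) 0 = deriv (fun τ => v τ x) 0) :
    ∀ t ∈ Set.Icc (0 : ℝ) T,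
      Real.sqrt (∫ x : ℝ, (u t x - v t x) ^ 2) ≤
        T ^ 2 * (⨆ x : ℝ, |m x - m' x|) *
          ⨆ s : Set.Icc (0 : ℝ) T, Real.sqrt (∫ x : ℝ, (v (s : ℝ) x) ^ 2) := by
  classical
  open WaveAux Set Filter MeasureTheory Real in
  obtain ⟨hu2, ⟨Ru, hRu, huS⟩, huE⟩ := hu
  obtain ⟨hv2, ⟨Rv, hRv, hvS⟩, hvE⟩ := hv
  obtain ⟨Mm, hMm⟩ := hmb
  obtain ⟨Mm', hMm'⟩ := hm'b
  set U : ℝ × ℝ → ℝ := fun p => u p.1 p.2 with hUdef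
  set V : ℝ × ℝ → ℝ := fun p => v p.1 p.2 with hVdef
  set D := ⨆ x : ℝ, |m x - m' x| with hDdef
  set S := ⨆ s : Set.Icc (0 : ℝ) T, Real.sqrt (∫ x : ℝ, (v (s : ℝ) x) ^ 2) with hSdef
  set G := D * S with hGdef
  -- basic differentiability
  have hUd : Differentiable ℝ U := hu2.differentiable (by norm_num)
  have hVd : Differentiable ℝ V := hv2.differentiable (by norm_num)
  have hU1 : Differentiable ℝ (p1 U) := (contDiff_one_p1 hu2).differentiable one_ne_zero
  have hV1 : Differentiable ℝ (p1 V) := (contDiff_one_p1 hv2).differentiable one_ne_zero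
  have hU2 : Differentiable ℝ (p2 U) := (contDiff_one_p2 hu2).differentiable one_ne_zero
  have hV2 : Differentiable ℝ (p2 V) := (contDiff_one_p2 hv2).differentiable one_ne_zero
  -- the difference and its partial derivatives
  set w : ℝ → ℝ → ℝ := fun t x => u t x - v t x with hwdef
  set wt : ℝ → ℝ → ℝ := fun t x => p1 U (t, x) - p1 V (t, x) with hwtdef
  set wx : ℝ → ℝ → ℝ := fun t x => p2 U (t, x) - p2 V (t, x) with hwxdef
  set wtt : ℝ → ℝ → ℝ := fun t x => p1 (p1 U) (t, x) - p1 (p1 V) (t, x) with hwttdef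
  set wxt : ℝ → ℝ → ℝ := fun t x => p1 (p2 U) (t, x) - p1 (p2 V) (t, x) with hwxtdef
  set wxx : ℝ → ℝ → ℝ := fun t x => p2 (p2 U) (t, x) - p2 (p2 V) (t, x) with hwxxdef
  set g : ℝ → ℝ → ℝ := fun t x => (m' x - m x) * v t x with hgdef
  -- slice derivatives
  have hw_t : ∀ t x : ℝ, HasDerivAt (fun τ => w τ x) (wt t x) t := fun t x =>
    (hasDerivAt_slice1 hUd t x).sub (hasDerivAt_slice1 hVd t x)
  have hw_x : ∀ t x : ℝ, HasDerivAt (fun y => w t y) (wx t x) x := fun t x =>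
    (hasDerivAt_slice2 hUd t x).sub (hasDerivAt_slice2 hVd t x)
  have hwt_t : ∀ t x : ℝ, HasDerivAt (fun τ => wt τ x) (wtt t x) t := fun t x =>
    (hasDerivAt_slice1 hU1 t x).sub (hasDerivAt_slice1 hV1 t x)
  have hwt_x : ∀ t x : ℝ, HasDerivAt (fun y => wt t y) (wxt t x) x := by
    intro t x
    have h := (hasDerivAt_slice2 hU1 t x).sub (hasDerivAt_slice2 hV1 t x)
    rwa [symm2 hu2 (t, x), symm2 hv2 (t, x)] at h
  have hwx_t : ∀ t x : ℝ, HasDerivAt (fun τ => wx τ x) (wxt t x) t := fun t x =>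
    (hasDerivAt_slice1 hU2 t x).sub (hasDerivAt_slice1 hV2 t x)
  have hwx_x : ∀ t x : ℝ, HasDerivAt (fun y => wx t y) (wxx t x) x := fun t x =>
    (hasDerivAt_slice2 hU2 t x).sub (hasDerivAt_slice2 hV2 t x)
  -- joint continuity
  have hwc : Continuous (fun p : ℝ × ℝ => w p.1 p.2) := hu2.continuous.sub hv2.continuous
  have hwtc : Continuous (fun p : ℝ × ℝ => wt p.1 p.2) :=
    (contDiff_one_p1 hu2).continuous.sub (contDiff_one_p1 hv2).continuous
  have hwxc : Continuous (fun p : ℝ × ℝ => wx p.1 p.2) :=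
    (contDiff_one_p2 hu2).continuous.sub (contDiff_one_p2 hv2).continuous
  have hwttc : Continuous (fun p : ℝ × ℝ => wtt p.1 p.2) :=
    (continuous_p1 (contDiff_one_p1 hu2)).sub (continuous_p1 (contDiff_one_p1 hv2))
  have hwxtc : Continuous (fun p : ℝ × ℝ => wxt p.1 p.2) :=
    (continuous_p1 (contDiff_one_p2 hu2)).sub (continuous_p1 (contDiff_one_p2 hv2))
  have hwxxc : Continuous (fun p : ℝ × ℝ => wxx p.1 p.2) :=
    (continuous_p2 (contDiff_one_p2 hu2)).sub (continuous_p2 (contDiff_one_p2 hv2))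
  have hgc : Continuous (fun p : ℝ × ℝ => g p.1 p.2) :=
    ((hm'c.comp continuous_snd).sub (hmc.comp continuous_snd)).mul hv2.continuous
  -- support radius
  set R := max Ru Rv with hRdef
  have hR : 0 < R := lt_max_of_lt_left hRu
  have hRuR : Ru ≤ R := le_max_left _ _
  have hRvR : Rv ≤ R := le_max_right _ _
  -- vanishing of fields
  have hw0 : ∀ t ∈ Icc (0:ℝ) T, ∀ x : ℝ, R ≤ |x| → w t x = 0 := by
    intro t ht x hx
    show u t x - v t x = 0
    rw [huS t ht x (hRuR.trans hx), hvS t ht x (hRvR.trans hx)]; ring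
  have hwt0 : ∀ t ∈ Icc (0:ℝ) T, ∀ x : ℝ, R ≤ |x| → wt t x = 0 := by
    intro t ht x hx
    show p1 U (t, x) - p1 V (t, x) = 0
    rw [p1_eq_zero_on hUd hT ht (fun s hs => huS s hs x (hRuR.trans hx)),
      p1_eq_zero_on hVd hT ht (fun s hs => hvS s hs x (hRvR.trans hx))]; ring
  have hwx0 : ∀ t ∈ Icc (0:ℝ) T, ∀ x : ℝ, R ≤ |x| → wx t x = 0 := by
    intro t ht x hx
    show p2 U (t, x) - p2 V (t, x) = 0
    rw [p2_eq_zero hUd hR hx (fun y hy => huS t ht y (hRuR.trans hy)),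
      p2_eq_zero hVd hR hx (fun y hy => hvS t ht y (hRvR.trans hy))]; ring
  have hg0 : ∀ t ∈ Icc (0:ℝ) T, ∀ x : ℝ, R ≤ |x| → g t x = 0 := by
    intro t ht x hx
    show (m' x - m x) * v t x = 0
    rw [hvS t ht x (hRvR.trans hx)]; ring
  -- the PDE for the difference
  have hPDE : ∀ t ∈ Icc (0:ℝ) T, ∀ x : ℝ, wtt t x = wxx t x - m x * w t x + g t x := by
    intro t ht x
    have h1 : p1 (p1 U) (t, x) = p2 (p2 U) (t, x) - m x * u t x + 0 := by
      rw [← iteratedDeriv2_slice1 hu2 t x, ← iteratedDeriv2_slice2 hu2 t x]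
      exact huE t ht x
    have h2 : p1 (p1 V) (t, x) = p2 (p2 V) (t, x) - m' x * v t x + 0 := by
      rw [← iteratedDeriv2_slice1 hv2 t x, ← iteratedDeriv2_slice2 hv2 t x]
      exact hvE t ht x
    show p1 (p1 U) (t, x) - p1 (p1 V) (t, x) =
      (p2 (p2 U) (t, x) - p2 (p2 V) (t, x)) - m x * (u t x - v t x) + (m' x - m x) * v t x
    linear_combination h1 - h2
  -- energy densities
  set e : ℝ → ℝ → ℝ := fun t x => wt t x ^ 2 + wx t x ^ 2 + m x * w t x ^ 2 with hedef
  set e' : ℝ → ℝ → ℝ := fun t x =>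
    2 * wt t x * wtt t x + 2 * wx t x * wxt t x + m x * (2 * w t x * wt t x) with he'def
  set q : ℝ → ℝ → ℝ := fun t x => w t x ^ 2 with hqdef
  set q' : ℝ → ℝ → ℝ := fun t x => 2 * w t x * wt t x with hq'def
  set E : ℝ → ℝ := fun t => ∫ x : ℝ, e t x with hEdef
  set Q : ℝ → ℝ := fun t => ∫ x : ℝ, q t x with hQdef
  -- joint continuity of densities
  have hec : Continuous (fun p : ℝ × ℝ => e p.1 p.2) :=
    ((hwtc.pow 2).add (hwxc.pow 2)).add ((hmc.comp continuous_snd).mul (hwc.pow 2))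
  have he'c : Continuous (fun p : ℝ × ℝ => e' p.1 p.2) :=
    (((continuous_const.mul hwtc).mul hwttc).add
      ((continuous_const.mul hwxc).mul hwxtc)).add
      ((hmc.comp continuous_snd).mul ((continuous_const.mul hwc).mul hwtc))
  have hqc : Continuous (fun p : ℝ × ℝ => q p.1 p.2) := hwc.pow 2
  have hq'c : Continuous (fun p : ℝ × ℝ => q' p.1 p.2) :=
    (continuous_const.mul hwc).mul hwtc
  -- vanishing of densities
  have he0 : ∀ t ∈ Icc (0:ℝ) T, ∀ x : ℝ, R ≤ |x| → e t x = 0 := by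
    intro t ht x hx
    show wt t x ^ 2 + wx t x ^ 2 + m x * w t x ^ 2 = 0
    rw [hw0 t ht x hx, hwt0 t ht x hx, hwx0 t ht x hx]; ring
  have he'0 : ∀ t ∈ Icc (0:ℝ) T, ∀ x : ℝ, R ≤ |x| → e' t x = 0 := by
    intro t ht x hx
    show 2 * wt t x * wtt t x + 2 * wx t x * wxt t x + m x * (2 * w t x * wt t x) = 0
    rw [hw0 t ht x hx, hwt0 t ht x hx, hwx0 t ht x hx]; ring
  have hq0 : ∀ t ∈ Icc (0:ℝ) T, ∀ x : ℝ, R ≤ |x| → q t x = 0 := by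
    intro t ht x hx
    show w t x ^ 2 = 0
    rw [hw0 t ht x hx]; ring
  have hq'0 : ∀ t ∈ Icc (0:ℝ) T, ∀ x : ℝ, R ≤ |x| → q' t x = 0 := by
    intro t ht x hx
    show 2 * w t x * wt t x = 0
    rw [hw0 t ht x hx]; ring
  -- slice continuity
  have hw_cx : ∀ t : ℝ, Continuous (fun x => w t x) := fun t => hwc.comp (Continuous.prodMk_right t)
  have hwt_cx : ∀ t : ℝ, Continuous (fun x => wt t x) := fun t => hwtc.comp (Continuous.prodMk_right t)
  have hwx_cx : ∀ t : ℝ, Continuous (fun x => wx t x) := fun t => hwxc.comp (Continuous.prodMk_right t)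
  have hwxx_cx : ∀ t : ℝ, Continuous (fun x => wxx t x) := fun t => hwxxc.comp (Continuous.prodMk_right t)
  have hwxt_cx : ∀ t : ℝ, Continuous (fun x => wxt t x) := fun t => hwxtc.comp (Continuous.prodMk_right t)
  have hg_cx : ∀ t : ℝ, Continuous (fun x => g t x) := fun t => hgc.comp (Continuous.prodMk_right t)
  -- derivative of the energy
  have hEderiv : ∀ t₀ ∈ Ioo (0:ℝ) T, HasDerivAt E (∫ x : ℝ, e' t₀ x) t₀ := by
    intro t₀ ht₀
    apply hasDerivAt_integral_support hT hR ht₀ hec he'c he0 he'0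
    intro x t ht
    have h1 : HasDerivAt (fun τ => wt τ x ^ 2) (2 * wt t x * wtt t x) t := by
      simpa using (hwt_t t x).fun_pow 2
    have h2 : HasDerivAt (fun τ => wx τ x ^ 2) (2 * wx t x * wxt t x) t := by
      simpa using (hwx_t t x).fun_pow 2
    have h3 : HasDerivAt (fun τ => m x * w τ x ^ 2) (m x * (2 * w t x * wt t x)) t :=
      HasDerivAt.const_mul _ (by simpa using (hw_t t x).fun_pow 2)
    exact (h1.add h2).add h3
  have hQderiv : ∀ t₀ ∈ Ioo (0:ℝ) T, HasDerivAt Q (∫ x : ℝ, q' t₀ x) t₀ := by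
    intro t₀ ht₀
    apply hasDerivAt_integral_support hT hR ht₀ hqc hq'c hq0 hq'0
    intro x t ht
    simpa using (hw_t t x).fun_pow 2
  -- continuity of the energy
  have hEcont : ContinuousOn E (Icc 0 T) := continuousOn_integral_support hT hR hec he0
  have hQcont : ContinuousOn Q (Icc 0 T) := continuousOn_integral_support hT hR hqc hq0
  -- integrability of slices
  have hInt_e : ∀ t ∈ Icc (0:ℝ) T, Integrable (fun x => e t x) := fun t ht =>
    integrable_of_vanish (hec.comp (Continuous.prodMk_right t)) (he0 t ht)
  have hInt_q : ∀ t ∈ Icc (0:ℝ) T, Integrable (fun x => q t x) := fun t ht =>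
    integrable_of_vanish (hqc.comp (Continuous.prodMk_right t)) (hq0 t ht)
  have hInt_wt2 : ∀ t ∈ Icc (0:ℝ) T, Integrable (fun x => wt t x ^ 2) := fun t ht =>
    integrable_of_vanish ((hwt_cx t).pow 2) (fun x hx => by rw [hwt0 t ht x hx]; ring)
  -- nonnegativity and comparison
  have hE_nonneg : ∀ t : ℝ, 0 ≤ E t := by
    intro t
    apply integral_nonneg
    intro x
    show 0 ≤ wt t x ^ 2 + wx t x ^ 2 + m x * w t x ^ 2
    have := mul_nonneg (hm x) (sq_nonneg (w t x))
    positivity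
  have hQ_nonneg : ∀ t : ℝ, 0 ≤ Q t := fun t => integral_nonneg fun x => sq_nonneg _
  have hwt2_le_E : ∀ t ∈ Icc (0:ℝ) T, (∫ x : ℝ, wt t x ^ 2) ≤ E t := by
    intro t ht
    apply integral_mono (hInt_wt2 t ht) (hInt_e t ht)
    intro x
    show wt t x ^ 2 ≤ wt t x ^ 2 + wx t x ^ 2 + m x * w t x ^ 2
    have h1 := mul_nonneg (hm x) (sq_nonneg (w t x))
    have h2 := sq_nonneg (wx t x)
    linarith
  -- values at time 0
  have hwt00 : ∀ x : ℝ, wt 0 x = 0 := by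
    intro x
    show p1 U (0, x) - p1 V (0, x) = 0
    have e1 : p1 U (0, x) = deriv (fun τ => u τ x) 0 := (hasDerivAt_slice1 hUd 0 x).deriv.symm
    have e2 : p1 V (0, x) = deriv (fun τ => v τ x) 0 := (hasDerivAt_slice1 hVd 0 x).deriv.symm
    rw [e1, e2, h1 x]; ring
  have hwx00 : ∀ x : ℝ, wx 0 x = 0 := by
    intro x
    show p2 U (0, x) - p2 V (0, x) = 0
    have e1 : p2 U (0, x) = deriv (fun y => u 0 y) x := (hasDerivAt_slice2 hUd 0 x).deriv.symm
    have e2 : p2 V (0, x) = deriv (fun y => v 0 y) x := (hasDerivAt_slice2 hVd 0 x).deriv.symm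
    rw [e1, e2, show (fun y => u 0 y) = (fun y => v 0 y) from funext h0]; ring
  have hw00 : ∀ x : ℝ, w 0 x = 0 := fun x => sub_eq_zero.2 (h0 x)
  have hEzero : E 0 = 0 := by
    show (∫ x : ℝ, e 0 x) = 0
    have : (fun x : ℝ => e 0 x) = fun _ => (0:ℝ) := by
      funext x
      show wt 0 x ^ 2 + wx 0 x ^ 2 + m x * w 0 x ^ 2 = 0
      rw [hwt00 x, hwx00 x, hw00 x]; ring
    rw [this, integral_zero]
  have hQzero : Q 0 = 0 := by
    show (∫ x : ℝ, q 0 x) = 0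
    have : (fun x : ℝ => q 0 x) = fun _ => (0:ℝ) := by
      funext x
      show w 0 x ^ 2 = 0
      rw [hw00 x]; ring
    rw [this, integral_zero]
  -- bounds on the potentials' difference
  have hDb : BddAbove (Set.range fun x => |m x - m' x|) := by
    refine ⟨Mm + Mm', ?_⟩
    rintro y ⟨x, rfl⟩
    have h3 : |m x - m' x| ≤ |m x| + |m' x| := by
      rw [sub_eq_add_neg]
      exact (abs_add_le _ _).trans (by simp)
    exact h3.trans (add_le_add (hMm x) (hMm' x))
  have hDle : ∀ x : ℝ, |m x - m' x| ≤ D := fun x => le_ciSup hDb x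
  have hD0 : 0 ≤ D := (abs_nonneg _).trans (hDle 0)
  -- bound on the sup of the L² norms of v
  obtain ⟨Cv, hCv⟩ := (isCompact_Icc.prod isCompact_Icc :
      IsCompact (Icc (0:ℝ) T ×ˢ Icc (-Rv) Rv)).exists_bound_of_continuousOn
      hv2.continuous.continuousOn
  have hCv0 : 0 ≤ Cv :=
    (norm_nonneg _).trans (hCv (0, 0) ⟨⟨le_refl 0, hT.le⟩, by simp [hRv.le]⟩)
  have hSb : BddAbove (Set.range fun s : Set.Icc (0:ℝ) T =>
      Real.sqrt (∫ x : ℝ, (v (s : ℝ) x) ^ 2)) := by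
    refine ⟨Real.sqrt (Cv ^ 2 * (2 * Rv)), ?_⟩
    rintro y ⟨s, rfl⟩
    apply Real.sqrt_le_sqrt
    apply integral_sq_le (hv2.continuous.comp (Continuous.prodMk_right (s:ℝ))) hRv hCv0
    · intro x hx
      have := hCv ((s:ℝ), x) ⟨s.2, by constructor <;> [linarith [neg_abs_le x]; linarith [le_abs_self x]]⟩
      simpa using this
    · exact fun x hx => hvS s s.2 x hx
  have hSle : ∀ s : Set.Icc (0:ℝ) T, Real.sqrt (∫ x : ℝ, (v (s : ℝ) x) ^ 2) ≤ S :=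
    fun s => le_ciSup hSb s
  have hS0 : 0 ≤ S := (Real.sqrt_nonneg _).trans (hSle ⟨0, le_refl 0, hT.le⟩)
  have hG0 : 0 ≤ G := mul_nonneg hD0 hS0
  -- bound on the source term
  have hgbound : ∀ t ∈ Icc (0:ℝ) T, Real.sqrt (∫ x : ℝ, g t x ^ 2) ≤ G := by
    intro t ht
    have hIv : Integrable (fun x => v t x ^ 2) :=
      integrable_of_vanish ((hv2.continuous.comp (Continuous.prodMk_right t)).pow 2)
        (fun x hx => by rw [hvS t ht x hx]; ring)
    have hIg : Integrable (fun x => g t x ^ 2) :=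
      integrable_of_vanish ((hg_cx t).pow 2)
        (fun x hx => by rw [hg0 t ht x hx]; ring)
    have h4 : (∫ x : ℝ, g t x ^ 2) ≤ D ^ 2 * ∫ x : ℝ, v t x ^ 2 := by
      rw [← MeasureTheory.integral_const_mul]
      apply integral_mono hIg (hIv.const_mul _)
      intro x
      show g t x ^ 2 ≤ D ^ 2 * v t x ^ 2
      have h5 : |m' x - m x| ≤ D := by rw [abs_sub_comm]; exact hDle x
      have h6 : (m' x - m x) ^ 2 ≤ D ^ 2 := by
        calc (m' x - m x) ^ 2 = |m' x - m x| ^ 2 := (sq_abs _).symm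
        _ ≤ D ^ 2 := pow_le_pow_left₀ (abs_nonneg _) h5 2
      calc g t x ^ 2 = (m' x - m x) ^ 2 * v t x ^ 2 := by show ((m' x - m x) * v t x)^2 = _; ring
      _ ≤ D ^ 2 * v t x ^ 2 := mul_le_mul_of_nonneg_right h6 (sq_nonneg _)
    calc Real.sqrt (∫ x : ℝ, g t x ^ 2) ≤ Real.sqrt (D ^ 2 * ∫ x : ℝ, v t x ^ 2) :=
          Real.sqrt_le_sqrt h4
    _ = D * Real.sqrt (∫ x : ℝ, v t x ^ 2) := by
          rw [Real.sqrt_mul (sq_nonneg D), Real.sqrt_sq hD0]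
    _ ≤ D * S := mul_le_mul_of_nonneg_left (hSle ⟨t, ht⟩) hD0
  -- the key integration by parts: ∫ e' = 2 ∫ wt ⬝ g
  have hE'val : ∀ s ∈ Icc (0:ℝ) T, (∫ x : ℝ, e' s x) = 2 * ∫ x : ℝ, wt s x * g s x := by
    intro s hs
    have hline : ContDiff ℝ 1 (fun y : ℝ => ((s : ℝ), y)) := contDiff_const.prodMk contDiff_id
    have hwxC : ContDiff ℝ 1 (fun y => wx s y) :=
      ((contDiff_one_p2 hu2).sub (contDiff_one_p2 hv2)).comp hline
    have hwtC : ContDiff ℝ 1 (fun y => wt s y) :=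
      ((contDiff_one_p1 hu2).sub (contDiff_one_p1 hv2)).comp hline
    have hhC : ContDiff ℝ 1 (fun y => wx s y * wt s y) := hwxC.mul hwtC
    have hhS : HasCompactSupport (fun y => wx s y * wt s y) :=
      support_of_vanish (R := R) fun x hx => by rw [hwx0 s hs x hx, hwt0 s hs x hx]; ring
    have hI0 : (∫ x : ℝ, deriv (fun y => wx s y * wt s y) x) = 0 := integral_deriv_zero hhC hhS
    have hderivh : (fun x => deriv (fun y => wx s y * wt s y) x)
        = fun x => wxx s x * wt s x + wx s x * wxt s x :=
      funext fun x => ((hwx_x s x).mul (hwt_x s x)).deriv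
    have hI0' : (∫ x : ℝ, (wxx s x * wt s x + wx s x * wxt s x)) = 0 := by
      rw [← hderivh]; exact hI0
    have hee : (fun x => e' s x) = fun x =>
        2 * (wxx s x * wt s x + wx s x * wxt s x) + 2 * (wt s x * g s x) := by
      funext x
      have hp := hPDE s hs x
      show 2 * wt s x * wtt s x + 2 * wx s x * wxt s x + m x * (2 * w s x * wt s x) = _
      linear_combination 2 * wt s x * hp
    have hi1 : Integrable (fun x => 2 * (wxx s x * wt s x + wx s x * wxt s x)) := by
      apply integrable_of_vanish
        (continuous_const.mul (((hwxx_cx s).mul (hwt_cx s)).add ((hwx_cx s).mul (hwxt_cx s))))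
        (R := R)
      intro x hx
      show 2 * (wxx s x * wt s x + wx s x * wxt s x) = 0
      rw [hwx0 s hs x hx, hwt0 s hs x hx]; ring
    have hi2 : Integrable (fun x => 2 * (wt s x * g s x)) := by
      apply integrable_of_vanish (continuous_const.mul ((hwt_cx s).mul (hg_cx s))) (R := R)
      intro x hx
      show 2 * (wt s x * g s x) = 0
      rw [hwt0 s hs x hx]; ring
    calc (∫ x : ℝ, e' s x)
        = ∫ x : ℝ, (2 * (wxx s x * wt s x + wx s x * wxt s x) + 2 * (wt s x * g s x)) := by
          rw [hee]
    _ = (∫ x : ℝ, 2 * (wxx s x * wt s x + wx s x * wxt s x)) + ∫ x : ℝ, 2 * (wt s x * g s x) :=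
          MeasureTheory.integral_add hi1 hi2
    _ = 2 * ∫ x : ℝ, wt s x * g s x := by
          rw [MeasureTheory.integral_const_mul, MeasureTheory.integral_const_mul, hI0']
          ring
  -- Cauchy–Schwarz bound on ∫ e'
  have hE'le : ∀ s ∈ Icc (0:ℝ) T, (∫ x : ℝ, e' s x) ≤ 2 * Real.sqrt (E s) * G := by
    intro s hs
    rw [hE'val s hs]
    have hcs := cauchy_schwarz (f := fun x => wt s x) (g := fun x => g s x)
      (hwt_cx s) (hg_cx s)
      (support_of_vanish (R := R) fun x hx => hwt0 s hs x hx)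
      (support_of_vanish (R := R) fun x hx => hg0 s hs x hx)
    have h5 : Real.sqrt (∫ x : ℝ, wt s x ^ 2) ≤ Real.sqrt (E s) :=
      Real.sqrt_le_sqrt (hwt2_le_E s hs)
    have h6 := hgbound s hs
    have h7 : Real.sqrt (∫ x : ℝ, wt s x ^ 2) * Real.sqrt (∫ x : ℝ, g s x ^ 2)
        ≤ Real.sqrt (E s) * G :=
      mul_le_mul (h5.trans le_rfl) h6 (Real.sqrt_nonneg _) (Real.sqrt_nonneg _)
    nlinarith [hcs]
  -- step 1: Grönwall for the energy
  have step1 : ∀ t ∈ Icc (0:ℝ) T, Real.sqrt (E t) ≤ G * t := by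
    intro t ht
    apply le_of_forall_sqrt_eps
    intro ε hε
    set φ : ℝ → ℝ := fun s => G * s - Real.sqrt (E s + ε) with hφdef
    have hφderiv : ∀ s ∈ Ioo (0:ℝ) T,
        HasDerivAt φ (G - (∫ x : ℝ, e' s x) / (2 * Real.sqrt (E s + ε))) s := by
      intro s hs
      have hpos : 0 < E s + ε := by linarith [hE_nonneg s]
      have h2 : HasDerivAt (fun y => E y + ε) (∫ x : ℝ, e' s x) s := (hEderiv s hs).add_const ε
      have h3 := h2.sqrt (ne_of_gt hpos)
      have h4 : HasDerivAt (fun y : ℝ => G * y) G s := by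
        simpa using (hasDerivAt_id s).const_mul G
      exact h4.sub h3
    have hφmono : MonotoneOn φ (Icc 0 T) := by
      apply monotoneOn_of_deriv_nonneg (convex_Icc 0 T)
      · exact (continuousOn_const.mul continuousOn_id).sub
          (Real.continuous_sqrt.comp_continuousOn (hEcont.add continuousOn_const))
      · rw [interior_Icc]
        exact fun s hs => ((hφderiv s hs).differentiableAt).differentiableWithinAt
      · rw [interior_Icc]
        intro s hs
        rw [(hφderiv s hs).deriv]
        have hs' : s ∈ Icc (0:ℝ) T := Ioo_subset_Icc_self hs
        have hpos : 0 < E s + ε := by linarith [hE_nonneg s]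
        have hpos2 : 0 < 2 * Real.sqrt (E s + ε) := by positivity
        rw [sub_nonneg, div_le_iff₀ hpos2]
        have h5 : Real.sqrt (E s) ≤ Real.sqrt (E s + ε) := Real.sqrt_le_sqrt (by linarith)
        have h6 := hE'le s hs'
        nlinarith [Real.sqrt_nonneg (E s), Real.sqrt_nonneg (E s + ε)]
    have h0mem : (0:ℝ) ∈ Icc (0:ℝ) T := ⟨le_refl 0, hT.le⟩
    have hmono := hφmono h0mem ht ht.1
    have hφ0 : φ 0 = -Real.sqrt ε := by
      show G * 0 - Real.sqrt (E 0 + ε) = -Real.sqrt ε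
      rw [hEzero]; ring_nf
    have h5 : Real.sqrt (E t) ≤ Real.sqrt (E t + ε) :=
      Real.sqrt_le_sqrt (by linarith)
    have hφt : φ t = G * t - Real.sqrt (E t + ε) := rfl
    rw [hφ0, hφt] at hmono
    linarith
  -- step 2: Grönwall for the L² norm
  have step2 : ∀ t ∈ Icc (0:ℝ) T, Real.sqrt (Q t) ≤ G / 2 * t ^ 2 := by
    intro t ht
    apply le_of_forall_sqrt_eps
    intro ε hε
    set ψ : ℝ → ℝ := fun s => G / 2 * s ^ 2 - Real.sqrt (Q s + ε) with hψdef
    have hψderiv : ∀ s ∈ Ioo (0:ℝ) T,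
        HasDerivAt ψ (G * s - (∫ x : ℝ, q' s x) / (2 * Real.sqrt (Q s + ε))) s := by
      intro s hs
      have hpos : 0 < Q s + ε := by linarith [hQ_nonneg s]
      have h2 : HasDerivAt (fun y => Q y + ε) (∫ x : ℝ, q' s x) s := (hQderiv s hs).add_const ε
      have h3 := h2.sqrt (ne_of_gt hpos)
      have h4 : HasDerivAt (fun y : ℝ => G / 2 * y ^ 2) (G * s) s := by
        have h5 := (hasDerivAt_pow 2 s).const_mul (G / 2)
        refine h5.congr_deriv ?_
        push_cast
        ring
      exact h4.sub h3
    have hψmono : MonotoneOn ψ (Icc 0 T) := by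
      apply monotoneOn_of_deriv_nonneg (convex_Icc 0 T)
      · exact (continuousOn_const.mul (continuousOn_id.pow 2)).sub
          (Real.continuous_sqrt.comp_continuousOn (hQcont.add continuousOn_const))
      · rw [interior_Icc]
        exact fun s hs => ((hψderiv s hs).differentiableAt).differentiableWithinAt
      · rw [interior_Icc]
        intro s hs
        rw [(hψderiv s hs).deriv]
        have hs' : s ∈ Icc (0:ℝ) T := Ioo_subset_Icc_self hs
        have hpos : 0 < Q s + ε := by linarith [hQ_nonneg s]
        have hpos2 : 0 < 2 * Real.sqrt (Q s + ε) := by positivity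
        rw [sub_nonneg, div_le_iff₀ hpos2]
        -- bound ∫ q' s
        have hIq' : (∫ x : ℝ, q' s x) = 2 * ∫ x : ℝ, w s x * wt s x := by
          have : (fun x => q' s x) = fun x => 2 * (w s x * wt s x) := by
            funext x; show 2 * w s x * wt s x = _; ring
          rw [this, MeasureTheory.integral_const_mul]
        have hcs := cauchy_schwarz (f := fun x => w s x) (g := fun x => wt s x)
          (hw_cx s) (hwt_cx s)
          (support_of_vanish (R := R) fun x hx => hw0 s hs' x hx)
          (support_of_vanish (R := R) fun x hx => hwt0 s hs' x hx)
        have h5 : Real.sqrt (∫ x : ℝ, w s x ^ 2) ≤ Real.sqrt (Q s + ε) := by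
          apply Real.sqrt_le_sqrt
          have : (∫ x : ℝ, w s x ^ 2) = Q s := rfl
          linarith [this.le]
        have h6 : Real.sqrt (∫ x : ℝ, wt s x ^ 2) ≤ G * s := by
          calc Real.sqrt (∫ x : ℝ, wt s x ^ 2) ≤ Real.sqrt (E s) :=
                Real.sqrt_le_sqrt (hwt2_le_E s hs')
          _ ≤ G * s := step1 s hs'
        have h7 : Real.sqrt (∫ x : ℝ, w s x ^ 2) * Real.sqrt (∫ x : ℝ, wt s x ^ 2)
            ≤ Real.sqrt (Q s + ε) * (G * s) :=
          mul_le_mul h5 h6 (Real.sqrt_nonneg _) (Real.sqrt_nonneg _)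
        rw [hIq']
        nlinarith [hcs]
    have h0mem : (0:ℝ) ∈ Icc (0:ℝ) T := ⟨le_refl 0, hT.le⟩
    have hmono := hψmono h0mem ht ht.1
    have hψ0 : ψ 0 = -Real.sqrt ε := by
      show G / 2 * 0 ^ 2 - Real.sqrt (Q 0 + ε) = -Real.sqrt ε
      rw [hQzero]; ring_nf
    have h5 : Real.sqrt (Q t) ≤ Real.sqrt (Q t + ε) :=
      Real.sqrt_le_sqrt (by linarith)
    have hψt : ψ t = G / 2 * t ^ 2 - Real.sqrt (Q t + ε) := rfl
    rw [hψ0, hψt] at hmono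
    linarith
  -- conclusion
  intro t ht
  have hst := step2 t ht
  have ht2 : t ^ 2 ≤ T ^ 2 := pow_le_pow_left₀ ht.1 ht.2 2
  show Real.sqrt (Q t) ≤ T ^ 2 * D * S
  calc Real.sqrt (Q t) ≤ G / 2 * t ^ 2 := hst
  _ ≤ T ^ 2 * D * S := by
      have : T ^ 2 * D * S = T ^ 2 * G := by rw [hGdef]; ring
      rw [this]
      nlinarith [sq_nonneg t]
end

section
/- Let T > 0, N₀ ∈ ℕ, c > 0, and for each ε ∈ (0, 1] let m_ε, m̃_ε : ℝ → ℝ be continuous, bounded and non-negative, let u_ε be a classical solution on [0, T] of the wave equation with potential m_ε and source f = 0, and let ũ_ε be a classical solution on [0, T] of the wave equation with potential m̃_ε and source f = 0, with u_ε(0, ·) = ũ_ε(0, ·) and ∂_t u_ε(0, ·) = ∂_t ũ_ε(0, ·). Assume that for every k ∈ ℕ there exists C_k > 0 with sup_{x ∈ ℝ} |m_ε(x) − m̃_ε(x)| ≤ C_k ε^k for all ε ∈ (0, 1], and that sup_{t ∈ [0, T]} ‖ũ_ε(t, ·)‖_{L²(ℝ)} ≤ c ε^{-N₀} for all ε ∈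 (0, 1]. Then for every N ∈ ℕ there exists C_N > 0 such that sup_{t ∈ [0, T]} ‖u_ε(t, ·) − ũ_ε(t, ·)‖_{L²(ℝ)} ≤ C_N ε^N for all ε ∈ (0, 1]. -/
open MeasureTheory

open Set

section Helpers

noncomputable def pdt (F : ℝ × ℝ → ℝ) (p : ℝ × ℝ) : ℝ := fderiv ℝ F p (1, 0)
noncomputable def pdx (F : ℝ × ℝ → ℝ) (p : ℝ × ℝ) : ℝ := fderiv ℝ F p (0, 1)

lemma hasDerivAt_slice_t {F : ℝ × ℝ → ℝ} (hF : Differentiable ℝ F) (t x : ℝ) :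
    HasDerivAt (fun τ => F (τ, x)) (pdt F (t, x)) t := by
  have h1 : HasDerivAt (fun τ : ℝ => (τ, x)) ((1 : ℝ), (0 : ℝ)) t :=
    (hasDerivAt_id t).prodMk (hasDerivAt_const t x)
  exact (hF (t, x)).hasFDerivAt.comp_hasDerivAt t h1

lemma hasDerivAt_slice_x {F : ℝ × ℝ → ℝ} (hF : Differentiable ℝ F) (t x : ℝ) :
    HasDerivAt (fun y => F (t, y)) (pdx F (t, x)) x := by
  have h1 : HasDerivAt (fun y : ℝ => (t, y)) ((0 : ℝ), (1 : ℝ)) x :=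
    (hasDerivAt_const x t).prodMk (hasDerivAt_id x)
  exact (hF (t, x)).hasFDerivAt.comp_hasDerivAt x h1

lemma contDiff_pd_apply {F : ℝ × ℝ → ℝ} {n : ℕ} (hF : ContDiff ℝ (n + 1 : ℕ) F) (v : ℝ × ℝ) :
    ContDiff ℝ n (fun p => fderiv ℝ F p v) := by
  have h := hF.fderiv_right (m := n) (by exact_mod_cast le_rfl)
  exact h.clm_apply contDiff_const

lemma contDiff_pdt {F : ℝ × ℝ → ℝ} {n : ℕ} (hF : ContDiff ℝ (n + 1 : ℕ) F) :
    ContDiff ℝ n (pdt F) := contDiff_pd_apply hF _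

lemma contDiff_pdx {F : ℝ × ℝ → ℝ} {n : ℕ} (hF : ContDiff ℝ (n + 1 : ℕ) F) :
    ContDiff ℝ n (pdx F) := contDiff_pd_apply hF _

lemma hasDerivAt_pd_slice_t {F : ℝ × ℝ → ℝ} (hF : ContDiff ℝ 2 F) (v : ℝ × ℝ) (t x : ℝ) :
    HasDerivAt (fun τ => fderiv ℝ F (τ, x) v) (fderiv ℝ (fderiv ℝ F) (t, x) (1, 0) v) t := by
  have hΦ : Differentiable ℝ (fderiv ℝ F) :=
    (hF.fderiv_right (m := 1) (by norm_num)).differentiable (by norm_num)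
  have h1 : HasDerivAt (fun τ : ℝ => (τ, x)) ((1 : ℝ), (0 : ℝ)) t :=
    (hasDerivAt_id t).prodMk (hasDerivAt_const t x)
  have h2 := ((hΦ (t, x)).hasFDerivAt.comp_hasDerivAt t h1)
  have h3 := ((ContinuousLinearMap.apply ℝ ℝ v).hasFDerivAt.comp_hasDerivAt t h2)
  exact h3

lemma hasDerivAt_pdt_slice_t {F : ℝ × ℝ → ℝ} (hF : ContDiff ℝ 2 F) (t x : ℝ) :
    HasDerivAt (fun τ => pdt F (τ, x)) (fderiv ℝ (fderiv ℝ F) (t, x) (1, 0) (1, 0)) t :=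
  hasDerivAt_pd_slice_t hF (1, 0) t x

lemma hasDerivAt_pdx_slice_t {F : ℝ × ℝ → ℝ} (hF : ContDiff ℝ 2 F) (t x : ℝ) :
    HasDerivAt (fun τ => pdx F (τ, x)) (fderiv ℝ (fderiv ℝ F) (t, x) (1, 0) (0, 1)) t :=
  hasDerivAt_pd_slice_t hF (0, 1) t x

lemma hasDerivAt_pd_slice_x {F : ℝ × ℝ → ℝ} (hF : ContDiff ℝ 2 F) (v : ℝ × ℝ) (t x : ℝ) :
    HasDerivAt (fun y => fderiv ℝ F (t, y) v) (fderiv ℝ (fderiv ℝ F) (t, x) (0, 1) v) x := by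
  have hΦ : Differentiable ℝ (fderiv ℝ F) :=
    (hF.fderiv_right (m := 1) (by norm_num)).differentiable (by norm_num)
  have h1 : HasDerivAt (fun y : ℝ => (t, y)) ((0 : ℝ), (1 : ℝ)) x :=
    (hasDerivAt_const x t).prodMk (hasDerivAt_id x)
  have h2 := ((hΦ (t, x)).hasFDerivAt.comp_hasDerivAt x h1)
  have h3 := ((ContinuousLinearMap.apply ℝ ℝ v).hasFDerivAt.comp_hasDerivAt x h2)
  exact h3

/-- Clairaut: symmetry of second partials for a `C²` function. -/
lemma second_partials_symm {F : ℝ × ℝ → ℝ} (hF : ContDiff ℝ 2 F) (p : ℝ × ℝ) :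
    fderiv ℝ (fderiv ℝ F) p (1, 0) (0, 1) = fderiv ℝ (fderiv ℝ F) p (0, 1) (1, 0) := by
  have hdiff : Differentiable ℝ F := hF.differentiable (by norm_num)
  have hΦ : Differentiable ℝ (fderiv ℝ F) :=
    (hF.fderiv_right (m := 1) (by norm_num)).differentiable (by norm_num)
  exact second_derivative_symmetric (fun y => (hdiff y).hasFDerivAt)
    (hΦ p).hasFDerivAt (1, 0) (0, 1)

/-- Second time derivative of the time slice. -/
lemma iteratedDeriv_two_slice_t {F : ℝ × ℝ → ℝ} (hF : ContDiff ℝ 2 F) (t x : ℝ) :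
    iteratedDeriv 2 (fun τ => F (τ, x)) t = fderiv ℝ (fderiv ℝ F) (t, x) (1, 0) (1, 0) := by
  have hdiff : Differentiable ℝ F := hF.differentiable (by norm_num)
  have h1 : deriv (fun τ => F (τ, x)) = fun τ => pdt F (τ, x) := by
    funext τ; exact (hasDerivAt_slice_t hdiff τ x).deriv
  rw [show (2 : ℕ) = 1 + 1 from rfl, iteratedDeriv_succ, iteratedDeriv_one, h1]
  exact (hasDerivAt_pdt_slice_t hF t x).deriv

lemma iteratedDeriv_two_slice_x {F : ℝ × ℝ → ℝ} (hF : ContDiff ℝ 2 F) (t x : ℝ) :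
    iteratedDeriv 2 (fun y => F (t, y)) x = fderiv ℝ (fderiv ℝ F) (t, x) (0, 1) (0, 1) := by
  have hdiff : Differentiable ℝ F := hF.differentiable (by norm_num)
  have h1 : deriv (fun y => F (t, y)) = fun y => pdx F (t, y) := by
    funext y; exact (hasDerivAt_slice_x hdiff t y).deriv
  rw [show (2 : ℕ) = 1 + 1 from rfl, iteratedDeriv_succ, iteratedDeriv_one, h1]
  exact (hasDerivAt_pd_slice_x hF (0, 1) t x).deriv

/-- If a differentiable function vanishes on a nondegenerate interval `[a,b]`,
its derivative vanishes at every point of `[a,b]`. -/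
lemma deriv_eq_zero_of_eqOn_zero {f : ℝ → ℝ} {a b t : ℝ} (hab : a < b)
    (hf : DifferentiableAt ℝ f t) (ht : t ∈ Icc a b) (h0 : ∀ s ∈ Icc a b, f s = 0) :
    deriv f t = 0 := by
  have hu : UniqueDiffWithinAt ℝ (Icc a b) t := (uniqueDiffOn_Icc hab) t ht
  have h1 : derivWithin f (Icc a b) t = deriv f t :=
    (hf.hasDerivAt.hasDerivWithinAt).derivWithin hu
  have h2 : derivWithin f (Icc a b) t = derivWithin (fun _ => (0 : ℝ)) (Icc a b) t :=
    derivWithin_congr h0 (h0 t ht)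
  rw [← h1, h2, derivWithin_fun_const, Pi.zero_apply]

lemma pdt_sub {F G : ℝ × ℝ → ℝ} (hF : ContDiff ℝ 2 F) (hG : ContDiff ℝ 2 G) (p : ℝ × ℝ) :
    pdt (fun q => F q - G q) p = pdt F p - pdt G p := by
  simp only [pdt]
  rw [fderiv_fun_sub (hF.differentiable (by norm_num) p)
    (hG.differentiable (by norm_num) p)]
  simp

lemma f2_sub {F G : ℝ × ℝ → ℝ} (hF : ContDiff ℝ 2 F) (hG : ContDiff ℝ 2 G)
    (p v w : ℝ × ℝ) :
    fderiv ℝ (fderiv ℝ (fun q => F q - G q)) p v w =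
      fderiv ℝ (fderiv ℝ F) p v w - fderiv ℝ (fderiv ℝ G) p v w := by
  have h1 : fderiv ℝ (fun q => F q - G q) = fun q => fderiv ℝ F q - fderiv ℝ G q := by
    funext q
    exact fderiv_sub (hF.differentiable (by norm_num) q)
      (hG.differentiable (by norm_num) q)
  rw [h1, fderiv_fun_sub
    ((hF.fderiv_right (m := 1) (by norm_num)).differentiable (by norm_num) p)
    ((hG.fderiv_right (m := 1) (by norm_num)).differentiable (by norm_num) p)]
  simp

section
variable {W : ℝ × ℝ → ℝ}

set_option maxHeartbeats 2000000 in
lemma energy_estimate (T : ℝ) (hT : 0 < T)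
    (m₀ : ℝ → ℝ) (hm₀c : Continuous m₀) (hm₀nn : ∀ x, 0 ≤ m₀ x)
    (g : ℝ × ℝ → ℝ) (hW : ContDiff ℝ 2 W) (hgc : Continuous g)
    (R : ℝ) (hR : 0 < R)
    (hsupp : ∀ t ∈ Icc (0:ℝ) T, ∀ x : ℝ, R ≤ |x| → W (t, x) = 0)
    (hpde : ∀ t ∈ Icc (0:ℝ) T, ∀ x : ℝ,
      fderiv ℝ (fderiv ℝ W) (t, x) (1, 0) (1, 0) =
        fderiv ℝ (fderiv ℝ W) (t, x) (0, 1) (0, 1) - m₀ x * W (t, x) + g (t, x))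
    (hW0 : ∀ x, W (0, x) = 0) (hWt0 : ∀ x, pdt W (0, x) = 0)
    (G : ℝ) (hG0 : 0 ≤ G)
    (hGb : ∀ t ∈ Icc (0:ℝ) T, ∫ x in Ioc (-(R+1)) (R+1), (g (t, x))^2 ≤ G) :
    ∀ t ∈ Icc (0:ℝ) T, ∫ x in Ioc (-(R+1)) (R+1), (W (t, x))^2 ≤ G * Real.exp (2*T) := by
  have hWd : Differentiable ℝ W := hW.differentiable (by norm_num)
  have hWc : Continuous W := hWd.continuous
  set R' : ℝ := R + 1 with hR'
  have hRR' : -R' ≤ R' := by linarith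
  set f2 : ℝ × ℝ → ℝ × ℝ →L[ℝ] ℝ × ℝ →L[ℝ] ℝ := fderiv ℝ (fderiv ℝ W) with hf2
  -- continuity facts
  have hpdtc : Continuous (pdt W) := (contDiff_pdt (n := 1) (by exact_mod_cast hW)).continuous
  have hpdxc : Continuous (pdx W) := (contDiff_pdx (n := 1) (by exact_mod_cast hW)).continuous
  have hf2c : ∀ v v' : ℝ × ℝ, Continuous (fun p => f2 p v v') := by
    intro v v'
    have h1 : ContDiff ℝ 1 (fderiv ℝ W) := hW.fderiv_right (m := 1) (by norm_num)
    have h2 : ContDiff ℝ 0 f2 := h1.fderiv_right (m := 0) (by norm_num)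
    exact ((h2.clm_apply contDiff_const).clm_apply contDiff_const).continuous
  -- the energy integrand and its time derivative
  set e : ℝ × ℝ → ℝ := fun p =>
    (W p)^2 + (pdt W p)^2 + (pdx W p)^2 + m₀ p.2 * (W p)^2 with he
  set D : ℝ × ℝ → ℝ := fun p =>
    2 * W p * pdt W p + 2 * pdt W p * f2 p (1,0) (1,0) + 2 * pdx W p * f2 p (1,0) (0,1)
      + m₀ p.2 * (2 * W p * pdt W p) with hD
  have hec : Continuous e := by
    apply Continuous.add
    apply Continuous.add
    apply Continuous.add
    · exact hWc.pow 2
    · exact hpdtc.pow 2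
    · exact hpdxc.pow 2
    · exact (hm₀c.comp continuous_snd).mul (hWc.pow 2)
  have hDc : Continuous D := by
    refine (((((continuous_const.mul hWc).mul hpdtc).add
      (((continuous_const.mul hpdtc)).mul (hf2c (1,0) (1,0)))).add
      ((continuous_const.mul hpdxc).mul (hf2c (1,0) (0,1)))).add
      ((hm₀c.comp continuous_snd).mul ((continuous_const.mul hWc).mul hpdtc)))
  -- integrability on the slab
  have hint : ∀ (h : ℝ → ℝ), Continuous h → IntegrableOn h (Ioc (-R') R') volume := by
    intro h hc; exact hc.integrableOn_Ioc
  set H : ℝ → ℝ := fun t => ∫ x in Ioc (-R') R', e (t, x) with hHdef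
  have cy : ∀ (t : ℝ) (h : ℝ × ℝ → ℝ), Continuous h → Continuous (fun y : ℝ => h (t, y)) :=
    fun t h hc => hc.comp (continuous_const.prodMk continuous_id)
  -- Step 1: H has derivative ∫ D(t,·) at every t
  have hH' : ∀ t : ℝ, HasDerivAt H (∫ x in Ioc (-R') R', D (t, x)) t := by
    intro t
    obtain ⟨C, hC⟩ := ((isCompact_Icc (a := t - 1) (b := t + 1)).prod
        (isCompact_Icc (a := -R') (b := R'))).exists_bound_of_continuousOn hDc.continuousOn
    have key := hasDerivAt_integral_of_dominated_loc_of_deriv_le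
      (μ := volume.restrict (Ioc (-R') R'))
      (F := fun τ x => e (τ, x)) (F' := fun τ x => D (τ, x)) (x₀ := t)
      (bound := fun _ => C) (Metric.ball_mem_nhds t one_pos)
      (Filter.Eventually.of_forall fun τ => (cy τ e hec).aestronglyMeasurable)
      (hint _ (cy t e hec))
      ((cy t D hDc).aestronglyMeasurable)
      ?_ (integrableOn_const measure_Ioc_lt_top.ne) ?_
    · exact key.2
    · refine (ae_restrict_mem measurableSet_Ioc).mono fun x hx τ hτ => ?_
      refine hC (τ, x) ⟨?_, Ioc_subset_Icc_self hx⟩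
      rw [Real.ball_eq_Ioo] at hτ
      exact Ioo_subset_Icc_self hτ
    · refine Filter.Eventually.of_forall fun x τ _ => ?_
      have h_a := hasDerivAt_slice_t hWd τ x
      have h_at := hasDerivAt_pdt_slice_t hW τ x
      have h_ax := hasDerivAt_pdx_slice_t hW τ x
      have hsum := (((h_a.pow 2).add (h_at.pow 2)).add (h_ax.pow 2)).add
        ((h_a.pow 2).const_mul (m₀ x))
      have heq : (fun τ => e (τ, x)) = fun τ =>
          (((W (τ, x)) ^ 2 + (pdt W (τ, x)) ^ 2) + (pdx W (τ, x)) ^ 2) + m₀ x * (W (τ, x)) ^ 2 := by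
        funext τ; simp only [he]
      rw [heq]
      convert hsum using 1
      · funext τ; simp only [Pi.add_apply, Pi.pow_apply]
      · simp only [hD]; push_cast; ring
  -- boundary vanishing
  have hpdt_bd : ∀ c : ℝ, R ≤ |c| → ∀ t ∈ Icc (0:ℝ) T, pdt W (t, c) = 0 := by
    intro c hc t ht
    rw [← (hasDerivAt_slice_t hWd t c).deriv]
    exact deriv_eq_zero_of_eqOn_zero hT (hasDerivAt_slice_t hWd t c).differentiableAt ht
      (fun s hs => hsupp s hs c hc)
  have hpdx_bd : ∀ c : ℝ, R < |c| → ∀ t ∈ Icc (0:ℝ) T, pdx W (t, c) = 0 := by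
    intro c hc t ht
    rw [← (hasDerivAt_slice_x hWd t c).deriv]
    have hev : (fun y => W (t, y)) =ᶠ[nhds c] fun _ => (0 : ℝ) := by
      have hop : {y : ℝ | R < |y|} ∈ nhds c :=
        (isOpen_lt continuous_const continuous_abs).mem_nhds hc
      filter_upwards [hop] with y hy
      exact hsupp t ht y (le_of_lt hy)
    rw [hev.deriv_eq, deriv_const]
  have hR'abs : R < |R'| := by rw [abs_of_pos (by linarith)]; linarith
  have hR'abs' : R < |-R'| := by rw [abs_neg]; exact hR'abs
  -- Step 2: on [0,T], the space-derivative part integrates to zero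
  have hstep2 : ∀ t ∈ Icc (0:ℝ) T,
      (∫ x in Ioc (-R') R', D (t, x)) =
      ∫ x in Ioc (-R') R', (2 * W (t, x) * pdt W (t, x) + 2 * pdt W (t, x) * g (t, x)) := by
    intro t ht
    set q : ℝ → ℝ := fun y => pdt W (t, y) * pdx W (t, y) with hq
    set q' : ℝ → ℝ := fun y =>
      f2 (t, y) (0, 1) (1, 0) * pdx W (t, y) + pdt W (t, y) * f2 (t, y) (0, 1) (0, 1) with hq'
    have hqd : ∀ y, HasDerivAt q (q' y) y := fun y =>
      (hasDerivAt_pd_slice_x hW (1, 0) t y).mul (hasDerivAt_pd_slice_x hW (0, 1) t y)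
    have hq'c : Continuous q' :=
      ((cy t _ (hf2c (0,1) (1,0))).mul (cy t _ hpdxc)).add
        ((cy t _ hpdtc).mul (cy t _ (hf2c (0,1) (0,1))))
    have hPc : Continuous (fun x => 2 * W (t, x) * pdt W (t, x) + 2 * pdt W (t, x) * g (t, x)) :=
      ((continuous_const.mul (cy t _ hWc)).mul (cy t _ hpdtc)).add
        ((continuous_const.mul (cy t _ hpdtc)).mul (cy t _ hgc))
    have hftc : ∫ y in Ioc (-R') R', q' y = q R' - q (-R') := by
      rw [← intervalIntegral.integral_of_le hRR']
      exact intervalIntegral.integral_eq_sub_of_hasDerivAt (fun y _ => hqd y)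
        (hq'c.intervalIntegrable _ _)
    have hq0 : q R' - q (-R') = 0 := by
      simp only [hq, hpdx_bd R' hR'abs t ht, hpdx_bd (-R') hR'abs' t ht, mul_zero, sub_zero]
    have hDeq : ∀ x : ℝ, D (t, x) =
        (2 * W (t, x) * pdt W (t, x) + 2 * pdt W (t, x) * g (t, x)) + 2 * q' x := by
      intro x
      have hp := hpde t ht x
      have hs := second_partials_symm hW (t, x)
      simp only [hD, hq']
      rw [hp, hs]; ring
    calc (∫ x in Ioc (-R') R', D (t, x))
        = ∫ x in Ioc (-R') R',
            ((2 * W (t, x) * pdt W (t, x) + 2 * pdt W (t, x) * g (t, x)) + 2 * q' x) := by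
          simp only [hDeq]
      _ = (∫ x in Ioc (-R') R', (2 * W (t, x) * pdt W (t, x) + 2 * pdt W (t, x) * g (t, x)))
            + ∫ x in Ioc (-R') R', 2 * q' x := by
          exact integral_add (hint _ hPc) ((hint _ hq'c).const_mul 2)
      _ = _ := by
          rw [MeasureTheory.integral_const_mul, hftc, hq0]
          simp
  -- nonnegativity of the energy
  have hHnn : ∀ t : ℝ, 0 ≤ H t := by
    intro t
    refine setIntegral_nonneg measurableSet_Ioc fun x _ => ?_
    simp only [he]
    have h1 := mul_nonneg (hm₀nn x) (sq_nonneg (W (t, x)))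
    positivity
  -- H 0 = 0
  have hpdx0 : ∀ x : ℝ, pdx W (0, x) = 0 := by
    intro x
    rw [← (hasDerivAt_slice_x hWd 0 x).deriv,
      show (fun y => W (0, y)) = (fun _ => (0 : ℝ)) from funext hW0, deriv_const]
  have he0 : ∀ x : ℝ, e (0, x) = 0 := by
    intro x; simp [he, hW0 x, hWt0 x, hpdx0 x]
  have hH0 : H 0 = 0 := by
    simp only [hHdef, he0, integral_zero]
  -- Grönwall
  have hgron := norm_le_gronwallBound_of_norm_deriv_right_le
    (f := H) (f' := fun t => ∫ x in Ioc (-R') R', D (t, x)) (δ := 0) (K := 2) (ε := G)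
    (a := 0) (b := T)
    (fun t _ => (hH' t).continuousAt.continuousWithinAt)
    (fun t _ => (hH' t).hasDerivWithinAt)
    (by simp [hH0]) ?_
  · intro t ht
    have h1 := hgron t ht
    rw [Real.norm_eq_abs, abs_of_nonneg (hHnn t)] at h1
    have h2 : gronwallBound 0 2 G (t - 0) ≤ G * Real.exp (2 * T) := by
      rw [gronwallBound_of_K_ne_0 two_ne_zero]
      have hexp : Real.exp (2 * (t - 0)) ≤ Real.exp (2 * T) :=
        Real.exp_le_exp.2 (by nlinarith [ht.1, ht.2])
      nlinarith [Real.exp_pos (2 * (t - 0)), Real.exp_pos (2 * T)]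
    have h3 : (∫ x in Ioc (-R') R', (W (t, x)) ^ 2) ≤ H t := by
      have hrest : 0 ≤ ∫ x in Ioc (-R') R',
          ((pdt W (t, x)) ^ 2 + (pdx W (t, x)) ^ 2 + m₀ x * (W (t, x)) ^ 2) := by
        refine setIntegral_nonneg measurableSet_Ioc fun x _ => ?_
        have h1 := mul_nonneg (hm₀nn x) (sq_nonneg (W (t, x)))
        positivity
      have hrestc : Continuous (fun x =>
          (pdt W (t, x)) ^ 2 + (pdx W (t, x)) ^ 2 + m₀ x * (W (t, x)) ^ 2) :=
        (((cy t _ hpdtc).pow 2).add ((cy t _ hpdxc).pow 2)).add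
          (hm₀c.mul ((cy t _ hWc).pow 2))
      have hsplit : H t = (∫ x in Ioc (-R') R', (W (t, x)) ^ 2)
          + ∫ x in Ioc (-R') R',
            ((pdt W (t, x)) ^ 2 + (pdx W (t, x)) ^ 2 + m₀ x * (W (t, x)) ^ 2) := by
        have hfe : (fun x => e (t, x)) = fun x => (W (t, x)) ^ 2 +
            ((pdt W (t, x)) ^ 2 + (pdx W (t, x)) ^ 2 + m₀ x * (W (t, x)) ^ 2) := by
          funext x; simp only [he]; ring
        show (∫ x in Ioc (-R') R', e (t, x)) = _
        rw [hfe, integral_add (f := fun x => W (t, x) ^ 2) (hint _ ((cy t _ hWc).pow 2)) (hint _ hrestc)]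
      linarith
    linarith
  · -- the differential inequality
    intro t ht
    have ht' : t ∈ Icc (0 : ℝ) T := Ico_subset_Icc_self ht
    show ‖∫ x in Ioc (-R') R', D (t, x)‖ ≤ 2 * ‖H t‖ + G
    rw [hstep2 t ht', Real.norm_eq_abs, Real.norm_eq_abs, abs_of_nonneg (hHnn t)]
    set P : ℝ → ℝ := fun x => 2 * W (t, x) * pdt W (t, x) + 2 * pdt W (t, x) * g (t, x) with hP
    have hPc : Continuous P :=
      ((continuous_const.mul (cy t _ hWc)).mul (cy t _ hpdtc)).add
        ((continuous_const.mul (cy t _ hpdtc)).mul (cy t _ hgc))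
    have habs : |∫ x in Ioc (-R') R', P x| ≤ ∫ x in Ioc (-R') R', |P x| := by
      simpa [Real.norm_eq_abs] using
        norm_integral_le_integral_norm (μ := volume.restrict (Ioc (-R') R')) P
    have hptwise : ∀ x : ℝ, |P x| ≤ 2 * e (t, x) + (g (t, x)) ^ 2 := by
      intro x
      simp only [hP, he]
      rw [abs_le]
      constructor <;>
        nlinarith [sq_nonneg (W (t, x) + pdt W (t, x)), sq_nonneg (W (t, x) - pdt W (t, x)),
          sq_nonneg (pdt W (t, x) + g (t, x)), sq_nonneg (pdt W (t, x) - g (t, x)),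
          sq_nonneg (pdx W (t, x)), mul_nonneg (hm₀nn x) (sq_nonneg (W (t, x)))]
    have hmono : (∫ x in Ioc (-R') R', |P x|) ≤
        ∫ x in Ioc (-R') R', (2 * e (t, x) + (g (t, x)) ^ 2) := by
      refine setIntegral_mono_on (hint _ hPc.abs) ?_ measurableSet_Ioc fun x _ => hptwise x
      exact ((hint _ (cy t _ hec)).const_mul 2).add (hint _ ((cy t _ hgc).pow 2))
    have hsplit : (∫ x in Ioc (-R') R', (2 * e (t, x) + (g (t, x)) ^ 2)) =
        2 * H t + ∫ x in Ioc (-R') R', (g (t, x)) ^ 2 := by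
      rw [integral_add (g := fun x => g (t, x) ^ 2) ((hint _ (cy t _ hec)).const_mul 2) (hint _ ((cy t _ hgc).pow 2)),
        MeasureTheory.integral_const_mul, hHdef]
    have hg2 := hGb t ht'
    calc |∫ x in Ioc (-R') R', P x| ≤ ∫ x in Ioc (-R') R', |P x| := habs
      _ ≤ 2 * H t + ∫ x in Ioc (-R') R', (g (t, x)) ^ 2 := by rw [← hsplit]; exact hmono
      _ ≤ 2 * H t + G := by linarith

end


end Helpers


set_option maxHeartbeats 2000000 in
/-- Uniqueness of very weak solutions (case `α = 1`, `d = 1`): if the nets of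
regularised potentials differ by a negligible net and the solution net `ũ_ε`
is moderate, then the solution nets differ by a negligible net. -/
theorem very_weak_solution_uniqueness
    (T : ℝ) (hT : 0 < T) (N₀ : ℕ) (c : ℝ) (hc : 0 < c)
    (m m' : ℝ → ℝ → ℝ) (u u' : ℝ → ℝ → ℝ → ℝ)
    (hreg : ∀ ε ∈ Set.Ioc (0 : ℝ) 1,
      (Continuous (m ε) ∧ (∃ M, ∀ x, |m ε x| ≤ M) ∧ ∀ x, 0 ≤ m ε x) ∧
      (Continuous (m' ε) ∧ (∃ M, ∀ x, |m' ε x| ≤ M) ∧ ∀ x, 0 ≤ m' ε x))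
    (hu : ∀ ε ∈ Set.Ioc (0 : ℝ) 1, IsClassicalSolution T (m ε) (fun _ _ => 0) (u ε))
    (hu' : ∀ ε ∈ Set.Ioc (0 : ℝ) 1, IsClassicalSolution T (m' ε) (fun _ _ => 0) (u' ε))
    (hdata : ∀ ε ∈ Set.Ioc (0 : ℝ) 1, ∀ x : ℝ,
      u ε 0 x = u' ε 0 x ∧
      deriv (fun τ => u ε τ x) 0 = deriv (fun τ => u' ε τ x) 0)
    (hneg : ∀ k : ℕ, ∃ Ck > (0 : ℝ), ∀ ε ∈ Set.Ioc (0 : ℝ) 1,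
      ∀ x : ℝ, |m ε x - m' ε x| ≤ Ck * ε ^ k)
    (hmod : ∀ ε ∈ Set.Ioc (0 : ℝ) 1, ∀ t ∈ Set.Icc (0 : ℝ) T,
      Real.sqrt (∫ x : ℝ, (u' ε t x) ^ 2) ≤ c * (ε ^ N₀)⁻¹) :
    ∀ N : ℕ, ∃ CN > (0 : ℝ), ∀ ε ∈ Set.Ioc (0 : ℝ) 1, ∀ t ∈ Set.Icc (0 : ℝ) T,
      Real.sqrt (∫ x : ℝ, (u ε t x - u' ε t x) ^ 2) ≤ CN * ε ^ N := by
  intro N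
  obtain ⟨Ck, hCkpos, hCkb⟩ := hneg (N + N₀)
  refine ⟨Ck * c * Real.sqrt (Real.exp (2 * T)), by positivity, ?_⟩
  intro ε hε t ht
  have hε0 : 0 < ε := hε.1
  obtain ⟨hUc2, ⟨R₁, hR₁, hUsupp⟩, hUpde⟩ := hu ε hε
  obtain ⟨hU'c2, ⟨R₂, hR₂, hU'supp⟩, hU'pde⟩ := hu' ε hε
  obtain ⟨⟨hmc, _, hmnn⟩, ⟨hm'c, _, _⟩⟩ := hreg ε hε
  set U : ℝ × ℝ → ℝ := fun p => u ε p.1 p.2 with hUdef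
  set U' : ℝ × ℝ → ℝ := fun p => u' ε p.1 p.2 with hU'def
  set W : ℝ × ℝ → ℝ := fun p => U p - U' p with hWdef
  have hWc2 : ContDiff ℝ 2 W := hUc2.sub hU'c2
  have hUd : Differentiable ℝ U := hUc2.differentiable (by norm_num)
  have hU'd : Differentiable ℝ U' := hU'c2.differentiable (by norm_num)
  set R : ℝ := max R₁ R₂ with hRdef
  have hRpos : 0 < R := lt_of_lt_of_le hR₁ le_sup_left
  set g : ℝ × ℝ → ℝ := fun p => (m' ε p.2 - m ε p.2) * u' ε p.1 p.2 with hgdef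
  have hgc : Continuous g :=
    ((hm'c.comp continuous_snd).sub (hmc.comp continuous_snd)).mul hU'c2.continuous
  have hsupp : ∀ s ∈ Set.Icc (0:ℝ) T, ∀ x : ℝ, R ≤ |x| → W (s, x) = 0 := by
    intro s hs x hx
    have h1 : u ε s x = 0 := hUsupp s hs x (le_trans le_sup_left hx)
    have h2 : u' ε s x = 0 := hU'supp s hs x (le_trans le_sup_right hx)
    simp [hWdef, hUdef, hU'def, h1, h2]
  -- PDE for W
  have hpdeW : ∀ s ∈ Set.Icc (0:ℝ) T, ∀ x : ℝ,
      fderiv ℝ (fderiv ℝ W) (s, x) (1, 0) (1, 0) =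
        fderiv ℝ (fderiv ℝ W) (s, x) (0, 1) (0, 1) - m ε x * W (s, x) + g (s, x) := by
    intro s hs x
    have hU2 : fderiv ℝ (fderiv ℝ U) (s, x) (1, 0) (1, 0) =
        fderiv ℝ (fderiv ℝ U) (s, x) (0, 1) (0, 1) - m ε x * U (s, x) + 0 := by
      rw [← iteratedDeriv_two_slice_t hUc2 s x, ← iteratedDeriv_two_slice_x hUc2 s x]
      exact hUpde s hs x
    have hU'2 : fderiv ℝ (fderiv ℝ U') (s, x) (1, 0) (1, 0) =
        fderiv ℝ (fderiv ℝ U') (s, x) (0, 1) (0, 1) - m' ε x * U' (s, x) + 0 := by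
      rw [← iteratedDeriv_two_slice_t hU'c2 s x, ← iteratedDeriv_two_slice_x hU'c2 s x]
      exact hU'pde s hs x
    have hsub1 := f2_sub hUc2 hU'c2 (s, x) (1, 0) (1, 0)
    have hsub2 := f2_sub hUc2 hU'c2 (s, x) (0, 1) (0, 1)
    rw [hWdef] at *
    rw [hsub1, hsub2, hU2, hU'2]
    simp only [hgdef, hUdef, hU'def]
    ring
  have hW0 : ∀ x : ℝ, W (0, x) = 0 := by
    intro x
    have := (hdata ε hε x).1
    simp [hWdef, hUdef, hU'def, this]
  have hWt0 : ∀ x : ℝ, pdt W (0, x) = 0 := by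
    intro x
    have h1 : deriv (fun τ => u ε τ x) 0 = pdt U (0, x) :=
      (hasDerivAt_slice_t hUd 0 x).deriv
    have h2 : deriv (fun τ => u' ε τ x) 0 = pdt U' (0, x) :=
      (hasDerivAt_slice_t hU'd 0 x).deriv
    have h3 := (hdata ε hε x).2
    rw [h1, h2] at h3
    rw [hWdef, pdt_sub hUc2 hU'c2, h3, sub_self]
  -- the source bound
  set B : ℝ := Ck * ε ^ (N + N₀) with hBdef
  have hBpos : 0 < B := by positivity
  set G : ℝ := B ^ 2 * (c * (ε ^ N₀)⁻¹) ^ 2 with hGdef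
  have hG0 : 0 ≤ G := by positivity
  have hu'L2 : ∀ s ∈ Set.Icc (0:ℝ) T, (∫ x : ℝ, (u' ε s x) ^ 2) ≤ (c * (ε ^ N₀)⁻¹) ^ 2 := by
    intro s hs
    have hnn : 0 ≤ ∫ x : ℝ, (u' ε s x) ^ 2 := integral_nonneg fun x => sq_nonneg _
    calc (∫ x : ℝ, (u' ε s x) ^ 2)
        = (Real.sqrt (∫ x : ℝ, (u' ε s x) ^ 2)) ^ 2 := (Real.sq_sqrt hnn).symm
      _ ≤ (c * (ε ^ N₀)⁻¹) ^ 2 := pow_le_pow_left₀ (Real.sqrt_nonneg _) (hmod ε hε s hs) 2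
  have hGb : ∀ s ∈ Set.Icc (0:ℝ) T,
      (∫ x in Set.Ioc (-(R+1)) (R+1), (g (s, x)) ^ 2) ≤ G := by
    intro s hs
    have hcy : Continuous fun x => g (s, x) :=
      hgc.comp (continuous_const.prodMk continuous_id)
    have hu'c : Continuous fun x => u' ε s x :=
      hU'c2.continuous.comp (continuous_const.prodMk continuous_id)
    have hpt : ∀ x : ℝ, (g (s, x)) ^ 2 ≤ B ^ 2 * (u' ε s x) ^ 2 := by
      intro x
      have h1 := hCkb ε hε x
      have h2 : (m' ε x - m ε x) ^ 2 ≤ B ^ 2 := by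
        rw [hBdef]
        nlinarith [abs_nonneg (m ε x - m' ε x), sq_abs (m ε x - m' ε x),
          neg_abs_le (m ε x - m' ε x), le_abs_self (m ε x - m' ε x)]
      calc (g (s, x)) ^ 2 = (m' ε x - m ε x) ^ 2 * (u' ε s x) ^ 2 := by
            simp only [hgdef]; ring
        _ ≤ B ^ 2 * (u' ε s x) ^ 2 := mul_le_mul_of_nonneg_right h2 (sq_nonneg _)
    have hu'int : Integrable (fun x => (u' ε s x) ^ 2) volume := by
      refine (hu'c.pow 2).integrable_of_hasCompactSupport ?_
      refine HasCompactSupport.intro (isCompact_Icc (a := -R₂) (b := R₂)) fun x hx => ?_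
      have habs : R₂ ≤ |x| := by
        rcases not_and_or.1 hx with h | h
        · push_neg at h; rw [abs_of_nonpos (by linarith)]; linarith
        · push_neg at h; rw [abs_of_nonneg (by linarith)]; linarith
      simp [hU'supp s hs x habs]
    calc (∫ x in Set.Ioc (-(R+1)) (R+1), (g (s, x)) ^ 2)
        ≤ ∫ x in Set.Ioc (-(R+1)) (R+1), B ^ 2 * (u' ε s x) ^ 2 :=
          setIntegral_mono_on (hcy.pow 2).integrableOn_Ioc
            ((continuous_const.mul (hu'c.pow 2)).integrableOn_Ioc) measurableSet_Ioc
            fun x _ => hpt x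
      _ = B ^ 2 * ∫ x in Set.Ioc (-(R+1)) (R+1), (u' ε s x) ^ 2 :=
          MeasureTheory.integral_const_mul _ _
      _ ≤ B ^ 2 * ∫ x : ℝ, (u' ε s x) ^ 2 := by
          refine mul_le_mul_of_nonneg_left ?_ (sq_nonneg B)
          exact setIntegral_le_integral hu'int
            (Filter.Eventually.of_forall fun x => sq_nonneg _)
      _ ≤ B ^ 2 * (c * (ε ^ N₀)⁻¹) ^ 2 :=
          mul_le_mul_of_nonneg_left (hu'L2 s hs) (sq_nonneg B)
      _ = G := rfl
  -- apply the energy estimate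
  have hEE := energy_estimate T hT (m ε) hmc hmnn g hWc2 hgc R hRpos hsupp hpdeW hW0 hWt0
    G hG0 hGb t ht
  have hEE' : (∫ x in Set.Ioc (-(R+1)) (R+1), (u ε t x - u' ε t x) ^ 2) ≤
      G * Real.exp (2 * T) := hEE
  have hset : (∫ x : ℝ, (u ε t x - u' ε t x) ^ 2) =
      ∫ x in Set.Ioc (-(R+1)) (R+1), (u ε t x - u' ε t x) ^ 2 := by
    refine (setIntegral_eq_integral_of_forall_compl_eq_zero fun x hx => ?_).symm
    have habs : R ≤ |x| := by
      rcases not_and_or.1 hx with h | h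
      · push_neg at h; rw [abs_of_nonpos (by linarith)]; linarith
      · push_neg at h; rw [abs_of_nonneg (by linarith)]; linarith
    have h1 : u ε t x = 0 := hUsupp t ht x (le_trans le_sup_left habs)
    have h2 : u' ε t x = 0 := hU'supp t ht x (le_trans le_sup_right habs)
    simp [h1, h2]
  calc Real.sqrt (∫ x : ℝ, (u ε t x - u' ε t x) ^ 2)
      = Real.sqrt (∫ x in Set.Ioc (-(R+1)) (R+1), (u ε t x - u' ε t x) ^ 2) := by rw [hset]
    _ ≤ Real.sqrt (G * Real.exp (2 * T)) := Real.sqrt_le_sqrt hEE'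
    _ = (B * (c * (ε ^ N₀)⁻¹)) * Real.sqrt (Real.exp (2 * T)) := by
        rw [hGdef, show B ^ 2 * (c * (ε ^ N₀)⁻¹) ^ 2 * Real.exp (2 * T) =
            (B * (c * (ε ^ N₀)⁻¹)) ^ 2 * Real.exp (2 * T) by ring,
          Real.sqrt_mul (sq_nonneg _), Real.sqrt_sq (by positivity)]
    _ = Ck * c * Real.sqrt (Real.exp (2 * T)) * ε ^ N := by
        rw [hBdef, pow_add]
        have hne : (ε : ℝ) ^ N₀ ≠ 0 := pow_ne_zero _ hε0.ne'
        field_simp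
end

section
/- Let T > 0, let m : ℝ → ℝ be bounded, uniformly continuous and non-negative, let ψ be a Friedrichs mollifier on ℝ, and set m_ε := m * ψ_ε for ε ∈ (0, 1]. Let u be a classical solution on [0, T] of the wave equation with potential m and source f = 0 with sup_{s ∈ [0, T]} ‖u(s, ·)‖_{L²(ℝ)} < ∞, and for each ε ∈ (0, 1] let u_ε be a classical solution on [0, T] of the wave equation with potential m_ε and source f = 0, with u_ε(0, ·) = u(0, ·) and ∂_t u_ε(0, ·) = ∂_t u(0, ·). Then sup_{t ∈ [0, T]} ‖u_ε(t, ·) − u(t, ·)‖_{L²(ℝ)} → 0 as ε → 0⁺. -/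
open MeasureTheory

/-- A Friedrichs mollifier on `ℝ`: `ψ ∈ C_c^∞(ℝ)`, `ψ ≥ 0`, `∫ ψ = 1`. -/
def IsFriedrichsMollifier (ψ : ℝ → ℝ) : Prop :=
  ContDiff ℝ (⊤ : ℕ∞) ψ ∧ HasCompactSupport ψ ∧ (∀ x, 0 ≤ ψ x) ∧ (∫ x, ψ x) = 1

noncomputable def pd1 (V : ℝ × ℝ → ℝ) : ℝ × ℝ → ℝ := fun p => fderiv ℝ V p (1, 0)
noncomputable def pd2 (V : ℝ × ℝ → ℝ) : ℝ × ℝ → ℝ := fun p => fderiv ℝ V p (0, 1)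

lemma hasDerivAt_slice1 {V : ℝ × ℝ → ℝ} (hV : Differentiable ℝ V) (t x : ℝ) :
    HasDerivAt (fun τ => V (τ, x)) (pd1 V (t, x)) t := by
  have h1 : HasDerivAt (fun τ : ℝ => (τ, x)) ((1:ℝ), (0:ℝ)) t :=
    (hasDerivAt_id t).prodMk (hasDerivAt_const t x)
  exact (hV (t, x)).hasFDerivAt.comp_hasDerivAt t h1

lemma hasDerivAt_slice2 {V : ℝ × ℝ → ℝ} (hV : Differentiable ℝ V) (t x : ℝ) :
    HasDerivAt (fun y => V (t, y)) (pd2 V (t, x)) x := by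
  have h1 : HasDerivAt (fun y : ℝ => (t, y)) ((0:ℝ), (1:ℝ)) x :=
    (hasDerivAt_const x t).prodMk (hasDerivAt_id x)
  exact (hV (t, x)).hasFDerivAt.comp_hasDerivAt x h1

lemma pd1_contDiff {V : ℝ × ℝ → ℝ} {n : ℕ∞} (hV : ContDiff ℝ (n + 1) V) :
    ContDiff ℝ n (pd1 V) := (hV.fderiv_right le_rfl).clm_apply contDiff_const

lemma pd2_contDiff {V : ℝ × ℝ → ℝ} {n : ℕ∞} (hV : ContDiff ℝ (n + 1) V) :
    ContDiff ℝ n (pd2 V) := (hV.fderiv_right le_rfl).clm_apply contDiff_const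

lemma iteratedDeriv_two_slice1 {V : ℝ × ℝ → ℝ} (hV : ContDiff ℝ 2 V) (t x : ℝ) :
    iteratedDeriv 2 (fun τ => V (τ, x)) t = pd1 (pd1 V) (t, x) := by
  have hVd : Differentiable ℝ V := hV.differentiable (by norm_num)
  have h1 : ContDiff ℝ 1 (pd1 V) := pd1_contDiff (by norm_num; exact hV : ContDiff ℝ ((1:ℕ∞)+1) V)
  rw [iteratedDeriv_succ, iteratedDeriv_one]
  have h2 : deriv (fun τ => V (τ, x)) = fun τ => pd1 V (τ, x) :=
    funext fun τ => (hasDerivAt_slice1 hVd τ x).deriv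
  rw [h2]
  exact (hasDerivAt_slice1 (h1.differentiable one_ne_zero) t x).deriv

lemma iteratedDeriv_two_slice2 {V : ℝ × ℝ → ℝ} (hV : ContDiff ℝ 2 V) (t x : ℝ) :
    iteratedDeriv 2 (fun y => V (t, y)) x = pd2 (pd2 V) (t, x) := by
  have hVd : Differentiable ℝ V := hV.differentiable (by norm_num)
  have h1 : ContDiff ℝ 1 (pd2 V) := pd2_contDiff (by norm_num; exact hV : ContDiff ℝ ((1:ℕ∞)+1) V)
  rw [iteratedDeriv_succ, iteratedDeriv_one]
  have h2 : deriv (fun y => V (t, y)) = fun y => pd2 V (t, y) :=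
    funext fun y => (hasDerivAt_slice2 hVd t y).deriv
  rw [h2]
  exact (hasDerivAt_slice2 (h1.differentiable one_ne_zero) t x).deriv

lemma pd_comm {V : ℝ × ℝ → ℝ} (hV : ContDiff ℝ 2 V) (p : ℝ × ℝ) :
    pd2 (pd1 V) p = pd1 (pd2 V) p := by
  have hVd : Differentiable ℝ V := hV.differentiable (by norm_num)
  have hf1 : ContDiff ℝ 1 (fderiv ℝ V) := hV.fderiv_right (by norm_num)
  have hx : HasFDerivAt (fderiv ℝ V) (fderiv ℝ (fderiv ℝ V) p) p :=
    (hf1.differentiable one_ne_zero p).hasFDerivAt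
  have hsymm := second_derivative_symmetric (fun y => (hVd y).hasFDerivAt) hx
  have e1 : HasFDerivAt (pd1 V)
      ((ContinuousLinearMap.apply ℝ ℝ ((1:ℝ), (0:ℝ))).comp (fderiv ℝ (fderiv ℝ V) p)) p :=
    (ContinuousLinearMap.apply ℝ ℝ ((1:ℝ), (0:ℝ))).hasFDerivAt.comp p hx
  have e2 : HasFDerivAt (pd2 V)
      ((ContinuousLinearMap.apply ℝ ℝ ((0:ℝ), (1:ℝ))).comp (fderiv ℝ (fderiv ℝ V) p)) p :=
    (ContinuousLinearMap.apply ℝ ℝ ((0:ℝ), (1:ℝ))).hasFDerivAt.comp p hx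
  show fderiv ℝ (pd1 V) p (0, 1) = fderiv ℝ (pd2 V) p (1, 0)
  rw [e1.fderiv, e2.fderiv]
  simpa using hsymm (0, 1) (1, 0)

lemma integral_deriv_eq_zero_of_support {h h' : ℝ → ℝ} {R : ℝ} (hR : 0 < R)
    (hd : ∀ x, HasDerivAt h (h' x) x) (hc : Continuous h')
    (hsup : ∀ x, R ≤ |x| → h x = 0) : ∫ x : ℝ, h' x = 0 := by
  have hzero : ∀ x, x ∉ Set.Icc (-R) R → h' x = 0 := by
    intro x hx
    have hlt : R < |x| := by
      rcases lt_or_ge x (-R) with h1 | h1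
      · rw [abs_of_neg (by linarith)]; linarith
      · rcases lt_or_ge R x with h2 | h2
        · rw [abs_of_pos (by linarith)]; exact h2
        · exact absurd (Set.mem_Icc.2 ⟨h1, h2⟩) hx
    have hopen : IsOpen {y : ℝ | R < |y|} := isOpen_lt continuous_const continuous_abs
    have hev : h =ᶠ[nhds x] (fun _ => (0:ℝ)) :=
      Filter.eventuallyEq_iff_exists_mem.2 ⟨_, hopen.mem_nhds hlt, fun y hy => hsup y (le_of_lt hy)⟩
    have : deriv h x = 0 := by rw [hev.deriv_eq]; simp
    rw [← (hd x).deriv, this]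
  rw [← MeasureTheory.setIntegral_eq_integral_of_forall_compl_eq_zero hzero,
    MeasureTheory.integral_Icc_eq_integral_Ioc,
    ← intervalIntegral.integral_of_le (by linarith : -R ≤ R),
    intervalIntegral.integral_eq_sub_of_hasDerivAt (fun x _ => hd x)
      ((hc.intervalIntegrable _ _))]
  rw [hsup R (by rw [abs_of_pos hR]), hsup (-R) (by rw [abs_neg, abs_of_pos hR]), sub_zero]

lemma abs_gt_of_not_mem_Icc {R x : ℝ} (hx : x ∉ Set.Icc (-R) R) : R < |x| := by
  rcases lt_or_ge x (-R) with h1 | h1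
  · nlinarith [neg_le_abs x]
  · rcases lt_or_ge R x with h2 | h2
    · nlinarith [le_abs_self x]
    · exact absurd (Set.mem_Icc.2 ⟨h1, h2⟩) hx

noncomputable def Pen (W : ℝ × ℝ → ℝ) (p : ℝ × ℝ) : ℝ :=
  W p ^ 2 + pd1 W p ^ 2 + pd2 W p ^ 2

noncomputable def Pen' (W : ℝ × ℝ → ℝ) (p : ℝ × ℝ) : ℝ :=
  2 * W p * pd1 W p + 2 * pd1 W p * pd1 (pd1 W) p + 2 * pd2 W p * pd1 (pd2 W) p

lemma energy_estimate_s17 (T R M B : ℝ) (hT : 0 < T) (hR : 0 < R) (hB : 0 ≤ B)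
    (q : ℝ → ℝ) (hq : Continuous q) (hqM : ∀ x, |q x| ≤ M)
    (W : ℝ × ℝ → ℝ) (hW : ContDiff ℝ 2 W)
    (g : ℝ × ℝ → ℝ) (hg : Continuous g)
    (hsupp : ∀ t ∈ Set.Icc (0:ℝ) T, ∀ x : ℝ, R ≤ |x| → W (t, x) = 0)
    (hgsupp : ∀ t ∈ Set.Icc (0:ℝ) T, ∀ x : ℝ, R ≤ |x| → g (t, x) = 0)
    (hpde : ∀ t ∈ Set.Icc (0:ℝ) T, ∀ x : ℝ,
      pd1 (pd1 W) (t, x) = pd2 (pd2 W) (t, x) - q x * W (t, x) + g (t, x))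
    (hgbd : ∀ t ∈ Set.Icc (0:ℝ) T, (∫ x : ℝ, (g (t, x)) ^ 2) ≤ B)
    (h0 : ∀ x, W (0, x) = 0) (h0' : ∀ x, pd1 W (0, x) = 0) :
    ∀ t ∈ Set.Icc (0:ℝ) T, (∫ x : ℝ, (W (t, x)) ^ 2) ≤ B * Real.exp ((2 + M) * T) := by
  have hM0 : 0 ≤ M := (abs_nonneg _).trans (hqM 0)
  have hWd : Differentiable ℝ W := hW.differentiable (by norm_num)
  have hW1 : ContDiff ℝ 1 (pd1 W) := pd1_contDiff (by norm_num; exact hW : ContDiff ℝ ((1:ℕ∞)+1) W)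
  have hW2 : ContDiff ℝ 1 (pd2 W) := pd2_contDiff (by norm_num; exact hW : ContDiff ℝ ((1:ℕ∞)+1) W)
  have hW1d : Differentiable ℝ (pd1 W) := hW1.differentiable one_ne_zero
  have hW2d : Differentiable ℝ (pd2 W) := hW2.differentiable one_ne_zero
  have cW : Continuous W := hW.continuous
  have c1 : Continuous (pd1 W) := hW1.continuous
  have c2 : Continuous (pd2 W) := hW2.continuous
  have c11 : Continuous (pd1 (pd1 W)) :=
    (pd1_contDiff (by norm_num; exact hW1 : ContDiff ℝ ((0:ℕ∞)+1) (pd1 W))).continuous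
  have c12 : Continuous (pd1 (pd2 W)) :=
    (pd1_contDiff (by norm_num; exact hW2 : ContDiff ℝ ((0:ℕ∞)+1) (pd2 W))).continuous
  have c22 : Continuous (pd2 (pd2 W)) :=
    (pd2_contDiff (by norm_num; exact hW2 : ContDiff ℝ ((0:ℕ∞)+1) (pd2 W))).continuous
  have hPc : Continuous (Pen W) := by
    unfold Pen; exact ((cW.pow 2).add (c1.pow 2)).add (c2.pow 2)
  have hP'c : Continuous (Pen' W) := by
    unfold Pen'
    exact (((continuous_const.mul cW).mul c1).add
      ((continuous_const.mul c1).mul c11)).add ((continuous_const.mul c2).mul c12)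
  -- time-derivative of the energy density, pointwise
  have hPd : ∀ t x : ℝ, HasDerivAt (fun τ => Pen W (τ, x)) (Pen' W (t, x)) t := by
    intro t x
    have a1 := hasDerivAt_slice1 hWd t x
    have a2 := hasDerivAt_slice1 hW1d t x
    have a3 := hasDerivAt_slice1 hW2d t x
    have h := ((a1.pow 2).add (a2.pow 2)).add (a3.pow 2)
    have : Pen' W (t, x) = (↑2 * W (t,x) ^ (2-1) * pd1 W (t,x) + ↑2 * pd1 W (t,x) ^ (2-1) * pd1 (pd1 W) (t,x)) + ↑2 * pd2 W (t,x) ^ (2-1) * pd1 (pd2 W) (t,x) := by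
      unfold Pen'; push_cast; ring
    rw [this]
    exact h
  -- vanishing of first partials outside the support, within the time interval
  have hWt0 : ∀ t ∈ Set.Icc (0:ℝ) T, ∀ x : ℝ, R < |x| → pd1 W (t, x) = 0 := by
    intro t ht x hx
    have hUD : UniqueDiffWithinAt ℝ (Set.Icc (0:ℝ) T) t := (uniqueDiffOn_Icc hT) t ht
    have h1 : HasDerivWithinAt (fun τ => W (τ, x)) (pd1 W (t, x)) (Set.Icc 0 T) t :=
      (hasDerivAt_slice1 hWd t x).hasDerivWithinAt
    have hzero : HasDerivWithinAt (fun τ => W (τ, x)) 0 (Set.Icc (0:ℝ) T) t := by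
      refine (hasDerivWithinAt_const t _ (0:ℝ)).congr (fun y hy => ?_) ?_
      · exact hsupp y hy x hx.le
      · exact hsupp t ht x hx.le
    rw [← h1.derivWithin hUD, hzero.derivWithin hUD]
  have hWx0 : ∀ t : ℝ, ∀ x : ℝ, (∀ y, R < |y| → W (t, y) = 0) → R < |x| → pd2 W (t, x) = 0 := by
    intro t x hty hx
    have hopen : IsOpen {y : ℝ | R < |y|} := isOpen_lt continuous_const continuous_abs
    have hev : (fun y => W (t, y)) =ᶠ[nhds x] (fun _ => (0:ℝ)) :=
      Filter.eventuallyEq_iff_exists_mem.2 ⟨_, hopen.mem_nhds hx, fun y hy => hty y hy⟩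
    rw [← (hasDerivAt_slice2 hWd t x).deriv, hev.deriv_eq]; simp
  have hWx0' : ∀ t ∈ Set.Icc (0:ℝ) T, ∀ x : ℝ, R < |x| → pd2 W (t, x) = 0 := by
    intro t ht x hx
    exact hWx0 t x (fun y hy => hsupp t ht y hy.le) hx
  have hP0 : ∀ t ∈ Set.Icc (0:ℝ) T, ∀ x : ℝ, R < |x| → Pen W (t, x) = 0 := by
    intro t ht x hx
    unfold Pen
    rw [hsupp t ht x hx.le, hWt0 t ht x hx, hWx0' t ht x hx]; ring
  have hP'0 : ∀ t ∈ Set.Icc (0:ℝ) T, ∀ x : ℝ, R < |x| → Pen' W (t, x) = 0 := by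
    intro t ht x hx
    unfold Pen'
    rw [hsupp t ht x hx.le, hWt0 t ht x hx, hWx0' t ht x hx]; ring
  -- integrability of the energy density
  have hPint : ∀ t ∈ Set.Icc (0:ℝ) T, Integrable (fun x => Pen W (t, x)) := by
    intro t ht
    refine (hPc.comp (continuous_const.prodMk continuous_id)).integrable_of_hasCompactSupport
      (HasCompactSupport.intro (isCompact_Icc (a := -R) (b := R)) fun x hx => ?_)
    exact hP0 t ht x (abs_gt_of_not_mem_Icc hx)
  set Φ : ℝ → ℝ := fun t => ∫ x : ℝ, Pen W (t, x) with hΦdef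
  have hΦ0 : Φ 0 = 0 := by
    have hz : ∀ x : ℝ, Pen W (0, x) = 0 := by
      intro x
      have hx2 : pd2 W (0, x) = 0 := by
        have : (fun y => W (0, y)) = fun _ => (0:ℝ) := funext h0
        rw [← (hasDerivAt_slice2 hWd 0 x).deriv, this]; simp
      unfold Pen; rw [h0 x, h0' x, hx2]; ring
    simp only [hΦdef]
    rw [show (fun x : ℝ => Pen W (0, x)) = fun _ => (0:ℝ) from funext hz]
    simp
  -- continuity of the energy
  obtain ⟨C0, hC0⟩ := ((isCompact_Icc (a := (0:ℝ)) (b := T)).prod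
    (isCompact_Icc (a := -R) (b := R))).exists_bound_of_continuousOn hPc.continuousOn
  have hboundint : Integrable (Set.indicator (Set.Icc (-R) R) fun _ : ℝ => C0) := by
    exact (integrableOn_const measure_Icc_lt_top.ne).integrable_indicator
      measurableSet_Icc
  have hΦcont : ContinuousOn Φ (Set.Icc 0 T) := by
    intro t ht
    refine tendsto_integral_filter_of_dominated_convergence
      (Set.indicator (Set.Icc (-R) R) fun _ => C0) ?_ ?_ hboundint ?_
    · exact Filter.Eventually.of_forall fun s =>
        ((hPc.comp (continuous_const.prodMk continuous_id)).aestronglyMeasurable)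
    · filter_upwards [eventually_mem_nhdsWithin] with s hs
      refine Filter.Eventually.of_forall fun x => ?_
      by_cases hx : x ∈ Set.Icc (-R) R
      · rw [Set.indicator_of_mem hx]
        exact hC0 (s, x) (Set.mk_mem_prod hs hx)
      · rw [Set.indicator_of_notMem hx, hP0 s hs x (abs_gt_of_not_mem_Icc hx)]
        simp
    · refine Filter.Eventually.of_forall fun x => ?_
      exact ((hPc.comp (continuous_id.prodMk continuous_const)).tendsto t).mono_left
        nhdsWithin_le_nhds
  -- derivative of the energy in the interior
  have hΦderiv : ∀ t ∈ Set.Ioo (0:ℝ) T,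
      HasDerivAt Φ (∫ x : ℝ, Pen' W (t, x)) t := by
    intro t ht
    have hr : 0 < min t (T - t) / 2 := by
      have h1 : 0 < t := ht.1
      have h2 : 0 < T - t := by linarith [ht.2]
      positivity
    set r := min t (T - t) / 2 with hrdef
    have hball : ∀ s ∈ Metric.ball t r, s ∈ Set.Ioo (0:ℝ) T ∧ s ∈ Set.Icc (t - r) (t + r) := by
      intro s hs
      rw [Metric.mem_ball, Real.dist_eq] at hs
      have h1 := abs_lt.1 hs
      have hm1 : r ≤ t / 2 := by
        rw [hrdef]; nlinarith [min_le_left t (T - t)]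
      have hm2 : r ≤ (T - t) / 2 := by
        rw [hrdef]; nlinarith [min_le_right t (T - t)]
      constructor
      · constructor <;> nlinarith [ht.1, ht.2]
      · constructor <;> linarith
    obtain ⟨C1, hC1⟩ := ((isCompact_Icc (a := t - r) (b := t + r)).prod
      (isCompact_Icc (a := -R) (b := R))).exists_bound_of_continuousOn hP'c.continuousOn
    have hbint : Integrable (Set.indicator (Set.Icc (-R) R) fun _ : ℝ => C1) :=
      (integrableOn_const measure_Icc_lt_top.ne).integrable_indicator measurableSet_Icc
    have key := hasDerivAt_integral_of_dominated_loc_of_deriv_le (Metric.ball_mem_nhds t hr)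
      (F := fun s x => Pen W (s, x)) (F' := fun s x => Pen' W (s, x))
      (bound := Set.indicator (Set.Icc (-R) R) fun _ : ℝ => C1)
      (Filter.Eventually.of_forall fun s =>
        (hPc.comp (continuous_const.prodMk continuous_id)).aestronglyMeasurable)
      (hPint t (Set.Ioo_subset_Icc_self ht))
      ((hP'c.comp (continuous_const.prodMk continuous_id)).aestronglyMeasurable)
      (Filter.Eventually.of_forall fun x => ?_) hbint
      (Filter.Eventually.of_forall fun x s _ => hPd s x)
    · exact key.2
    · intro s hs
      by_cases hx : x ∈ Set.Icc (-R) R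
      · rw [Set.indicator_of_mem hx]
        exact hC1 (s, x) (Set.mk_mem_prod (hball s hs).2 hx)
      · rw [Set.indicator_of_notMem hx]
        show ‖Pen' W (s, x)‖ ≤ 0
        rw [hP'0 s (Set.Ioo_subset_Icc_self (hball s hs).1) x (abs_gt_of_not_mem_Icc hx)]
        simp
  -- integrability of the source term squared
  have hg2int : ∀ t ∈ Set.Icc (0:ℝ) T, Integrable (fun x => (g (t, x)) ^ 2) := by
    intro t ht
    refine ((hg.comp (continuous_const.prodMk continuous_id)).pow 2).integrable_of_hasCompactSupport
      (HasCompactSupport.intro (isCompact_Icc (a := -R) (b := R)) fun x hx => ?_)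
    show (g (t, x)) ^ 2 = 0
    rw [hgsupp t ht x (abs_gt_of_not_mem_Icc hx).le]; ring
  -- the differential inequality
  have hΦ'le : ∀ t ∈ Set.Ioo (0:ℝ) T, (∫ x : ℝ, Pen' W (t, x)) ≤ (2 + M) * Φ t + B := by
    intro t ht
    have htI : t ∈ Set.Icc (0:ℝ) T := Set.Ioo_subset_Icc_self ht
    have cc : ∀ {h : ℝ × ℝ → ℝ}, Continuous h → Continuous (fun x : ℝ => h (t, x)) :=
      fun hh => hh.comp (continuous_const.prodMk continuous_id)
    set A : ℝ → ℝ := fun x =>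
      2 * W (t, x) * pd1 W (t, x) - 2 * q x * (W (t, x) * pd1 W (t, x))
        + 2 * pd1 W (t, x) * g (t, x) with hAdef
    set D' : ℝ → ℝ := fun x =>
      pd1 (pd2 W) (t, x) * pd2 W (t, x) + pd1 W (t, x) * pd2 (pd2 W) (t, x) with hD'def
    have hD : ∀ x, HasDerivAt (fun y => pd1 W (t, y) * pd2 W (t, y)) (D' x) x := by
      intro x
      have hmul := (hasDerivAt_slice2 hW1d t x).mul (hasDerivAt_slice2 hW2d t x)
      rw [pd_comm hW (t, x)] at hmul
      exact hmul
    have hD'c : Continuous D' := ((cc c12).mul (cc c2)).add ((cc c1).mul (cc c22))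
    have hIBP : (∫ x : ℝ, D' x) = 0 := by
      refine integral_deriv_eq_zero_of_support (R := R + 1) (by linarith) hD hD'c ?_
      intro x hx
      have hlt : R < |x| := by linarith
      rw [hWt0 t htI x hlt, hWx0' t htI x hlt, mul_zero]
    have hAint : Integrable A := by
      refine Continuous.integrable_of_hasCompactSupport ?_
        (HasCompactSupport.intro (isCompact_Icc (a := -R) (b := R)) fun x hx => ?_)
      · rw [hAdef]
        exact (((continuous_const.mul (cc cW)).mul (cc c1)).sub
          ((continuous_const.mul hq).mul ((cc cW).mul (cc c1)))).add
          ((continuous_const.mul (cc c1)).mul (cc hg))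
      · have hlt := abs_gt_of_not_mem_Icc hx
        simp only [hAdef]
        rw [hsupp t htI x hlt.le, hWt0 t htI x hlt]; ring
    have hD'int : Integrable D' := by
      refine hD'c.integrable_of_hasCompactSupport
        (HasCompactSupport.intro (isCompact_Icc (a := -R) (b := R)) fun x hx => ?_)
      have hlt := abs_gt_of_not_mem_Icc hx
      simp only [hD'def]
      rw [hWt0 t htI x hlt, hWx0' t htI x hlt]; ring
    have hfun : (fun x : ℝ => Pen' W (t, x)) = fun x => A x + 2 * D' x := by
      funext x
      simp only [hAdef, hD'def, Pen']
      rw [hpde t htI x]; ring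
    rw [hfun, integral_add hAint (hD'int.const_mul 2), integral_const_mul, hIBP,
      mul_zero, add_zero]
    have hA_le : ∀ x, A x ≤ (2 + M) * Pen W (t, x) + (g (t, x)) ^ 2 := by
      intro x
      have h1 : -(q x) * (W (t, x) * pd1 W (t, x)) ≤ M * |W (t, x) * pd1 W (t, x)| := by
        calc -(q x) * (W (t, x) * pd1 W (t, x)) = -(q x * (W (t, x) * pd1 W (t, x))) := by ring
          _ ≤ |q x * (W (t, x) * pd1 W (t, x))| := neg_le_abs _
          _ = |q x| * |W (t, x) * pd1 W (t, x)| := abs_mul _ _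
          _ ≤ M * |W (t, x) * pd1 W (t, x)| :=
              mul_le_mul_of_nonneg_right (hqM x) (abs_nonneg _)
      have h2 : 2 * |W (t, x) * pd1 W (t, x)| ≤ (W (t, x)) ^ 2 + (pd1 W (t, x)) ^ 2 := by
        calc 2 * |W (t, x) * pd1 W (t, x)| = 2 * |W (t, x)| * |pd1 W (t, x)| := by
              rw [abs_mul]; ring
          _ ≤ |W (t, x)| ^ 2 + |pd1 W (t, x)| ^ 2 := two_mul_le_add_sq _ _
          _ = (W (t, x)) ^ 2 + (pd1 W (t, x)) ^ 2 := by rw [sq_abs, sq_abs]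
      simp only [hAdef, Pen]
      nlinarith [two_mul_le_add_sq (W (t, x)) (pd1 W (t, x)),
        two_mul_le_add_sq (pd1 W (t, x)) (g (t, x)), sq_nonneg (pd2 W (t, x)),
        h1, h2, abs_nonneg (W (t, x) * pd1 W (t, x)), hM0]
    calc (∫ x : ℝ, A x) ≤ ∫ x : ℝ, ((2 + M) * Pen W (t, x) + (g (t, x)) ^ 2) :=
        integral_mono hAint (((hPint t htI).const_mul (2 + M)).add (hg2int t htI)) hA_le
      _ = (2 + M) * Φ t + ∫ x : ℝ, (g (t, x)) ^ 2 := by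
          rw [integral_add ((hPint t htI).const_mul (2 + M)) (hg2int t htI),
            integral_const_mul]
      _ ≤ (2 + M) * Φ t + B := by linarith [hgbd t htI]
  -- Gronwall via antitonicity
  have hc : (0:ℝ) < 2 + M := by linarith
  have hexp : ∀ s : ℝ, HasDerivAt (fun s : ℝ => Real.exp (-((2 + M) * s)))
      (Real.exp (-((2 + M) * s)) * (-(2 + M))) s := by
    intro s
    have h1 : HasDerivAt (fun s : ℝ => -((2 + M) * s)) (-(2 + M)) s := by
      simpa using (((hasDerivAt_id s).const_mul (2 + M)).fun_neg)
    exact h1.exp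
  have hΨanti : AntitoneOn (fun s => (Φ s + B / (2 + M)) * Real.exp (-((2 + M) * s)))
      (Set.Icc 0 T) := by
    apply antitoneOn_of_deriv_nonpos (convex_Icc 0 T)
    · exact (hΦcont.add continuousOn_const).mul
        ((Real.continuous_exp.comp ((continuous_const.mul continuous_id).neg)).continuousOn)
    · intro s hs
      rw [interior_Icc] at hs
      exact (((hΦderiv s hs).add_const (B / (2 + M))).mul (hexp s)).differentiableAt.differentiableWithinAt
    · intro s hs
      rw [interior_Icc] at hs
      have hd := ((hΦderiv s hs).add_const (B / (2 + M))).fun_mul (hexp s)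
      rw [hd.deriv]
      have hle := hΦ'le s hs
      have hE := Real.exp_pos (-((2 + M) * s))
      have h3 : (Φ s + B / (2 + M)) * (Real.exp (-((2 + M) * s)) * (-(2 + M))) =
          (-((2 + M) * Φ s) - B) * Real.exp (-((2 + M) * s)) := by
        field_simp; ring
      rw [h3]
      nlinarith [mul_nonneg hE.le (sub_nonneg.2 hle)]
  intro t ht
  have hΨ := hΨanti (Set.left_mem_Icc.2 hT.le) ht ht.1
  have hX : (Φ t + B / (2 + M)) * Real.exp (-((2 + M) * t)) ≤ B / (2 + M) := by
    have h0e : (Φ 0 + B / (2 + M)) * Real.exp (-((2 + M) * 0)) = B / (2 + M) := by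
      rw [hΦ0]; simp
    exact hΨ.trans (le_of_eq h0e)
  have hXpos := Real.exp_pos ((2 + M) * t)
  have hΦt : Φ t ≤ B / (2 + M) * Real.exp ((2 + M) * t) - B / (2 + M) := by
    rw [Real.exp_neg] at hX
    have hmul := mul_le_mul_of_nonneg_right hX hXpos.le
    have h4 : (Φ t + B / (2 + M)) * (Real.exp ((2 + M) * t))⁻¹ * Real.exp ((2 + M) * t)
        = Φ t + B / (2 + M) := by field_simp
    rw [h4] at hmul
    linarith
  have hfinal : Φ t ≤ B * Real.exp ((2 + M) * T) := by
    have hXle : Real.exp ((2 + M) * t) ≤ Real.exp ((2 + M) * T) :=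
      Real.exp_le_exp.2 (by nlinarith [ht.2, ht.1])
    have hk : B / (2 + M) ≤ B := div_le_self hB (by linarith)
    have hkpos : 0 ≤ B / (2 + M) := div_nonneg hB hc.le
    nlinarith [hXpos, Real.exp_pos ((2 + M) * T),
      mul_le_mul_of_nonneg_right hk hXpos.le, mul_le_mul_of_nonneg_left hXle hB]
  have hW2int : Integrable (fun x => (W (t, x)) ^ 2) := by
    refine ((cW.comp (continuous_const.prodMk continuous_id)).pow 2).integrable_of_hasCompactSupport
      (HasCompactSupport.intro (isCompact_Icc (a := -R) (b := R)) fun x hx => ?_)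
    show (W (t, x)) ^ 2 = 0
    rw [hsupp t ht x (abs_gt_of_not_mem_Icc hx).le]; ring
  calc (∫ x : ℝ, (W (t, x)) ^ 2) ≤ Φ t := by
        refine integral_mono hW2int (hPint t ht) fun x => ?_
        simp only [Pen]
        nlinarith [sq_nonneg (pd1 W (t, x)), sq_nonneg (pd2 W (t, x))]
    _ ≤ B * Real.exp ((2 + M) * T) := hfinal

lemma mollified_coeff (m : ℝ → ℝ) (hmc : Continuous m) (M : ℝ) (hM : ∀ x, |m x| ≤ M)
    (ψ : ℝ → ℝ) (hψc : Continuous ψ) (hψ0 : ∀ x, 0 ≤ ψ x) (hψ1 : (∫ x : ℝ, ψ x) = 1)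
    (S : ℝ) (hS : 0 < S) (hψsupp : ∀ y, S ≤ |y| → ψ y = 0)
    (ε : ℝ) (hε : 0 < ε) :
    Continuous (fun x => ∫ y : ℝ, m (x - y) * (ε⁻¹ * ψ (y / ε))) ∧
    (∀ x, |(∫ y : ℝ, m (x - y) * (ε⁻¹ * ψ (y / ε)))| ≤ M) ∧
    (∀ η d : ℝ, 0 < η → (∀ a b : ℝ, dist a b < d → dist (m a) (m b) < η) → ε * S ≤ d →
      ∀ x, |(∫ y : ℝ, m (x - y) * (ε⁻¹ * ψ (y / ε))) - m x| ≤ η) := by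
  have hc9 : Continuous fun y : ℝ => ε⁻¹ * ψ (y / ε) :=
    continuous_const.mul (hψc.comp (continuous_id.div_const ε))
  have h9nn : ∀ y : ℝ, 0 ≤ ε⁻¹ * ψ (y / ε) := fun y =>
    mul_nonneg (inv_nonneg.2 hε.le) (hψ0 _)
  have h9supp : ∀ y : ℝ, ε * S ≤ |y| → ε⁻¹ * ψ (y / ε) = 0 := by
    intro y hy
    have h1 : S ≤ |y / ε| := by
      rw [abs_div, abs_of_pos hε, le_div_iff₀ hε]; linarith
    rw [hψsupp _ h1, mul_zero]
  have h9cs : HasCompactSupport fun y : ℝ => ε⁻¹ * ψ (y / ε) :=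
    HasCompactSupport.intro (isCompact_Icc (a := -(ε * S)) (b := ε * S)) fun y hy =>
      h9supp y (abs_gt_of_not_mem_Icc hy).le
  have h9int : Integrable fun y : ℝ => ε⁻¹ * ψ (y / ε) :=
    hc9.integrable_of_hasCompactSupport h9cs
  have h9one : (∫ y : ℝ, ε⁻¹ * ψ (y / ε)) = 1 := by
    rw [integral_const_mul, MeasureTheory.Measure.integral_comp_div (fun x => ψ x) ε, hψ1,
      smul_eq_mul, abs_of_pos hε]
    field_simp
  have hint : ∀ x : ℝ, Integrable fun y : ℝ => m (x - y) * (ε⁻¹ * ψ (y / ε)) := by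
    intro x
    refine ((hmc.comp (continuous_const.sub continuous_id)).mul hc9).integrable_of_hasCompactSupport
      (HasCompactSupport.intro (isCompact_Icc (a := -(ε * S)) (b := ε * S)) fun y hy => ?_)
    show m (x - y) * (ε⁻¹ * ψ (y / ε)) = 0
    rw [h9supp y (abs_gt_of_not_mem_Icc hy).le, mul_zero]
  have hptb : ∀ x y : ℝ, ‖m (x - y) * (ε⁻¹ * ψ (y / ε))‖ ≤ M * (ε⁻¹ * ψ (y / ε)) := by
    intro x y
    rw [Real.norm_eq_abs, abs_mul, abs_of_nonneg (h9nn y)]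
    exact mul_le_mul_of_nonneg_right (hM _) (h9nn y)
  refine ⟨?_, ?_, ?_⟩
  · exact continuous_of_dominated
      (fun x => ((hmc.comp (continuous_const.sub continuous_id)).mul hc9).aestronglyMeasurable)
      (fun x => Filter.Eventually.of_forall (hptb x)) (h9int.const_mul M)
      (Filter.Eventually.of_forall fun y =>
        (hmc.comp (continuous_id.sub continuous_const)).mul continuous_const)
  · intro x
    calc |∫ y : ℝ, m (x - y) * (ε⁻¹ * ψ (y / ε))|
        = ‖∫ y : ℝ, m (x - y) * (ε⁻¹ * ψ (y / ε))‖ := (Real.norm_eq_abs _).symm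
      _ ≤ ∫ y : ℝ, M * (ε⁻¹ * ψ (y / ε)) :=
          norm_integral_le_of_norm_le (h9int.const_mul M) (Filter.Eventually.of_forall (hptb x))
      _ = M := by rw [integral_const_mul, h9one, mul_one]
  · intro η d hη hUC hεd x
    have hsub : (∫ y : ℝ, m (x - y) * (ε⁻¹ * ψ (y / ε))) - m x
        = ∫ y : ℝ, (m (x - y) - m x) * (ε⁻¹ * ψ (y / ε)) := by
      have h1 : (fun y : ℝ => (m (x - y) - m x) * (ε⁻¹ * ψ (y / ε)))
          = fun y : ℝ => m (x - y) * (ε⁻¹ * ψ (y / ε)) - m x * (ε⁻¹ * ψ (y / ε)) := by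
        funext y; ring
      rw [h1, integral_sub (hint x) (h9int.const_mul (m x)), integral_const_mul, h9one, mul_one]
    rw [hsub]
    have hpt : ∀ y : ℝ, ‖(m (x - y) - m x) * (ε⁻¹ * ψ (y / ε))‖ ≤ η * (ε⁻¹ * ψ (y / ε)) := by
      intro y
      by_cases hy : ε * S ≤ |y|
      · rw [h9supp y hy]; simp
      · push_neg at hy
        have hdy : dist (x - y) x < d := by
          rw [Real.dist_eq, show x - y - x = -y by ring, abs_neg]
          linarith
        have hm : |m (x - y) - m x| ≤ η := le_of_lt (by rw [← Real.dist_eq]; exact hUC _ _ hdy)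
        rw [Real.norm_eq_abs, abs_mul, abs_of_nonneg (h9nn y)]
        exact mul_le_mul_of_nonneg_right hm (h9nn y)
    calc |∫ y : ℝ, (m (x - y) - m x) * (ε⁻¹ * ψ (y / ε))|
        = ‖∫ y : ℝ, (m (x - y) - m x) * (ε⁻¹ * ψ (y / ε))‖ := (Real.norm_eq_abs _).symm
      _ ≤ ∫ y : ℝ, η * (ε⁻¹ * ψ (y / ε)) := by
          refine norm_integral_le_of_norm_le (h9int.const_mul η) (Filter.Eventually.of_forall hpt)
      _ = η := by rw [integral_const_mul, h9one, mul_one]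

/-- Consistency of very weak solutions with classical ones (case `α = 1`,
`d = 1`): if `m` is bounded, uniformly continuous and non-negative,
`m_ε = m * ψ_ε`, `u` is a classical solution with potential `m` and `u_ε`
classical solutions with potentials `m_ε`, all with the same Cauchy data, then
`sup_{t∈[0,T]} ‖u_ε(t,·) − u(t,·)‖_{L²} → 0` as `ε → 0⁺`. -/
theorem very_weak_solution_consistency
    (T : ℝ) (hT : 0 < T) (m : ℝ → ℝ)
    (hmb : ∃ M, ∀ x, |m x| ≤ M) (hmu : UniformContinuous m) (hm : ∀ x, 0 ≤ m x)
    (ψ : ℝ → ℝ) (hψ : IsFriedrichsMollifier ψ)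
    (u : ℝ → ℝ → ℝ) (hu : IsClassicalSolution T m (fun _ _ => 0) u)
    (hubd : ∃ K, ∀ s ∈ Set.Icc (0 : ℝ) T, Real.sqrt (∫ x : ℝ, (u s x) ^ 2) ≤ K)
    (uε : ℝ → ℝ → ℝ → ℝ)
    (huε : ∀ ε ∈ Set.Ioc (0 : ℝ) 1,
      IsClassicalSolution T (fun x => ∫ y : ℝ, m (x - y) * (ε⁻¹ * ψ (y / ε)))
        (fun _ _ => 0) (uε ε))
    (hdata : ∀ ε ∈ Set.Ioc (0 : ℝ) 1, ∀ x : ℝ,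
      uε ε 0 x = u 0 x ∧
      deriv (fun τ => uε ε τ x) 0 = deriv (fun τ => u τ x) 0) :
    ∀ δ > (0 : ℝ), ∃ ε₀ > (0 : ℝ), ∀ ε : ℝ, 0 < ε → ε ≤ ε₀ → ε ≤ 1 →
      ∀ t ∈ Set.Icc (0 : ℝ) T,
        Real.sqrt (∫ x : ℝ, (uε ε t x - u t x) ^ 2) ≤ δ := by
  intro δ hδ
  obtain ⟨M, hM⟩ := hmb
  have hM0 : 0 ≤ M := (abs_nonneg _).trans (hM 0)
  obtain ⟨K, hK⟩ := hubd
  have hK0 : 0 ≤ K := (Real.sqrt_nonneg _).trans (hK 0 ⟨le_rfl, hT.le⟩)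
  obtain ⟨hψsm, hψcs, hψ0, hψ1⟩ := hψ
  -- support radius of the mollifier
  obtain ⟨r, hr⟩ := hψcs.isBounded.subset_closedBall 0
  have hS : (0:ℝ) < max r 0 + 1 := by positivity
  have hψsupp : ∀ y : ℝ, max r 0 + 1 ≤ |y| → ψ y = 0 := by
    intro y hy
    by_contra hne
    have h1 : y ∈ tsupport ψ := subset_tsupport ψ (by simpa [Function.mem_support] using hne)
    have h2 : |y| ≤ r := by
      have := hr h1
      rwa [Metric.mem_closedBall, Real.dist_eq, sub_zero] at this
    have : r ≤ max r 0 := le_max_left _ _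
    linarith
  -- choice of η and ε₀
  set E := Real.exp ((2 + M) * T) with hEdef
  have hEpos : 0 < E := Real.exp_pos _
  have hE1 : 1 ≤ E := Real.one_le_exp (mul_nonneg (by linarith) hT.le)
  set η := δ / ((K + 1) * E) with hηdef
  have hη : 0 < η := div_pos hδ (mul_pos (by linarith) hEpos)
  obtain ⟨d, hd, hUC⟩ := Metric.uniformContinuous_iff.1 hmu η hη
  refine ⟨d / (max r 0 + 1), div_pos hd hS, ?_⟩
  intro ε hε hεd hε1 t ht
  obtain ⟨hUC2, ⟨Ru, hRu, hRusup⟩, hupde⟩ := hu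
  obtain ⟨hVC2, ⟨Rv, hRv, hRvsup⟩, hvpde⟩ := huε ε ⟨hε, hε1⟩
  obtain ⟨hQc, hQbd, hQnear⟩ := mollified_coeff m hmu.continuous M hM ψ hψsm.continuous hψ0 hψ1
    (max r 0 + 1) hS hψsupp ε hε
  have hQη : ∀ x, |(∫ y : ℝ, m (x - y) * (ε⁻¹ * ψ (y / ε))) - m x| ≤ η := by
    refine hQnear η d hη (fun a b hab => hUC hab) ?_
    calc ε * (max r 0 + 1) ≤ d / (max r 0 + 1) * (max r 0 + 1) :=
        mul_le_mul_of_nonneg_right hεd hS.le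
      _ = d := div_mul_cancel₀ d (ne_of_gt hS)
  -- the difference of the two solutions
  set V : ℝ × ℝ → ℝ := fun p => uε ε p.1 p.2 with hVdef
  set U : ℝ × ℝ → ℝ := fun p => u p.1 p.2 with hUdef
  set W : ℝ × ℝ → ℝ := fun p => V p - U p with hWdef
  have hWc2 : ContDiff ℝ 2 W := hVC2.sub hUC2
  have hWd : Differentiable ℝ W := hWc2.differentiable (by norm_num)
  have hVd : Differentiable ℝ V := hVC2.differentiable (by norm_num)
  have hUd : Differentiable ℝ U := hUC2.differentiable (by norm_num)
  have hV1 : ContDiff ℝ 1 (pd1 V) := pd1_contDiff (by norm_num; exact hVC2 : ContDiff ℝ ((1:ℕ∞)+1) V)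
  have hU1 : ContDiff ℝ 1 (pd1 U) := pd1_contDiff (by norm_num; exact hUC2 : ContDiff ℝ ((1:ℕ∞)+1) U)
  have hV2 : ContDiff ℝ 1 (pd2 V) := pd2_contDiff (by norm_num; exact hVC2 : ContDiff ℝ ((1:ℕ∞)+1) V)
  have hU2 : ContDiff ℝ 1 (pd2 U) := pd2_contDiff (by norm_num; exact hUC2 : ContDiff ℝ ((1:ℕ∞)+1) U)
  -- partial derivatives of the difference
  have hpd1W : pd1 W = fun p => pd1 V p - pd1 U p := by
    funext p
    show fderiv ℝ W p (1, 0) = fderiv ℝ V p (1, 0) - fderiv ℝ U p (1, 0)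
    rw [hWdef, fderiv_fun_sub (hVd p) (hUd p)]; rfl
  have hpd2W : pd2 W = fun p => pd2 V p - pd2 U p := by
    funext p
    show fderiv ℝ W p (0, 1) = fderiv ℝ V p (0, 1) - fderiv ℝ U p (0, 1)
    rw [hWdef, fderiv_fun_sub (hVd p) (hUd p)]; rfl
  have hW11 : ∀ p : ℝ × ℝ, pd1 (pd1 W) p = pd1 (pd1 V) p - pd1 (pd1 U) p := by
    intro p
    show fderiv ℝ (pd1 W) p (1, 0) = fderiv ℝ (pd1 V) p (1, 0) - fderiv ℝ (pd1 U) p (1, 0)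
    rw [hpd1W, fderiv_fun_sub (hV1.differentiable one_ne_zero p) (hU1.differentiable one_ne_zero p)]; rfl
  have hW22 : ∀ p : ℝ × ℝ, pd2 (pd2 W) p = pd2 (pd2 V) p - pd2 (pd2 U) p := by
    intro p
    show fderiv ℝ (pd2 W) p (0, 1) = fderiv ℝ (pd2 V) p (0, 1) - fderiv ℝ (pd2 U) p (0, 1)
    rw [hpd2W, fderiv_fun_sub (hV2.differentiable one_ne_zero p) (hU2.differentiable one_ne_zero p)]; rfl
  -- initial data
  have h0w : ∀ x : ℝ, W (0, x) = 0 := by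
    intro x
    show uε ε 0 x - u 0 x = 0
    rw [(hdata ε ⟨hε, hε1⟩ x).1, sub_self]
  have h0w' : ∀ x : ℝ, pd1 W (0, x) = 0 := by
    intro x
    rw [hpd1W]
    show pd1 V (0, x) - pd1 U (0, x) = 0
    rw [← (hasDerivAt_slice1 hVd 0 x).deriv, ← (hasDerivAt_slice1 hUd 0 x).deriv]
    show deriv (fun τ => uε ε τ x) 0 - deriv (fun τ => u τ x) 0 = 0
    rw [(hdata ε ⟨hε, hε1⟩ x).2, sub_self]
  -- support of the difference
  have hRw : ∀ s ∈ Set.Icc (0:ℝ) T, ∀ x : ℝ, max Ru Rv ≤ |x| → W (s, x) = 0 := by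
    intro s hs x hx
    show uε ε s x - u s x = 0
    rw [hRvsup s hs x (le_trans (le_max_right _ _) hx),
      hRusup s hs x (le_trans (le_max_left _ _) hx), sub_self]
  -- the source term
  have hgc : Continuous fun p : ℝ × ℝ =>
      (m p.2 - (∫ y : ℝ, m (p.2 - y) * (ε⁻¹ * ψ (y / ε)))) * u p.1 p.2 := by
    exact ((hmu.continuous.comp continuous_snd).sub (hQc.comp continuous_snd)).mul hUC2.continuous
  have hgsupp : ∀ s ∈ Set.Icc (0:ℝ) T, ∀ x : ℝ, max Ru Rv ≤ |x| →
      (m x - (∫ y : ℝ, m (x - y) * (ε⁻¹ * ψ (y / ε)))) * u s x = 0 := by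
    intro s hs x hx
    rw [hRusup s hs x (le_trans (le_max_left _ _) hx), mul_zero]
  have hgbd : ∀ s ∈ Set.Icc (0:ℝ) T,
      (∫ x : ℝ, ((m x - (∫ y : ℝ, m (x - y) * (ε⁻¹ * ψ (y / ε)))) * u s x) ^ 2)
        ≤ η ^ 2 * K ^ 2 := by
    intro s hs
    have hu2int : Integrable fun x => (u s x) ^ 2 := by
      refine ((hUC2.continuous.comp (continuous_const.prodMk continuous_id)).pow 2).integrable_of_hasCompactSupport
        (HasCompactSupport.intro (isCompact_Icc (a := -Ru) (b := Ru)) fun x hx => ?_)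
      show (u s x) ^ 2 = 0
      rw [hRusup s hs x (abs_gt_of_not_mem_Icc hx).le]; ring
    have hg2int : Integrable fun x =>
        ((m x - (∫ y : ℝ, m (x - y) * (ε⁻¹ * ψ (y / ε)))) * u s x) ^ 2 := by
      refine (((hmu.continuous.sub hQc).mul
        (hUC2.continuous.comp (continuous_const.prodMk continuous_id))).pow 2).integrable_of_hasCompactSupport
        (HasCompactSupport.intro (isCompact_Icc (a := -Ru) (b := Ru)) fun x hx => ?_)
      show ((m x - (∫ y : ℝ, m (x - y) * (ε⁻¹ * ψ (y / ε)))) * u s x) ^ 2 = 0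
      rw [hRusup s hs x (abs_gt_of_not_mem_Icc hx).le]; ring
    have hIK : (∫ x : ℝ, (u s x) ^ 2) ≤ K ^ 2 := by
      have h1 := hK s hs
      have h2 : 0 ≤ ∫ x : ℝ, (u s x) ^ 2 := integral_nonneg fun x => sq_nonneg _
      nlinarith [Real.sq_sqrt h2, Real.sqrt_nonneg (∫ x : ℝ, (u s x) ^ 2)]
    calc (∫ x : ℝ, ((m x - (∫ y : ℝ, m (x - y) * (ε⁻¹ * ψ (y / ε)))) * u s x) ^ 2)
        ≤ ∫ x : ℝ, η ^ 2 * (u s x) ^ 2 := by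
          refine integral_mono hg2int (hu2int.const_mul _) fun x => ?_
          have habs : |m x - (∫ y : ℝ, m (x - y) * (ε⁻¹ * ψ (y / ε)))| ≤ η := by
            rw [abs_sub_comm]; exact hQη x
          obtain ⟨ha, hb⟩ := abs_le.1 habs
          have h2 : (m x - (∫ y : ℝ, m (x - y) * (ε⁻¹ * ψ (y / ε)))) ^ 2 ≤ η ^ 2 :=
            sq_le_sq' ha hb
          nlinarith [sq_nonneg (u s x)]
      _ = η ^ 2 * ∫ x : ℝ, (u s x) ^ 2 := integral_const_mul _ _
      _ ≤ η ^ 2 * K ^ 2 := by nlinarith [sq_nonneg η]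
  -- the PDE for the difference
  have hpdeW : ∀ s ∈ Set.Icc (0:ℝ) T, ∀ x : ℝ,
      pd1 (pd1 W) (s, x) = pd2 (pd2 W) (s, x)
        - (∫ y : ℝ, m (x - y) * (ε⁻¹ * ψ (y / ε))) * W (s, x)
        + (m x - (∫ y : ℝ, m (x - y) * (ε⁻¹ * ψ (y / ε)))) * u s x := by
    intro s hs x
    have e1 := hvpde s hs x
    have e2 := hupde s hs x
    simp only [] at e1 e2
    have l1 : iteratedDeriv 2 (fun τ => uε ε τ x) s = pd1 (pd1 V) (s, x) :=
      iteratedDeriv_two_slice1 hVC2 s x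
    have l2 : iteratedDeriv 2 (fun y => uε ε s y) x = pd2 (pd2 V) (s, x) :=
      iteratedDeriv_two_slice2 hVC2 s x
    have l3 : iteratedDeriv 2 (fun τ => u τ x) s = pd1 (pd1 U) (s, x) :=
      iteratedDeriv_two_slice1 hUC2 s x
    have l4 : iteratedDeriv 2 (fun y => u s y) x = pd2 (pd2 U) (s, x) :=
      iteratedDeriv_two_slice2 hUC2 s x
    rw [l1, l2] at e1
    rw [l3, l4] at e2
    rw [hW11, hW22]
    show pd1 (pd1 V) (s, x) - pd1 (pd1 U) (s, x)
      = pd2 (pd2 V) (s, x) - pd2 (pd2 U) (s, x)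
        - (∫ y : ℝ, m (x - y) * (ε⁻¹ * ψ (y / ε))) * (uε ε s x - u s x)
        + (m x - (∫ y : ℝ, m (x - y) * (ε⁻¹ * ψ (y / ε)))) * u s x
    linear_combination e1 - e2
  -- apply the energy estimate
  have hfin : (∫ x : ℝ, (uε ε t x - u t x) ^ 2) ≤ η ^ 2 * K ^ 2 * E := by
    have := energy_estimate_s17 T (max Ru Rv) M (η ^ 2 * K ^ 2) hT
      (lt_of_lt_of_le hRu (le_max_left _ _)) (by positivity)
      (fun x => ∫ y : ℝ, m (x - y) * (ε⁻¹ * ψ (y / ε))) hQc hQbd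
      W hWc2
      (fun p => (m p.2 - (∫ y : ℝ, m (p.2 - y) * (ε⁻¹ * ψ (y / ε)))) * u p.1 p.2) hgc
      hRw hgsupp hpdeW hgbd h0w h0w' t ht
    rw [hEdef]
    exact this
  have hb : η ^ 2 * K ^ 2 * E ≤ δ ^ 2 := by
    have key : η ^ 2 * K ^ 2 * E ≤ η ^ 2 * ((K + 1) ^ 2 * E ^ 2) := by
      have hEE : E ≤ E ^ 2 := by nlinarith [hE1, hEpos]
      have hKK : K ^ 2 ≤ (K + 1) ^ 2 := by nlinarith [hK0]
      have hmid : K ^ 2 * E ≤ (K + 1) ^ 2 * E ^ 2 :=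
        le_trans (mul_le_mul_of_nonneg_left hEE (sq_nonneg K))
          (mul_le_mul_of_nonneg_right hKK (sq_nonneg E))
      nlinarith [mul_le_mul_of_nonneg_left hmid (sq_nonneg η)]
    have heq : η ^ 2 * ((K + 1) ^ 2 * E ^ 2) = δ ^ 2 := by
      rw [hηdef]
      field_simp
    linarith
  calc Real.sqrt (∫ x : ℝ, (uε ε t x - u t x) ^ 2)
      ≤ Real.sqrt (δ ^ 2) := Real.sqrt_le_sqrt (le_trans hfin hb)
    _ = δ := Real.sqrt_sq hδ.le
end

section
/- Let T > 0, N₀ ∈ ℕ, C > 0, and for each ε ∈ (0, 1] let m_ε : ℝ → ℝ be continuous with 0 ≤ m_ε(x) ≤ C ε^{-N₀} for all x, and let u_ε be a classical solution on [0, T] of the wave equation with potential m_ε and source f = 0, all with the same ε-independent initial data u_ε(0, ·) = u₀ and ∂_t u_ε(0, ·) = u₁, where u₀ is C¹ with compact support and u₁ is continuous with compact support. Then there exists c > 0 such that for all ε ∈ (0, 1] and all t ∈ [0, T]: ∫_ℝ (∂_t u_ε(t,x))² dx + ∫_ℝ (∂_x u_ε(t,x))² dx ≤ c ε^{-N₀};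 that is, the net of solutions is moderate. -/
open MeasureTheory

open Set in
lemma deriv_eq_zero_of_eqOn_zero_s18 {g : ℝ → ℝ} {s : Set ℝ} {x : ℝ}
    (hg : DifferentiableAt ℝ g x) (hs : UniqueDiffWithinAt ℝ s x) (hx : x ∈ s)
    (h0 : ∀ y ∈ s, g y = 0) : deriv g x = 0 := by
  have h1 : HasDerivWithinAt g 0 s x :=
    (hasDerivWithinAt_const x s (0:ℝ)).congr h0 (h0 x hx)
  rw [← hg.derivWithin hs]
  exact h1.derivWithin hs


open Set in
lemma wave_energy_bound (T : ℝ) (hT : 0 < T) (m : ℝ → ℝ) (hmc : Continuous m)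
    (hm0 : ∀ x, 0 ≤ m x) (v : ℝ → ℝ → ℝ)
    (hv : ContDiff ℝ 2 (fun p : ℝ × ℝ => v p.1 p.2))
    (R : ℝ) (hR : 0 < R)
    (hsupp : ∀ t ∈ Set.Icc (0:ℝ) T, ∀ x : ℝ, R ≤ |x| → v t x = 0)
    (hpde : ∀ t ∈ Set.Icc (0:ℝ) T, ∀ x : ℝ, iteratedDeriv 2 (fun τ => v τ x) t
       = iteratedDeriv 2 (fun y => v t y) x - m x * v t x + 0)
    (t : ℝ) (ht : t ∈ Set.Icc (0:ℝ) T) :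
    (∫ x : ℝ, (deriv (fun τ => v τ x) t) ^ 2) + (∫ x : ℝ, (deriv (fun y => v t y) x) ^ 2)
      ≤ ∫ x in (-R)..R, ((deriv (fun τ => v τ x) 0) ^ 2 + (deriv (fun y => v 0 y) x) ^ 2
          + m x * (v 0 x) ^ 2) := by
  have ht0 : 0 ≤ t := ht.1
  have htT : t ≤ T := ht.2
  have hRR : -R ≤ R := by linarith
  set U : ℝ × ℝ → ℝ := fun p => v p.1 p.2 with hUdef
  have hUd : Differentiable ℝ U := hv.differentiable two_ne_zero
  -- generic partial-derivative facts
  have keyT : ∀ (W : ℝ × ℝ → ℝ), Differentiable ℝ W → ∀ s y : ℝ,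
      HasDerivAt (fun τ => W (τ, y)) (fderiv ℝ W (s, y) (1, 0)) s := by
    intro W hW s y
    exact (hW (s, y)).hasFDerivAt.comp_hasDerivAt s
      ((hasDerivAt_id s).prodMk (hasDerivAt_const s y))
  have keyX : ∀ (W : ℝ × ℝ → ℝ), Differentiable ℝ W → ∀ s y : ℝ,
      HasDerivAt (fun z => W (s, z)) (fderiv ℝ W (s, y) (0, 1)) y := by
    intro W hW s y
    exact (hW (s, y)).hasFDerivAt.comp_hasDerivAt y
      ((hasDerivAt_const y s).prodMk (hasDerivAt_id y))
  set Vt : ℝ × ℝ → ℝ := fun p => fderiv ℝ U p (1, 0) with hVtdef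
  set Vx : ℝ × ℝ → ℝ := fun p => fderiv ℝ U p (0, 1) with hVxdef
  have hVt1 : ContDiff ℝ 1 Vt := (hv.fderiv_right (le_refl _)).clm_apply contDiff_const
  have hVx1 : ContDiff ℝ 1 Vx := (hv.fderiv_right (le_refl _)).clm_apply contDiff_const
  set Att : ℝ × ℝ → ℝ := fun p => fderiv ℝ Vt p (1, 0) with hAttdef
  set Atx : ℝ × ℝ → ℝ := fun p => fderiv ℝ Vt p (0, 1) with hAtxdef
  set Btx : ℝ × ℝ → ℝ := fun p => fderiv ℝ Vx p (1, 0) with hBtxdef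
  set Bxx : ℝ × ℝ → ℝ := fun p => fderiv ℝ Vx p (0, 1) with hBxxdef
  have hAttc : Continuous Att :=
    ((hVt1.fderiv_right (m := 0) (by norm_num)).clm_apply contDiff_const).continuous
  have hAtxc : Continuous Atx :=
    ((hVt1.fderiv_right (m := 0) (by norm_num)).clm_apply contDiff_const).continuous
  have hBtxc : Continuous Btx :=
    ((hVx1.fderiv_right (m := 0) (by norm_num)).clm_apply contDiff_const).continuous
  have hBxxc : Continuous Bxx :=
    ((hVx1.fderiv_right (m := 0) (by norm_num)).clm_apply contDiff_const).continuous
  -- first derivatives as deriv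
  have hvt : ∀ s y : ℝ, deriv (fun τ => v τ y) s = Vt (s, y) := fun s y => (keyT U hUd s y).deriv
  have hvx : ∀ s y : ℝ, deriv (fun z => v s z) y = Vx (s, y) := fun s y => (keyX U hUd s y).deriv
  -- second derivatives
  have hvtt : ∀ s y : ℝ, deriv (fun τ => Vt (τ, y)) s = Att (s, y) :=
    fun s y => (keyT Vt (hVt1.differentiable one_ne_zero) s y).deriv
  have hvxx : ∀ s y : ℝ, deriv (fun z => Vx (s, z)) y = Bxx (s, y) :=
    fun s y => (keyX Vx (hVx1.differentiable one_ne_zero) s y).deriv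
  -- Schwarz symmetry : Atx = Btx
  have swap : ∀ (w z : ℝ × ℝ) (p : ℝ × ℝ),
      fderiv ℝ (fun q => fderiv ℝ U q w) p z = fderiv ℝ (fderiv ℝ U) p z w := by
    intro w z p
    have h : HasFDerivAt (fderiv ℝ U) (fderiv ℝ (fderiv ℝ U) p) p :=
      (((hv.fderiv_right (le_refl _)).differentiable one_ne_zero) p).hasFDerivAt
    have h2 : HasFDerivAt (fun q => fderiv ℝ U q w)
        ((ContinuousLinearMap.apply ℝ ℝ w).comp (fderiv ℝ (fderiv ℝ U) p)) p :=
      (ContinuousLinearMap.apply ℝ ℝ w).hasFDerivAt.comp p h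
    rw [h2.fderiv]; rfl
  have hsym : ∀ p : ℝ × ℝ, Atx p = Btx p := by
    intro p
    rw [hAtxdef, hBtxdef]
    show fderiv ℝ (fun q => fderiv ℝ U q (1,0)) p (0,1)
        = fderiv ℝ (fun q => fderiv ℝ U q (0,1)) p (1,0)
    rw [swap, swap]
    exact (hv.contDiffAt.isSymmSndFDerivAt (by norm_num)) _ _
  -- vanishing of Vt and Vx outside the support
  have hVt0 : ∀ s ∈ Icc (0:ℝ) T, ∀ y : ℝ, R ≤ |y| → Vt (s, y) = 0 := by
    intro s hs y hy
    rw [← hvt s y]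
    exact deriv_eq_zero_of_eqOn_zero_s18 (keyT U hUd s y).differentiableAt
      ((uniqueDiffOn_Icc hT) s hs) hs (fun τ hτ => hsupp τ hτ y hy)
  have hVx0 : ∀ s ∈ Icc (0:ℝ) T, ∀ y : ℝ, R ≤ |y| → Vx (s, y) = 0 := by
    intro s hs y hy
    rw [← hvx s y]
    rcases le_abs.mp hy with h | h
    · exact deriv_eq_zero_of_eqOn_zero_s18 (keyX U hUd s y).differentiableAt
        ((uniqueDiffOn_Ici R) y h) h
        (fun z hz => hsupp s hs z (le_abs.mpr (Or.inl hz)))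
    · have h' : y ∈ Iic (-R) := by simp only [mem_Iic]; linarith
      exact deriv_eq_zero_of_eqOn_zero_s18 (keyX U hUd s y).differentiableAt
        ((uniqueDiffOn_Iic (-R)) y h') h'
        (fun z hz => hsupp s hs z (le_abs.mpr (Or.inr (by simp only [mem_Iic] at hz; linarith))))
  -- energy density and its time derivative
  set Fp : ℝ × ℝ → ℝ := fun p => Vt p ^ 2 + Vx p ^ 2 + m p.2 * (U p) ^ 2 with hFdef
  set Gp : ℝ × ℝ → ℝ := fun p =>
    2 * Vt p * Att p + 2 * Vx p * Btx p + m p.2 * (2 * U p * Vt p) with hGdef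
  have hVtc : Continuous Vt := hVt1.continuous
  have hVxc : Continuous Vx := hVx1.continuous
  have hUc : Continuous U := hv.continuous
  have hmsnd : Continuous fun p : ℝ × ℝ => m p.2 := hmc.comp continuous_snd
  have hFc : Continuous Fp := ((hVtc.pow 2).add (hVxc.pow 2)).add (hmsnd.mul (hUc.pow 2))
  have hGc : Continuous Gp :=
    (((continuous_const.mul hVtc).mul hAttc).add ((continuous_const.mul hVxc).mul hBtxc)).add
      (hmsnd.mul ((continuous_const.mul hUc).mul hVtc))
  have hFt : ∀ s y : ℝ, HasDerivAt (fun τ => Fp (τ, y)) (Gp (s, y)) s := by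
    intro s y
    have h1 := keyT Vt (hVt1.differentiable one_ne_zero) s y
    have h2 := keyT Vx (hVx1.differentiable one_ne_zero) s y
    have h3 := keyT U hUd s y
    have h := ((h1.pow 2).add (h2.pow 2)).add ((h3.pow 2).const_mul (m y))
    refine h.congr_deriv ?_
    simp only [hGdef]
    push_cast
    ring
  have timeFTC : ∀ y : ℝ, (∫ s in (0:ℝ)..t, Gp (s, y)) = Fp (t, y) - Fp (0, y) := fun y =>
    intervalIntegral.integral_eq_sub_of_hasDerivAt (fun s _ => hFt s y)
      ((hGc.comp (continuous_id.prodMk continuous_const)).intervalIntegrable _ _)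
  have spaceFTC : ∀ s ∈ Icc (0:ℝ) T, (∫ y in (-R)..R, Gp (s, y)) = 0 := by
    intro s hs
    have hbd : ∀ y : ℝ, HasDerivAt (fun z => 2 * Vt (s, z) * Vx (s, z)) (Gp (s, y)) y := by
      intro y
      have h1 := keyX Vt (hVt1.differentiable one_ne_zero) s y
      have h2 := keyX Vx (hVx1.differentiable one_ne_zero) s y
      have h := (h1.const_mul (2:ℝ)).mul h2
      refine h.congr_deriv ?_
      have e1 : iteratedDeriv 2 (fun τ => v τ y) s = Att (s, y) := by
        simp only [iteratedDeriv_succ, iteratedDeriv_zero]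
        have e : deriv (fun τ => v τ y) = fun τ => Vt (τ, y) := funext fun τ => hvt τ y
        rw [e]; exact hvtt s y
      have e2 : iteratedDeriv 2 (fun z => v s z) y = Bxx (s, y) := by
        simp only [iteratedDeriv_succ, iteratedDeriv_zero]
        have e : deriv (fun z => v s z) = fun z => Vx (s, z) := funext fun z => hvx s z
        rw [e]; exact hvxx s y
      have hA : Att (s, y) = Bxx (s, y) - m y * v s y := by
        have hp := hpde s hs y; rw [e1, e2] at hp; linarith
      have hs2 := hsym (s, y)
      simp only [hGdef, hUdef]
      rw [hA, ← hs2]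
      ring
    have hint : IntervalIntegrable (fun y => Gp (s, y)) volume (-R) R :=
      (hGc.comp (continuous_const.prodMk continuous_id)).intervalIntegrable _ _
    rw [intervalIntegral.integral_eq_sub_of_hasDerivAt (fun y _ => hbd y) hint]
    rw [hVt0 s hs R (by rw [abs_of_pos hR]), hVt0 s hs (-R) (by rw [abs_neg, abs_of_pos hR])]
    ring
  have hswap : (∫ x in (-R)..R, ∫ s in (0:ℝ)..t, Gp (s, x))
      = ∫ s in (0:ℝ)..t, ∫ x in (-R)..R, Gp (s, x) := by
    simp_rw [intervalIntegral.integral_of_le ht0, intervalIntegral.integral_of_le hRR]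
    have hint : Integrable (Function.uncurry fun x s => Gp (s, x))
        ((volume.restrict (Ioc (-R) R)).prod (volume.restrict (Ioc 0 t))) := by
      rw [Measure.prod_restrict]
      have h1 : IntegrableOn (Function.uncurry fun x s => Gp (s, x))
          (Icc (-R) R ×ˢ Icc 0 t) (volume.prod volume) :=
        ((hGc.comp (continuous_snd.prodMk continuous_fst)).continuousOn).integrableOn_compact
          (isCompact_Icc.prod isCompact_Icc)
      exact h1.mono_set (Set.prod_mono Ioc_subset_Icc_self Ioc_subset_Icc_self)
    exact MeasureTheory.integral_integral_swap hint
  have h2int : IntervalIntegrable (fun x => Fp (t, x)) volume (-R) R :=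
    (hFc.comp (continuous_const.prodMk continuous_id)).intervalIntegrable _ _
  have h3int : IntervalIntegrable (fun x => Fp (0, x)) volume (-R) R :=
    (hFc.comp (continuous_const.prodMk continuous_id)).intervalIntegrable _ _
  have Econs : (∫ x in (-R)..R, Fp (t, x)) = ∫ x in (-R)..R, Fp (0, x) := by
    have h1 : (∫ x in (-R)..R, (Fp (t, x) - Fp (0, x))) = 0 := by
      calc ∫ x in (-R)..R, (Fp (t, x) - Fp (0, x))
          = ∫ x in (-R)..R, ∫ s in (0:ℝ)..t, Gp (s, x) := by
            apply intervalIntegral.integral_congr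
            intro x _; exact (timeFTC x).symm
        _ = ∫ s in (0:ℝ)..t, ∫ x in (-R)..R, Gp (s, x) := hswap
        _ = ∫ s in (0:ℝ)..t, (0:ℝ) := by
            apply intervalIntegral.integral_congr
            intro s hs
            rw [uIcc_of_le ht0] at hs
            exact spaceFTC s ⟨hs.1, hs.2.trans htT⟩
        _ = 0 := by simp
    have h4 := intervalIntegral.integral_sub h2int h3int
    rw [h4] at h1
    linarith
  have hIt : (∫ x : ℝ, (deriv (fun τ => v τ x) t) ^ 2) = ∫ x in (-R)..R, Vt (t, x) ^ 2 := by
    have hzero : ∀ x ∉ Ioc (-R) R, Vt (t, x) ^ 2 = 0 := by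
      intro x hx
      have hax : R ≤ |x| := by
        simp only [mem_Ioc, not_and_or, not_lt, not_le] at hx
        rcases hx with h | h
        · exact le_abs.mpr (Or.inr (by linarith))
        · exact le_abs.mpr (Or.inl h.le)
      rw [hVt0 t ht x hax]; ring
    simp_rw [hvt]
    rw [intervalIntegral.integral_of_le hRR]
    exact (setIntegral_eq_integral_of_forall_compl_eq_zero hzero).symm
  have hIx : (∫ x : ℝ, (deriv (fun y => v t y) x) ^ 2) = ∫ x in (-R)..R, Vx (t, x) ^ 2 := by
    have hzero : ∀ x ∉ Ioc (-R) R, Vx (t, x) ^ 2 = 0 := by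
      intro x hx
      have hax : R ≤ |x| := by
        simp only [mem_Ioc, not_and_or, not_lt, not_le] at hx
        rcases hx with h | h
        · exact le_abs.mpr (Or.inr (by linarith))
        · exact le_abs.mpr (Or.inl h.le)
      rw [hVx0 t ht x hax]; ring
    simp_rw [hvx]
    rw [intervalIntegral.integral_of_le hRR]
    exact (setIntegral_eq_integral_of_forall_compl_eq_zero hzero).symm
  have i1 : IntervalIntegrable (fun x => Vt (t, x) ^ 2) volume (-R) R :=
    ((hVtc.comp (continuous_const.prodMk continuous_id)).pow 2).intervalIntegrable _ _
  have i2 : IntervalIntegrable (fun x => Vx (t, x) ^ 2) volume (-R) R :=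
    ((hVxc.comp (continuous_const.prodMk continuous_id)).pow 2).intervalIntegrable _ _
  have i3 : IntervalIntegrable (fun x => m x * (v t x) ^ 2) volume (-R) R :=
    (hmc.mul ((hUc.comp (continuous_const.prodMk continuous_id)).pow 2)).intervalIntegrable _ _
  have hsplit : (∫ x in (-R)..R, Fp (t, x))
      = (∫ x in (-R)..R, Vt (t, x) ^ 2) + (∫ x in (-R)..R, Vx (t, x) ^ 2)
        + ∫ x in (-R)..R, m x * (v t x) ^ 2 := by
    rw [← intervalIntegral.integral_add i1 i2, ← intervalIntegral.integral_add (i1.add i2) i3]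
  have hmnn : 0 ≤ ∫ x in (-R)..R, m x * (v t x) ^ 2 :=
    intervalIntegral.integral_nonneg hRR (fun x _ => mul_nonneg (hm0 x) (sq_nonneg _))
  have hRHS : (∫ x in (-R)..R, ((deriv (fun τ => v τ x) 0) ^ 2 + (deriv (fun y => v 0 y) x) ^ 2
      + m x * (v 0 x) ^ 2)) = ∫ x in (-R)..R, Fp (0, x) := by
    apply intervalIntegral.integral_congr
    intro x _
    simp only [hFdef, hUdef]
    rw [hvt 0 x, hvx 0 x]
  rw [hIt, hIx, hRHS, ← Econs, hsplit]
  linarith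


/-- Existence/moderateness of the very weak solution net (case `α = 1`,
`d = 1`): if `0 ≤ m_ε ≤ C ε^{-N₀}` and `u_ε` are classical solutions with
potentials `m_ε` and common compactly supported `C¹ × C⁰` Cauchy data, then
there is `c > 0` with
`‖∂_t u_ε(t,·)‖² + ‖∂_x u_ε(t,·)‖² ≤ c ε^{-N₀}` for all `ε ∈ (0,1]`,
`t ∈ [0,T]`. -/
theorem very_weak_solution_existence_moderate
    (T : ℝ) (hT : 0 < T) (N₀ : ℕ) (C : ℝ) (hC : 0 < C)
    (m : ℝ → ℝ → ℝ) (u : ℝ → ℝ → ℝ → ℝ) (u₀ u₁ : ℝ → ℝ)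
    (hu₀ : ContDiff ℝ 1 u₀) (hu₀s : HasCompactSupport u₀)
    (hu₁ : Continuous u₁) (hu₁s : HasCompactSupport u₁)
    (hm : ∀ ε ∈ Set.Ioc (0 : ℝ) 1,
      Continuous (m ε) ∧ ∀ x : ℝ, 0 ≤ m ε x ∧ m ε x ≤ C * (ε ^ N₀)⁻¹)
    (hu : ∀ ε ∈ Set.Ioc (0 : ℝ) 1, IsClassicalSolution T (m ε) (fun _ _ => 0) (u ε))
    (hdata : ∀ ε ∈ Set.Ioc (0 : ℝ) 1, ∀ x : ℝ,
      u ε 0 x = u₀ x ∧ deriv (fun τ => u ε τ x) 0 = u₁ x) :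
    ∃ c > (0 : ℝ), ∀ ε ∈ Set.Ioc (0 : ℝ) 1, ∀ t ∈ Set.Icc (0 : ℝ) T,
      (∫ x : ℝ, (deriv (fun τ => u ε τ x) t) ^ 2) +
        (∫ x : ℝ, (deriv (fun y => u ε t y) x) ^ 2) ≤ c * (ε ^ N₀)⁻¹ := by
  have hd0c : Continuous (deriv u₀) := hu₀.continuous_deriv le_rfl
  have int1 : Integrable (fun x => u₁ x ^ 2) :=
    ((hu₁.pow 2).integrable_of_hasCompactSupport
      (hu₁s.comp_left (g := fun y : ℝ => y ^ 2) (by simp) :))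
  have int2 : Integrable (fun x => (deriv u₀ x) ^ 2) :=
    ((hd0c.pow 2).integrable_of_hasCompactSupport
      (hu₀s.deriv.comp_left (g := fun y : ℝ => y ^ 2) (by simp) :))
  have int3 : Integrable (fun x => u₀ x ^ 2) :=
    ((hu₀.continuous.pow 2).integrable_of_hasCompactSupport
      (hu₀s.comp_left (g := fun y : ℝ => y ^ 2) (by simp) :))
  set A : ℝ := (∫ x : ℝ, u₁ x ^ 2) + ∫ x : ℝ, (deriv u₀ x) ^ 2 with hAdef
  set B : ℝ := ∫ x : ℝ, u₀ x ^ 2 with hBdef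
  have hA : 0 ≤ A :=
    add_nonneg (integral_nonneg fun x => sq_nonneg _) (integral_nonneg fun x => sq_nonneg _)
  have hB : 0 ≤ B := integral_nonneg fun x => sq_nonneg _
  refine ⟨A + C * B + 1, by nlinarith, ?_⟩
  intro ε hε t htt
  obtain ⟨hεpos, hεle⟩ := hε
  obtain ⟨hUc2, ⟨R, hR, hsupp⟩, hpde⟩ := hu ε ⟨hεpos, hεle⟩
  obtain ⟨hmcont, hmb⟩ := hm ε ⟨hεpos, hεle⟩
  have hRR : -R ≤ R := by linarith
  set ε' : ℝ := (ε ^ N₀)⁻¹ with hε'def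
  have hp1 : 0 < ε ^ N₀ := pow_pos hεpos _
  have hp2 : ε ^ N₀ ≤ 1 := pow_le_one₀ hεpos.le hεle
  have hε'pos : 0 < ε' := inv_pos.mpr hp1
  have hε'1 : 1 ≤ ε' := one_le_inv_iff₀.mpr ⟨hp1, hp2⟩
  have hkey := wave_energy_bound T hT (m ε) hmcont (fun x => (hmb x).1) (u ε) hUc2 R hR
    hsupp (by intro s hs x; simpa using hpde s hs x) t htt
  refine hkey.trans ?_
  have hrw : (∫ x in (-R)..R, ((deriv (fun τ => u ε τ x) 0) ^ 2
        + (deriv (fun y => u ε 0 y) x) ^ 2 + m ε x * (u ε 0 x) ^ 2))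
      = ∫ x in (-R)..R, (u₁ x ^ 2 + (deriv u₀ x) ^ 2 + m ε x * u₀ x ^ 2) := by
    apply intervalIntegral.integral_congr
    intro x _
    have h0 : (fun y => u ε 0 y) = u₀ := funext fun y => (hdata ε ⟨hεpos, hεle⟩ y).1
    simp only []
    rw [(hdata ε ⟨hεpos, hεle⟩ x).2, h0, (hdata ε ⟨hεpos, hεle⟩ x).1]
  rw [hrw]
  have j1 : IntervalIntegrable (fun x => u₁ x ^ 2) volume (-R) R :=
    (hu₁.pow 2).intervalIntegrable _ _
  have j2 : IntervalIntegrable (fun x => (deriv u₀ x) ^ 2) volume (-R) R :=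
    (hd0c.pow 2).intervalIntegrable _ _
  have j3 : IntervalIntegrable (fun x => m ε x * u₀ x ^ 2) volume (-R) R :=
    (hmcont.mul (hu₀.continuous.pow 2)).intervalIntegrable _ _
  have hsplit : (∫ x in (-R)..R, (u₁ x ^ 2 + (deriv u₀ x) ^ 2 + m ε x * u₀ x ^ 2))
      = (∫ x in (-R)..R, u₁ x ^ 2) + (∫ x in (-R)..R, (deriv u₀ x) ^ 2)
        + ∫ x in (-R)..R, m ε x * u₀ x ^ 2 := by
    rw [← intervalIntegral.integral_add j1 j2, ← intervalIntegral.integral_add (j1.add j2) j3]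
  have b1 : (∫ x in (-R)..R, u₁ x ^ 2) ≤ ∫ x : ℝ, u₁ x ^ 2 := by
    rw [intervalIntegral.integral_of_le hRR]
    exact setIntegral_le_integral int1 (Filter.Eventually.of_forall fun x => sq_nonneg _)
  have b2 : (∫ x in (-R)..R, (deriv u₀ x) ^ 2) ≤ ∫ x : ℝ, (deriv u₀ x) ^ 2 := by
    rw [intervalIntegral.integral_of_le hRR]
    exact setIntegral_le_integral int2 (Filter.Eventually.of_forall fun x => sq_nonneg _)
  have b3 : (∫ x in (-R)..R, m ε x * u₀ x ^ 2) ≤ C * ε' * B := by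
    have step1 : (∫ x in (-R)..R, m ε x * u₀ x ^ 2)
        ≤ ∫ x in (-R)..R, (C * ε') * u₀ x ^ 2 := by
      apply intervalIntegral.integral_mono_on hRR j3
        (((continuous_const.mul (hu₀.continuous.pow 2))).intervalIntegrable _ _)
      intro x _
      exact mul_le_mul_of_nonneg_right (hmb x).2 (sq_nonneg _)
    have step2 : (∫ x in (-R)..R, (C * ε') * u₀ x ^ 2) = (C * ε') * ∫ x in (-R)..R, u₀ x ^ 2 := by
      rw [intervalIntegral.integral_const_mul]
    have step3 : (∫ x in (-R)..R, u₀ x ^ 2) ≤ B := by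
      rw [intervalIntegral.integral_of_le hRR]
      exact setIntegral_le_integral int3 (Filter.Eventually.of_forall fun x => sq_nonneg _)
    calc (∫ x in (-R)..R, m ε x * u₀ x ^ 2) ≤ (C * ε') * ∫ x in (-R)..R, u₀ x ^ 2 := by
          rw [← step2]; exact step1
      _ ≤ C * ε' * B := by
          apply mul_le_mul_of_nonneg_left step3 (by positivity)
  rw [hsplit]
  have : (∫ x in (-R)..R, u₁ x ^ 2) + (∫ x in (-R)..R, (deriv u₀ x) ^ 2)
      + (∫ x in (-R)..R, m ε x * u₀ x ^ 2) ≤ A + C * ε' * B := by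
    rw [hAdef]; linarith
  refine this.trans ?_
  nlinarith [mul_nonneg (mul_nonneg hC.le hε'pos.le) hB]
end
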